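/- arXiv:2509.04726 — 4 statements merged into one kernel-verified Lean document; each statement's English description precedes it below -/
import Mathlib

section
/- Let P ⊆ ℝ^d be a rational polytope and let c ∈ ℤ^d be nonzero. Then the function n ↦ aw_c(nP) is eventually quasilinear in the integer dilation parameter n: there exist a positive integer D (one may take D = denom(P)), an integer N, and rational numbers a_0, …, a_{D−1}, b_0, …, b_{D−1} such that for every integer n ≥ N, aw_c(nP) = a_r·n + b_r, where r = n mod D. -/
open Pointwise

/-- The set of integer points of `K ⊆ ℝ^d`, as integer vectors. -/
def intPts {d : ℕ} (K : Set (Fin d → ℝ)) : Set (Fin d → ℤ) :=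
  {x | (fun i => (x i : ℝ)) ∈ K}

/-- The arithmetic range of `K` in direction `c`. -/
def AR {d : ℕ} (c : Fin d → ℤ) (K : Set (Fin d → ℝ)) : Set ℤ :=
  {n | ∃ x ∈ intPts K, n = ∑ i, c i * x i}

/-- The arithmetic width of `K` in direction `c`. -/
noncomputable def aw {d : ℕ} (c : Fin d → ℤ) (K : Set (Fin d → ℝ)) : ℕ :=
  (AR c K).ncard

/-- `P ⊆ ℝ^d` is a rational polytope: the convex hull of finitely many rational points. -/
def IsRatPolytope {d : ℕ} (P : Set (Fin d → ℝ)) : Prop :=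
  ∃ V : Finset (Fin d → ℚ), V.Nonempty ∧
    P = convexHull ℝ ((fun v : Fin d → ℚ => (fun i => ((v i : ℚ) : ℝ))) '' (V : Set (Fin d → ℚ)))

namespace QLaux

def itA (A B : Set ℤ) : ℕ → Set ℤ
  | 0 => A
  | k+1 => itA A B k + B

lemma itA_succ (A B : Set ℤ) (k : ℕ) : itA A B (k+1) = itA A B k + B := rfl

lemma mem_itA_succ {A B : Set ℤ} {k : ℕ} {x : ℤ} :
    x ∈ itA A B (k+1) ↔ ∃ y ∈ itA A B k, ∃ b ∈ B, y + b = x := Set.mem_add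

lemma itA_mono_set {A B B' : Set ℤ} (h : B ⊆ B') (k : ℕ) : itA A B k ⊆ itA A B' k := by
  induction k with
  | zero => exact fun x hx => hx
  | succ k ih =>
    intro x hx
    rcases mem_itA_succ.1 hx with ⟨y, hy, b, hb, rfl⟩
    exact mem_itA_succ.2 ⟨y, ih hy, b, h hb, rfl⟩

lemma itA_mono_succ {A B : Set ℤ} (h0 : (0:ℤ) ∈ B) (k : ℕ) : itA A B k ⊆ itA A B (k+1) :=
  fun x hx => mem_itA_succ.2 ⟨x, hx, 0, h0, add_zero x⟩

lemma itA_mono {A B : Set ℤ} (h0 : (0:ℤ) ∈ B) {k l : ℕ} (hkl : k ≤ l) :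
    itA A B k ⊆ itA A B l := by
  induction l with
  | zero => rw [Nat.le_zero.1 hkl]
  | succ l ih =>
    rcases Nat.lt_or_ge k (l+1) with h | h
    · exact (ih (Nat.lt_succ_iff.1 h)).trans (itA_mono_succ h0 l)
    · rw [Nat.le_antisymm hkl h]

lemma itA_subset_Icc {A B : Set ℤ} {astar bstar : ℤ}
    (hA : ∀ a ∈ A, a ∈ Set.Icc 0 astar) (hB : ∀ b ∈ B, b ∈ Set.Icc 0 bstar) (k : ℕ) :
    itA A B k ⊆ Set.Icc 0 (astar + k * bstar) := by
  induction k with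
  | zero => exact fun x hx => by simpa using hA x hx
  | succ k ih =>
    intro x hx
    rcases mem_itA_succ.1 hx with ⟨y, hy, b, hb, rfl⟩
    have h1 := ih hy
    have h2 := hB b hb
    simp only [Set.mem_Icc] at *
    constructor
    · linarith [h1.1, h2.1]
    · have : ((k:ℤ)+1) * bstar = k * bstar + bstar := by ring
      push_cast
      linarith [h1.2, h2.2]

lemma itA_finite {A B : Set ℤ} {astar bstar : ℤ}
    (hA : ∀ a ∈ A, a ∈ Set.Icc 0 astar) (hB : ∀ b ∈ B, b ∈ Set.Icc 0 bstar) (k : ℕ) :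
    (itA A B k).Finite :=
  (Set.finite_Icc _ _).subset (itA_subset_Icc hA hB k)

lemma itA_dvd {A B : Set ℤ} {g : ℤ} (hB : ∀ b ∈ B, g ∣ b) (k : ℕ) :
    ∀ x ∈ itA A B k, ∃ a ∈ A, g ∣ x - a := by
  induction k with
  | zero => exact fun x hx => ⟨x, hx, by simp⟩
  | succ k ih =>
    intro x hx
    rcases mem_itA_succ.1 hx with ⟨y, hy, b, hb, rfl⟩
    rcases ih y hy with ⟨a, ha, hd⟩
    exact ⟨a, ha, by have : y + b - a = (y - a) + b := by ring
                     rw [this]; exact dvd_add hd (hB b hb)⟩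

lemma add_mem_itA {A B : Set ℤ} {a y : ℤ} (ha : a ∈ A) {k : ℕ}
    (hy : y ∈ itA {0} B k) : a + y ∈ itA A B k := by
  induction k generalizing y with
  | zero => simp only [itA] at hy ⊢; simp at hy; simp [hy]; exact ha
  | succ k ih =>
    rcases mem_itA_succ.1 hy with ⟨z, hz, b, hb, rfl⟩
    exact mem_itA_succ.2 ⟨a + z, ih hz, b, hb, by ring⟩

lemma itA0_add_mem {B : Set ℤ} {x y : ℤ} {j k : ℕ}
    (hx : x ∈ itA {0} B j) (hy : y ∈ itA {0} B k) : x + y ∈ itA {0} B (j + k) := by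
  induction k generalizing y with
  | zero => simp only [itA] at hy; simp at hy; simp [hy, hx]
  | succ k ih =>
    rcases mem_itA_succ.1 hy with ⟨z, hz, b, hb, rfl⟩
    have : x + (z + b) = (x + z) + b := by ring
    rw [this, Nat.add_succ]
    exact mem_itA_succ.2 ⟨x + z, ih hz, b, hb, rfl⟩

lemma single_mem_itA {B : Set ℤ} {b : ℤ} (hb : b ∈ B) : b ∈ itA {0} B 1 :=
  mem_itA_succ.2 ⟨0, rfl, b, hb, zero_add b⟩

lemma nsmul_mem_itA {B : Set ℤ} {x : ℤ} {j : ℕ} (hx : x ∈ itA {0} B j) (m : ℕ) :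
    (m : ℤ) * x ∈ itA {0} B (m * j) := by
  induction m with
  | zero => simp [itA]
  | succ m ih =>
    have : ((m:ℤ)+1) * x = (m:ℤ) * x + x := by ring
    push_cast
    rw [this, Nat.succ_mul]
    exact itA0_add_mem ih hx

-- stabilization of monotone sequences of subsets of a finite set
lemma stabilize (s : ℕ → Set ℤ) (S0 : Set ℤ) (hS0 : S0.Finite) (hsub : ∀ k, s k ⊆ S0)
    (hmono : ∀ k, s k ⊆ s (k+1)) : ∃ K, ∀ k, K ≤ k → s k = s K := by
  have hfin : ∀ k, (s k).Finite := fun k => hS0.subset (hsub k)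
  have hchain : ∀ {k l : ℕ}, k ≤ l → s k ⊆ s l := by
    intro k l hkl
    induction l with
    | zero => rw [Nat.le_zero.1 hkl]
    | succ l ih =>
      rcases Nat.lt_or_ge k (l+1) with h | h
      · exact (ih (Nat.lt_succ_iff.1 h)).trans (hmono l)
      · rw [Nat.le_antisymm hkl h]
  set u : ℕ → ℕ := fun k => (s k).ncard with hu
  have hub : ∀ k, u k ≤ S0.ncard := fun k => Set.ncard_le_ncard (hsub k) hS0
  have hrange : (Set.range u).Finite := (Set.finite_Iic S0.ncard).subset (by
    rintro _ ⟨k, rfl⟩; exact hub k)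
  have hne : (Set.range u).Nonempty := ⟨u 0, ⟨0, rfl⟩⟩
  obtain ⟨K, hK⟩ : ∃ K, u K = hrange.toFinset.max' (by simpa using hne) := by
    have := hrange.toFinset.max'_mem (by simpa using hne)
    rw [Set.Finite.mem_toFinset] at this
    exact this.imp fun K h => h
  refine ⟨K, fun k hk => ?_⟩
  have hsubk : s K ⊆ s k := hchain hk
  have hcard : u k ≤ u K := by
    rw [hK]
    exact hrange.toFinset.le_max' _ (by simp [Set.Finite.mem_toFinset])
  exact (Set.eq_of_subset_of_ncard_le hsubk hcard (hfin k)).symm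



lemma image_add_add (t s : ℤ) (X Y : Set ℤ) :
    (fun x => (t + s) + x) '' (X + Y) = ((fun x => t + x) '' X) + ((fun x => s + x) '' Y) := by
  ext z
  constructor
  · rintro ⟨w, hw, rfl⟩
    rcases Set.mem_add.1 hw with ⟨a, ha, b, hb, rfl⟩
    exact Set.mem_add.2 ⟨t + a, ⟨a, ha, rfl⟩, s + b, ⟨b, hb, rfl⟩, by ring⟩
  · intro hz
    rcases Set.mem_add.1 hz with ⟨a', ⟨a, ha, rfl⟩, b', ⟨b, hb, rfl⟩, rfl⟩
    exact ⟨a + b, Set.mem_add.2 ⟨a, ha, b, hb, rfl⟩, by ring⟩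

lemma image_sub_add (c1 c2 : ℤ) (X Y : Set ℤ) :
    (fun x => (c1 + c2) - x) '' (X + Y) = ((fun x => c1 - x) '' X) + ((fun x => c2 - x) '' Y) := by
  ext z
  constructor
  · rintro ⟨w, hw, rfl⟩
    rcases Set.mem_add.1 hw with ⟨a, ha, b, hb, rfl⟩
    exact Set.mem_add.2 ⟨c1 - a, ⟨a, ha, rfl⟩, c2 - b, ⟨b, hb, rfl⟩, by ring⟩
  · intro hz
    rcases Set.mem_add.1 hz with ⟨a', ⟨a, ha, rfl⟩, b', ⟨b, hb, rfl⟩, rfl⟩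
    exact ⟨a + b, Set.mem_add.2 ⟨a, ha, b, hb, rfl⟩, by ring⟩

lemma itA_translate (A B : Set ℤ) (t s : ℤ) (k : ℕ) :
    itA ((fun x => t + x) '' A) ((fun x => s + x) '' B) k
      = (fun x => (t + k * s) + x) '' itA A B k := by
  induction k with
  | zero => simp [itA]
  | succ k ih =>
    rw [itA_succ, ih, itA_succ]
    have h : (fun x => (t + (k+1 : ℕ) * s) + x) = (fun x => ((t + k * s) + s) + x) := by
      funext x; push_cast; ring
    rw [h, image_add_add (t + k * s) s]

lemma itA_reflect (A B : Set ℤ) (a b : ℤ) (k : ℕ) :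
    (fun x => (a + k * b) - x) '' itA A B k
      = itA ((fun x => a - x) '' A) ((fun x => b - x) '' B) k := by
  induction k with
  | zero => simp [itA]
  | succ k ih =>
    rw [itA_succ, itA_succ, ← ih]
    have h : (fun x => (a + (k+1 : ℕ) * b) - x) = (fun x => ((a + k * b) + b) - x) := by
      funext x; push_cast; ring
    rw [h, image_sub_add (a + k * b) b]

-- Bezout for Finset.gcd over ℤ
lemma finset_gcd_bezout (B : Finset ℤ) : ∃ f : ℤ → ℤ, B.gcd id = ∑ b ∈ B, f b * b := by
  classical
  induction B using Finset.induction_on with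
  | empty => exact ⟨fun _ => 0, by simp⟩
  | @insert a s ha ih =>
    rcases ih with ⟨f, hf⟩
    set G := s.gcd id with hG
    refine ⟨fun b => if b = a then Int.gcdA a G else Int.gcdB a G * f b, ?_⟩
    rw [Finset.gcd_insert, Finset.sum_insert ha]
    have h1 : GCDMonoid.gcd (id a) G = a * Int.gcdA a G + G * Int.gcdB a G := by
      rw [id, ← Int.coe_gcd]; exact Int.gcd_eq_gcd_ab a G
    rw [h1]
    beta_reduce
    rw [if_pos rfl]
    have h2 : ∑ b ∈ s, (if b = a then Int.gcdA a G else Int.gcdB a G * f b) * b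
        = Int.gcdB a G * ∑ b ∈ s, f b * b := by
      rw [Finset.mul_sum]
      refine Finset.sum_congr rfl fun b hb => ?_
      rw [if_neg (by rintro rfl; exact ha hb)]; ring
    rw [h2, ← hf]; ring

lemma finset_gcd_nonneg (B : Finset ℤ) : 0 ≤ B.gcd id := by
  classical
  induction B using Finset.induction_on with
  | empty => simp
  | @insert a s ha ih =>
    rw [Finset.gcd_insert, ← Int.coe_gcd]
    exact Int.ofNat_nonneg _

-- coefficient representations are members
lemma sum_coef_mem (B : Finset ℤ) (c : ℤ → ℕ) :
    (∑ b ∈ B, (c b : ℤ) * b) ∈ itA {0} ↑B (∑ b ∈ B, c b) := by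
  classical
  induction B using Finset.induction_on with
  | empty => simp [itA]
  | @insert a s ha ih =>
    rw [Finset.sum_insert ha, Finset.sum_insert ha]
    have h1 : (c a : ℤ) * a ∈ itA {0} (↑(insert a s) : Set ℤ) (c a * 1) :=
      nsmul_mem_itA (single_mem_itA (by simp)) (c a)
    have h2 : (∑ b ∈ s, (c b : ℤ) * b) ∈ itA {0} (↑(insert a s) : Set ℤ) (∑ b ∈ s, c b) :=
      itA_mono_set (by intro x hx; simp at hx ⊢; tauto) _ ih
    have := itA0_add_mem h1 h2
    rwa [mul_one] at this

-- existence of p, q in the monoid with p - q = gcd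
lemma exists_pq (B : Finset ℤ) :
    ∃ (fp fq : ℕ) (p q : ℤ), p ∈ itA {0} ↑B fp ∧ q ∈ itA {0} ↑B fq ∧ p - q = B.gcd id := by
  classical
  rcases finset_gcd_bezout B with ⟨f, hf⟩
  refine ⟨∑ b ∈ B, (f b).toNat, ∑ b ∈ B, (-(f b)).toNat,
    ∑ b ∈ B, ((f b).toNat : ℤ) * b, ∑ b ∈ B, ((-(f b)).toNat : ℤ) * b,
    sum_coef_mem B _, sum_coef_mem B _, ?_⟩
  rw [hf, ← Finset.sum_sub_distrib]
  refine Finset.sum_congr rfl fun b _ => ?_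
  have h : ((f b).toNat : ℤ) - ((-(f b)).toNat : ℤ) = f b := by
    rcases le_or_gt 0 (f b) with h | h
    · rw [Int.toNat_of_nonneg h, Int.toNat_of_nonpos (by linarith)]; ring
    · rw [Int.toNat_of_nonpos (by linarith), Int.toNat_of_nonneg (by linarith)]; push_cast; ring
  rw [← sub_mul, h]
-- conductor lemma
lemma cond_mem {B : Finset ℤ} (h0 : (0:ℤ) ∈ B) {g p q q' : ℤ} {fp fq : ℕ}
    (hp : p ∈ itA {0} ↑B fp) (hq : q ∈ itA {0} ↑B fq) (hpq : p - q = g)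
    (hqq : q = g * q') (hq' : 0 ≤ q') (t : ℤ) (ht : q' ^ 2 ≤ t) (ht0 : 0 ≤ t) :
    g * t ∈ itA {0} ↑B ((q'.toNat + t.toNat) * (fp + fq)) := by
  have hpad : ∀ {x : ℤ} {j k : ℕ}, j ≤ k → x ∈ itA {0} ↑B j → x ∈ itA {0} ↑B k :=
    fun {x j k} hjk hx => itA_mono (by exact_mod_cast h0) hjk hx
  rcases eq_or_lt_of_le hq' with hq0 | hq0
  · -- q' = 0, so q = 0 and p = g
    have hqz : q = 0 := by rw [hqq, ← hq0]; ring
    have hpg : p = g := by rw [← hpq, hqz]; ring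
    have := nsmul_mem_itA hp t.toNat
    rw [Int.toNat_of_nonneg ht0, hpg] at this
    rw [mul_comm g t]
    exact hpad (by nlinarith [Nat.zero_le (q'.toNat + t.toNat), Nat.le_add_left t.toNat q'.toNat,
      Nat.mul_le_mul (Nat.le_add_left t.toNat q'.toNat) (Nat.le_add_right fp fq)]) this
  · -- q' > 0
    set α := t % q' with hα
    set γ := t / q' with hγ
    have hα0 : 0 ≤ α := Int.emod_nonneg t (by omega)
    have hαlt : α < q' := Int.emod_lt_of_pos t hq0
    have hγ0 : 0 ≤ γ := Int.ediv_nonneg ht0 (le_of_lt hq0)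
    have hγq : q' ≤ γ := by
      rw [hγ, Int.le_ediv_iff_mul_le hq0]
      nlinarith
    have hγα : α ≤ γ := le_trans (le_of_lt hαlt) hγq
    have hid : g * t = α * p + (γ - α) * q := by
      have h1 : α + q' * γ = t := by rw [hα, hγ]; exact Int.emod_add_mul_ediv t q'
      have h2 : p = g + q := by linarith [hpq]
      rw [h2, hqq]; linear_combination (-g) * h1
    have m1 : (α.toNat : ℤ) * p ∈ itA {0} ↑B (α.toNat * fp) := nsmul_mem_itA hp α.toNat
    have m2 : ((γ - α).toNat : ℤ) * q ∈ itA {0} ↑B ((γ - α).toNat * fq) := nsmul_mem_itA hq _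
    rw [Int.toNat_of_nonneg hα0] at m1
    rw [Int.toNat_of_nonneg (by linarith)] at m2
    have := itA0_add_mem m1 m2
    rw [← hid] at this
    refine hpad ?_ this
    have e1 : α.toNat ≤ q'.toNat := by omega
    have e2 : (γ - α).toNat ≤ t.toNat := by
      have : γ ≤ t := Int.ediv_le_self q' ht0
      omega
    calc α.toNat * fp + (γ - α).toNat * fq ≤ q'.toNat * (fp + fq) + t.toNat * (fp + fq) := by
          exact Nat.add_le_add (Nat.mul_le_mul e1 (Nat.le_add_right fp fq))
            (Nat.mul_le_mul e2 (Nat.le_add_left fq fp))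
      _ = (q'.toNat + t.toNat) * (fp + fq) := by ring
lemma NS1 (B : Finset ℤ) (h0 : (0:ℤ) ∈ B) (hbne : B.Nonempty)
    (hBnn : ∀ b ∈ B, 0 ≤ b) (hbpos : 0 < B.max' hbne) :
    ∃ F K0 : ℕ, ∀ (x : ℤ) (k : ℕ), B.gcd id ∣ x → (F:ℤ) ≤ x →
      x ≤ (k:ℤ) * B.max' hbne - (K0:ℤ) * B.max' hbne → x ∈ itA {0} ↑B k := by
  classical
  set g := B.gcd id with hgdef
  set bs := B.max' hbne with hbs
  have hbsmem : bs ∈ B := B.max'_mem hbne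
  have hgnn : 0 ≤ g := finset_gcd_nonneg B
  have gdvd : ∀ b ∈ B, g ∣ b := fun b hb => Finset.gcd_dvd hb
  have hg0 : 0 < g := by
    rcases eq_or_lt_of_le hgnn with h | h
    · exfalso
      have : bs = 0 := by
        have := Finset.gcd_eq_zero_iff.1 (hgdef ▸ h.symm) bs hbsmem
        simpa using this
      omega
    · exact h
  obtain ⟨fp, fq, p, q, hp, hq, hpq⟩ := exists_pq B
  have hbox : ∀ b ∈ (↑B : Set ℤ), b ∈ Set.Icc 0 bs :=
    fun b hb => ⟨hBnn b hb, B.le_max' b hb⟩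
  have hsingle : ∀ a ∈ ({0} : Set ℤ), a ∈ Set.Icc (0:ℤ) 0 := by intro a ha; simp at ha; simp [ha]
  have hqnn : 0 ≤ q := by
    have := itA_subset_Icc hsingle hbox fq hq
    exact this.1
  have hgq : g ∣ q := by
    rcases itA_dvd (A := {0}) gdvd fq q hq with ⟨a, ha, hd⟩
    simp at ha
    rwa [ha, sub_zero] at hd
  set q' := q / g with hq'
  have hqq : q = g * q' := (Int.mul_ediv_cancel' hgq).symm
  have hq'0 : 0 ≤ q' := Int.ediv_nonneg hqnn hgnn
  refine ⟨(g * q' ^ 2).toNat, (q'.toNat + (q' ^ 2 + bs).toNat) * (fp + fq), ?_⟩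
  intro x k hdvd hF hup
  set K0 := (q'.toNat + (q' ^ 2 + bs).toNat) * (fp + fq) with hK0
  have hFcast : ((g * q' ^ 2).toNat : ℤ) = g * q' ^ 2 := Int.toNat_of_nonneg (by positivity)
  rw [hFcast] at hF
  have hxF : 0 ≤ x - g * q' ^ 2 := by linarith
  set r := (x - g * q' ^ 2) % bs with hr
  have hr0 : 0 ≤ r := Int.emod_nonneg _ (by omega)
  have hrlt : r < bs := Int.emod_lt_of_pos _ hbpos
  set s := g * q' ^ 2 + r with hs
  have hgs : g ∣ s := by
    have h1 : g ∣ r := by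
      rw [hr, Int.emod_def]
      exact dvd_sub (dvd_sub hdvd (Dvd.dvd.mul_right (dvd_refl g) _))
        (Dvd.dvd.mul_right (gdvd bs hbsmem) _)
    exact dvd_add (Dvd.dvd.mul_right (dvd_refl g) _) h1
  set ts := s / g with hts
  have hsts : s = g * ts := (Int.mul_ediv_cancel' hgs).symm
  have hts1 : q' ^ 2 ≤ ts := by
    rw [hts, Int.le_ediv_iff_mul_le hg0]
    have : 0 ≤ r := hr0
    nlinarith
  have hts0 : 0 ≤ ts := le_trans (by positivity) hts1
  have htsub : ts ≤ q' ^ 2 + bs := by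
    have h1 : g * ts < g * q' ^ 2 + g * bs := by
      have : g * bs ≥ bs := by nlinarith
      nlinarith [hsts, hrlt]
    have : g * ts < g * (q' ^ 2 + bs) := by linarith [h1]
    exact le_of_lt (lt_of_mul_lt_mul_left this hgnn)
  have hsmem : s ∈ itA {0} ↑B ((q'.toNat + ts.toNat) * (fp + fq)) := by
    rw [hsts]
    exact cond_mem h0 hp hq hpq hqq hq'0 ts hts1 hts0
  have hσ : (q'.toNat + ts.toNat) * (fp + fq) ≤ K0 := by
    have : ts.toNat ≤ (q' ^ 2 + bs).toNat := by omega
    exact Nat.mul_le_mul (Nat.add_le_add_left this _) (le_refl _)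
  set q2 := (x - g * q' ^ 2) / bs with hq2
  have hq20 : 0 ≤ q2 := Int.ediv_nonneg hxF (le_of_lt hbpos)
  have hxdecomp : x = s + bs * q2 := by
    rw [hs, hr, hq2, Int.emod_def]; ring
  have hm2 : (q2.toNat : ℤ) * bs ∈ itA {0} ↑B (q2.toNat * 1) :=
    nsmul_mem_itA (single_mem_itA (by exact_mod_cast hbsmem)) q2.toNat
  rw [Int.toNat_of_nonneg hq20, mul_one] at hm2
  have hmem : x ∈ itA {0} ↑B ((q'.toNat + ts.toNat) * (fp + fq) + q2.toNat) := by
    rw [hxdecomp, mul_comm bs q2]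
    exact itA0_add_mem hsmem hm2
  have hq2k : q2 ≤ (k:ℤ) - K0 := by
    have h1 : q2 ≤ x / bs := Int.ediv_le_ediv hbpos (by linarith)
    have h2 : x / bs ≤ ((k:ℤ) - K0) := by
      have := Int.ediv_le_ediv hbpos hup
      rwa [show (k:ℤ) * bs - (K0:ℤ) * bs = ((k:ℤ) - K0) * bs by ring,
        Int.mul_ediv_cancel _ (by omega)] at this
    linarith
  have hfin : (q'.toNat + ts.toNat) * (fp + fq) + q2.toNat ≤ k := by omega
  exact itA_mono (by exact_mod_cast h0) hfin hmem
lemma count_fiber (g ρ c : ℤ) (hg : 0 < g) (hρ0 : 0 ≤ ρ) (hρg : ρ < g) (N : ℕ) :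
    ((Finset.Ioc c (c + g * N)).filter (fun x => x % g = ρ)).card = N := by
  classical
  set y0 := (c - ρ) / g with hy0
  have hy0le : y0 * g ≤ c - ρ := by
    rw [hy0]
    exact Int.ediv_mul_le (c - ρ) (by omega)
  have hy0lt : c - ρ < (y0 + 1) * g := by
    rw [hy0]
    exact Int.lt_ediv_add_one_mul_self (c - ρ) hg
  have key : ∀ y : ℤ, (ρ + g * y ∈ Finset.Ioc c (c + g * N) ↔ y ∈ Finset.Ioc y0 (y0 + N)) := by
    intro y
    simp only [Finset.mem_Ioc]
    constructor
    · rintro ⟨h1, h2⟩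
      constructor
      · nlinarith
      · nlinarith
    · rintro ⟨h1, h2⟩
      constructor
      · nlinarith
      · nlinarith
  have hcard : (Finset.Ioc y0 (y0 + N)).card = N := by
    rw [Int.card_Ioc]; omega
  have hbij : ((Finset.Ioc c (c + g * N)).filter (fun x => x % g = ρ)).card
      = (Finset.Ioc y0 (y0 + N)).card := by
    apply Finset.card_bij' (fun x _ => (x - ρ) / g) (fun y _ => ρ + g * y)
    · intro x hx
      simp only [Finset.mem_filter] at hx
      have hdvd : g ∣ x - ρ := by
        have : x % g = ρ % g := by rw [hx.2, Int.emod_eq_of_lt hρ0 hρg]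
        exact Int.dvd_of_emod_eq_zero (by rw [Int.sub_emod, this, sub_self, Int.zero_emod])
      have hxeq : x = ρ + g * ((x - ρ) / g) := by
        rw [Int.mul_ediv_cancel' hdvd]; ring
      rw [← key]; rw [← hxeq]; exact hx.1
    · intro y hy
      simp only [Finset.mem_filter]
      refine ⟨(key y).2 hy, ?_⟩
      rw [Int.add_mul_emod_self_left, Int.emod_eq_of_lt hρ0 hρg]
    · intro x hx
      simp only [Finset.mem_filter] at hx
      have hdvd : g ∣ x - ρ := by
        have : x % g = ρ % g := by rw [hx.2, Int.emod_eq_of_lt hρ0 hρg]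
        exact Int.dvd_of_emod_eq_zero (by rw [Int.sub_emod, this, sub_self, Int.zero_emod])
      rw [Int.mul_ediv_cancel' hdvd]; ring
    · intro y hy
      rw [add_sub_cancel_left, Int.mul_ediv_cancel_left _ (by omega)]
  rw [hbij, hcard]

lemma chunk_card (g bs : ℤ) (hg : 0 < g) (hdvd : g ∣ bs) (R : Finset ℤ)
    (hR : ∀ ρ ∈ R, 0 ≤ ρ ∧ ρ < g) (c : ℤ) (hbs : 0 ≤ bs) :
    ((Finset.Ioc c (c + bs)).filter (fun x => x % g ∈ R)).card = R.card * (bs / g).toNat := by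
  classical
  have hbseq : bs = g * ((bs / g).toNat : ℤ) := by
    rw [Int.toNat_of_nonneg (Int.ediv_nonneg hbs (le_of_lt hg)), Int.mul_ediv_cancel' hdvd]
  have hfib : ((Finset.Ioc c (c + bs)).filter (fun x => x % g ∈ R)).card
      = ∑ ρ ∈ R, (((Finset.Ioc c (c + bs)).filter (fun x => x % g ∈ R)).filter
          (fun x => x % g = ρ)).card := by
    apply Finset.card_eq_sum_card_fiberwise
    intro x hx
    exact (Finset.mem_filter.1 hx).2
  rw [hfib]
  have : ∀ ρ ∈ R, (((Finset.Ioc c (c + bs)).filter (fun x => x % g ∈ R)).filter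
      (fun x => x % g = ρ)).card = (bs / g).toNat := by
    intro ρ hρ
    have heq : ((Finset.Ioc c (c + bs)).filter (fun x => x % g ∈ R)).filter (fun x => x % g = ρ)
        = (Finset.Ioc c (c + bs)).filter (fun x => x % g = ρ) := by
      ext x
      simp only [Finset.mem_filter]
      constructor
      · tauto
      · rintro ⟨h1, h2⟩; exact ⟨⟨h1, h2 ▸ hρ⟩, h2⟩
    have hc' : c + bs = c + g * ((bs / g).toNat : ℤ) := by rw [← hbseq]
    rw [heq, hc']
    exact count_fiber g ρ c hg (hR ρ hρ).1 (hR ρ hρ).2 _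
  rw [Finset.sum_congr rfl this, Finset.sum_const, smul_eq_mul]
lemma main_increment (A B : Finset ℤ) (h0A : (0:ℤ) ∈ A) (h0B : (0:ℤ) ∈ B)
    (hAnn : ∀ a ∈ A, 0 ≤ a) (hBnn : ∀ b ∈ B, 0 ≤ b) :
    ∃ (K δ : ℕ), ∀ k, K ≤ k → (itA ↑A ↑B (k+1)).ncard = (itA ↑A ↑B k).ncard + δ := by
  classical
  have hAne : A.Nonempty := ⟨0, h0A⟩
  have hBne : B.Nonempty := ⟨0, h0B⟩
  set as := A.max' hAne with has
  set bs := B.max' hBne with hbs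
  have hasnn : 0 ≤ as := hAnn _ (A.max'_mem hAne)
  have hbsnn : 0 ≤ bs := hBnn _ (B.max'_mem hBne)
  have hboxA : ∀ a ∈ (↑A : Set ℤ), a ∈ Set.Icc 0 as :=
    fun a ha => ⟨hAnn a ha, A.le_max' a ha⟩
  have hboxB : ∀ b ∈ (↑B : Set ℤ), b ∈ Set.Icc 0 bs :=
    fun b hb => ⟨hBnn b hb, B.le_max' b hb⟩
  have hfin : ∀ k, (itA ↑A ↑B k).Finite := itA_finite hboxA hboxB
  have h0B' : (0:ℤ) ∈ (↑B : Set ℤ) := by exact_mod_cast h0B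
  rcases eq_or_lt_of_le hbsnn with hbs0 | hbspos
  · -- B = {0}
    refine ⟨0, 0, fun k _ => ?_⟩
    have hBeq : (↑B : Set ℤ) = ({0} : Set ℤ) := by
      ext b
      simp only [Finset.coe_insert, Set.mem_singleton_iff, Finset.mem_coe]
      constructor
      · intro hb
        have := hBnn b hb
        have := B.le_max' b hb
        omega
      · rintro rfl; exact h0B
    rw [itA_succ, hBeq, Set.singleton_zero, add_zero, Nat.add_zero]
  -- main case
  set g := B.gcd id with hgdef
  have hgnn : 0 ≤ g := finset_gcd_nonneg B
  have hg0 : 0 < g := by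
    rcases eq_or_lt_of_le hgnn with h | h
    · exfalso
      have := Finset.gcd_eq_zero_iff.1 (hgdef ▸ h.symm) bs (B.max'_mem hBne)
      simp at this
      omega
    · exact h
  have hgb : g ∣ bs := Finset.gcd_dvd (B.max'_mem hBne)
  obtain ⟨F, K0, hNS⟩ := NS1 B h0B hBne hBnn hbspos
  set T1 : ℤ := F + as with hT1
  set T2 : ℤ := K0 * bs + as with hT2
  set E : ℤ := as - T2 with hE
  set R := A.image (· % g) with hR
  have hRprop : ∀ ρ ∈ R, 0 ≤ ρ ∧ ρ < g := by
    intro ρ hρ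
    rcases Finset.mem_image.1 hρ with ⟨a, _, rfl⟩
    exact ⟨Int.emod_nonneg a (by omega), Int.emod_lt_of_pos a hg0⟩
  set Mid : ℕ → Finset ℤ := fun k => (Finset.Icc T1 (E + k * bs)).filter (fun x => x % g ∈ R)
    with hMid
  -- (K1) mid description
  have hmid : ∀ k, itA ↑A ↑B k ∩ Set.Icc T1 (E + k * bs) = ↑(Mid k) := by
    intro k
    ext x
    simp only [Set.mem_inter_iff, hMid, Finset.coe_filter, Set.mem_setOf_eq, Finset.mem_Icc,
      Set.mem_Icc]
    constructor
    · rintro ⟨hx, hI⟩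
      refine ⟨hI, ?_⟩
      rcases itA_dvd (fun b hb => Finset.gcd_dvd (by exact_mod_cast hb)) k x hx with ⟨a, ha, hd⟩
      have : x % g = a % g := by
        rw [Int.emod_eq_emod_iff_emod_sub_eq_zero]
        exact Int.emod_eq_zero_of_dvd hd
      rw [hR]
      exact Finset.mem_image.2 ⟨a, by exact_mod_cast ha, this.symm⟩
    · rintro ⟨hI, hmemR⟩
      rcases Finset.mem_image.1 (hR ▸ hmemR) with ⟨a, haA, hae⟩
      have hd : g ∣ x - a := by
        have h' : (x - a) % g = 0 := by
          rw [Int.sub_emod, ← hae, sub_self, Int.zero_emod]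
        exact Int.dvd_of_emod_eq_zero h'
      have h1 : (F : ℤ) ≤ x - a := by
        have := A.le_max' a haA
        have := hI.1
        rw [hT1] at this
        omega
      have h2 : x - a ≤ (k:ℤ) * bs - (K0:ℤ) * bs := by
        have := hAnn a haA
        have := hI.2
        rw [hE, hT2] at this
        omega
      have hns := hNS (x - a) k hd h1 h2
      have haA' : a ∈ (↑A : Set ℤ) := by exact_mod_cast haA
      have hxmem := add_mem_itA haA' hns
      exact ⟨by simpa using hxmem, hI⟩
  -- (K2) mid increment
  set δ : ℕ := R.card * (bs / g).toNat with hδ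
  have hmidinc : ∀ k : ℕ, T1 ≤ E + k * bs → (Mid (k+1)).card = (Mid k).card + δ := by
    intro k hk
    have hsplit : Finset.Icc T1 (E + ((k:ℤ)+1) * bs)
        = Finset.Icc T1 (E + k * bs) ∪ Finset.Ioc (E + k * bs) ((E + k * bs) + bs) := by
      ext x
      simp only [Finset.mem_union, Finset.mem_Icc, Finset.mem_Ioc]
      push_cast
      constructor
      · intro h
        rcases le_or_gt x (E + k * bs) with h' | h'
        · exact Or.inl ⟨h.1, h'⟩
        · refine Or.inr ⟨h', by nlinarith [h.2]⟩
      · intro h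
        rcases h with ⟨h1, h2⟩ | ⟨h1, h2⟩
        · exact ⟨h1, by nlinarith⟩
        · exact ⟨by linarith, by nlinarith⟩
    have hdisj : Disjoint ((Finset.Icc T1 (E + k * bs)).filter (fun x => x % g ∈ R))
        ((Finset.Ioc (E + k * bs) ((E + k * bs) + bs)).filter (fun x => x % g ∈ R)) := by
      rw [Finset.disjoint_left]
      intro x hx1 hx2
      simp only [Finset.mem_filter, Finset.mem_Icc, Finset.mem_Ioc] at hx1 hx2
      omega
    rw [hMid]
    simp only []
    push_cast
    rw [hsplit, Finset.filter_union, Finset.card_union_of_disjoint hdisj]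
    congr 1
    rw [hδ]
    exact chunk_card g bs hg0 hgb R hRprop (E + k * bs) hbsnn
  -- (K3) low stabilization
  obtain ⟨K1, hlow⟩ := stabilize (fun k => itA ↑A ↑B k ∩ Set.Iio T1) (Set.Icc 0 T1)
    (Set.finite_Icc _ _)
    (by
      intro k x hx
      have := itA_subset_Icc hboxA hboxB k hx.1
      exact ⟨this.1, le_of_lt hx.2⟩)
    (fun k x hx => ⟨itA_mono_succ h0B' k hx.1, hx.2⟩)
  -- (K4) reflection and high stabilization
  set A2 := A.image (fun a => as - a) with hA2
  set B2 := B.image (fun b => bs - b) with hB2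
  have hrefl : ∀ k : ℕ, (fun x => (as + k * bs) - x) '' itA ↑A ↑B k = itA ↑A2 ↑B2 k := by
    intro k
    rw [itA_reflect, hA2, hB2, Finset.coe_image, Finset.coe_image]
  have hboxA2 : ∀ a ∈ (↑A2 : Set ℤ), a ∈ Set.Icc 0 as := by
    intro a ha
    rcases Finset.mem_image.1 (by exact_mod_cast ha) with ⟨a', ha', rfl⟩
    exact ⟨by linarith [A.le_max' a' ha'], by linarith [hAnn a' ha']⟩
  have hboxB2 : ∀ b ∈ (↑B2 : Set ℤ), b ∈ Set.Icc 0 bs := by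
    intro b hb
    rcases Finset.mem_image.1 (by exact_mod_cast hb) with ⟨b', hb', rfl⟩
    exact ⟨by linarith [B.le_max' b' hb'], by linarith [hBnn b' hb']⟩
  have h0B2 : (0:ℤ) ∈ (↑B2 : Set ℤ) := by
    rw [hB2]
    push_cast
    exact ⟨bs, by exact_mod_cast B.max'_mem hBne, sub_self bs⟩
  obtain ⟨K3, hhigh⟩ := stabilize (fun k => itA ↑A2 ↑B2 k ∩ Set.Iio T2) (Set.Icc 0 T2)
    (Set.finite_Icc _ _)
    (by
      intro k x hx
      have := itA_subset_Icc hboxA2 hboxB2 k hx.1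
      exact ⟨this.1, le_of_lt hx.2⟩)
    (fun k x hx => ⟨itA_mono_succ h0B2 k hx.1, hx.2⟩)
  have hhighcard : ∀ k : ℕ, (itA ↑A ↑B k ∩ Set.Ioi (E + k * bs)).ncard
      = (itA ↑A2 ↑B2 k ∩ Set.Iio T2).ncard := by
    intro k
    have hinj : Function.Injective (fun x : ℤ => (as + k * bs) - x) :=
      fun x y h => by simpa using h
    rw [← Set.ncard_image_of_injective _ hinj, Set.image_inter hinj, hrefl,
      Set.image_const_sub_Ioi]
    congr 2
    rw [hE]; ring
  -- (K5) decomposition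
  have hdecomp : ∀ k : ℕ, T1 ≤ E + k * bs → (itA ↑A ↑B k).ncard
      = (itA ↑A ↑B k ∩ Set.Iio T1).ncard + (Mid k).card
        + (itA ↑A ↑B k ∩ Set.Ioi (E + k * bs)).ncard := by
    intro k hadjk
    have hcover : itA ↑A ↑B k = (itA ↑A ↑B k ∩ Set.Iio T1)
        ∪ (itA ↑A ↑B k ∩ Set.Icc T1 (E + k * bs))
        ∪ (itA ↑A ↑B k ∩ Set.Ioi (E + k * bs)) := by
      ext x
      simp only [Set.mem_union, Set.mem_inter_iff, Set.mem_Iio, Set.mem_Icc, Set.mem_Ioi]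
      constructor
      · intro hx
        rcases lt_trichotomy x T1 with h | h | h
        · exact Or.inl (Or.inl ⟨hx, h⟩)
        · rcases le_or_gt x (E + k * bs) with h' | h'
          · exact Or.inl (Or.inr ⟨hx, le_of_eq h.symm, h'⟩)
          · exact Or.inr ⟨hx, h'⟩
        · rcases le_or_gt x (E + k * bs) with h' | h'
          · exact Or.inl (Or.inr ⟨hx, le_of_lt h, h'⟩)
          · exact Or.inr ⟨hx, h'⟩
      · rintro ((⟨h, _⟩ | ⟨h, _⟩) | ⟨h, _⟩) <;> exact h
    have hd1 : Disjoint ((itA ↑A ↑B k ∩ Set.Iio T1) ∪ (itA ↑A ↑B k ∩ Set.Icc T1 (E + k * bs)))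
        (itA ↑A ↑B k ∩ Set.Ioi (E + k * bs)) := by
      rw [Set.disjoint_left]
      rintro x (⟨_, hx⟩ | ⟨_, hx⟩) ⟨_, hx'⟩
      · simp only [Set.mem_Iio] at hx
        simp only [Set.mem_Ioi] at hx'
        omega
      · simp only [Set.mem_Icc] at hx
        simp only [Set.mem_Ioi] at hx'
        omega
    have hd2 : Disjoint (itA ↑A ↑B k ∩ Set.Iio T1) (itA ↑A ↑B k ∩ Set.Icc T1 (E + k * bs)) := by
      rw [Set.disjoint_left]
      rintro x ⟨_, hx⟩ ⟨_, hx'⟩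
      simp only [Set.mem_Iio] at hx
      simp only [Set.mem_Icc] at hx'
      omega
    have hf1 : (itA ↑A ↑B k ∩ Set.Iio T1).Finite := (hfin k).subset Set.inter_subset_left
    have hf2 : (itA ↑A ↑B k ∩ Set.Icc T1 (E + k * bs)).Finite :=
      (hfin k).subset Set.inter_subset_left
    have hf3 : (itA ↑A ↑B k ∩ Set.Ioi (E + k * bs)).Finite :=
      (hfin k).subset Set.inter_subset_left
    calc (itA ↑A ↑B k).ncard
        = ((itA ↑A ↑B k ∩ Set.Iio T1) ∪ (itA ↑A ↑B k ∩ Set.Icc T1 (E + k * bs))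
            ∪ (itA ↑A ↑B k ∩ Set.Ioi (E + k * bs))).ncard := by rw [← hcover]
      _ = ((itA ↑A ↑B k ∩ Set.Iio T1) ∪ (itA ↑A ↑B k ∩ Set.Icc T1 (E + k * bs))).ncard
            + (itA ↑A ↑B k ∩ Set.Ioi (E + k * bs)).ncard :=
          Set.ncard_union_eq hd1 (hf1.union hf2) hf3
      _ = (itA ↑A ↑B k ∩ Set.Iio T1).ncard + (Mid k).card
            + (itA ↑A ↑B k ∩ Set.Ioi (E + k * bs)).ncard := by
          rw [Set.ncard_union_eq hd2 hf1 hf2, hmid k, Set.ncard_coe_finset]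
  -- assemble
  set Kadj := (T1 - E).toNat with hKadj
  refine ⟨max (max K1 K3) Kadj, δ, fun k hk => ?_⟩
  have hk1 : K1 ≤ k := le_trans (le_trans (le_max_left _ _) (le_max_left _ _)) hk
  have hk3 : K3 ≤ k := le_trans (le_trans (le_max_right _ _) (le_max_left _ _)) hk
  have hkadj : Kadj ≤ k := le_trans (le_max_right _ _) hk
  have hadj : T1 ≤ E + k * bs := by
    have h1 : (Kadj : ℤ) ≤ k := by exact_mod_cast hkadj
    have h2 : (k:ℤ) ≤ k * bs := by nlinarith
    rw [hKadj] at h1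
    omega
  have hlow' : (itA ↑A ↑B (k+1) ∩ Set.Iio T1).ncard = (itA ↑A ↑B k ∩ Set.Iio T1).ncard := by
    rw [hlow (k+1) (by omega), hlow k hk1]
  have hhigh' : (itA ↑A ↑B (k+1) ∩ Set.Ioi (E + (((k+1):ℕ):ℤ) * bs)).ncard
      = (itA ↑A ↑B k ∩ Set.Ioi (E + k * bs)).ncard := by
    rw [hhighcard (k+1), hhighcard k, hhigh (k+1) (by omega), hhigh k hk3]
  have hadj1 : T1 ≤ E + ((k+1 : ℕ):ℤ) * bs := by
    push_cast
    nlinarith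
  have e1 := hdecomp (k+1) hadj1
  have e2 := hdecomp k hadj
  rw [hlow', hhigh', hmidinc k hadj] at e1
  omega
lemma lin_of_increment (u : ℕ → ℕ) (K δ : ℕ) (h : ∀ k, K ≤ k → u (k+1) = u k + δ) :
    ∃ a b : ℚ, ∀ k, K ≤ k → (u k : ℚ) = a * k + b := by
  refine ⟨δ, (u K : ℚ) - δ * K, ?_⟩
  intro k hk
  induction k, hk using Nat.le_induction with
  | base => ring
  | succ k hk ih =>
    rw [h k hk]
    push_cast
    rw [ih]
    ring

lemma itA_empty_left (B : Set ℤ) (k : ℕ) : itA ∅ B k = ∅ := by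
  induction k with
  | zero => rfl
  | succ k ih => rw [itA_succ, ih, Set.empty_add]

lemma itA_empty_right (A : Set ℤ) (k : ℕ) : 1 ≤ k → itA A ∅ k = ∅ := by
  intro hk
  rcases Nat.exists_eq_add_of_le hk with ⟨j, rfl⟩
  rw [add_comm, itA_succ, Set.add_empty]

/-- Master abstract lemma: eventual linearity of `k ↦ |A + kB|`. -/
lemma eventually_linear (A B : Set ℤ) (hA : A.Finite) (hB : B.Finite) :
    ∃ (K : ℕ) (a b : ℚ), ∀ k, K ≤ k → ((itA A B k).ncard : ℚ) = a * k + b := by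
  classical
  rcases A.eq_empty_or_nonempty with rfl | hAne
  · exact ⟨0, 0, 0, fun k _ => by rw [itA_empty_left]; simp⟩
  rcases B.eq_empty_or_nonempty with rfl | hBne
  · refine ⟨1, 0, 0, fun k hk => by rw [itA_empty_right A k hk]; simp⟩
  set mA := hA.toFinset.min' (by simpa using hAne) with hmA
  set mB := hB.toFinset.min' (by simpa using hBne) with hmB
  set AF := hA.toFinset.image (fun x => -mA + x) with hAF
  set BF := hB.toFinset.image (fun x => -mB + x) with hBF
  have hAcoe : (↑AF : Set ℤ) = (fun x => -mA + x) '' A := by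
    rw [hAF, Finset.coe_image, Set.Finite.coe_toFinset]
  have hBcoe : (↑BF : Set ℤ) = (fun x => -mB + x) '' B := by
    rw [hBF, Finset.coe_image, Set.Finite.coe_toFinset]
  have h0A : (0:ℤ) ∈ AF := by
    rw [hAF, Finset.mem_image]
    exact ⟨mA, hA.toFinset.min'_mem _, by ring⟩
  have h0B : (0:ℤ) ∈ BF := by
    rw [hBF, Finset.mem_image]
    exact ⟨mB, hB.toFinset.min'_mem _, by ring⟩
  have hAnn : ∀ a ∈ AF, 0 ≤ a := by
    intro a ha
    rcases Finset.mem_image.1 (hAF ▸ ha) with ⟨a', ha', rfl⟩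
    have := hA.toFinset.min'_le a' ha'
    omega
  have hBnn : ∀ b ∈ BF, 0 ≤ b := by
    intro b hb
    rcases Finset.mem_image.1 (hBF ▸ hb) with ⟨b', hb', rfl⟩
    have := hB.toFinset.min'_le b' hb'
    omega
  have htrans : ∀ k : ℕ, (itA A B k).ncard = (itA ↑AF ↑BF k).ncard := by
    intro k
    rw [hAcoe, hBcoe, itA_translate]
    exact (Set.ncard_image_of_injective _ (fun x y h => by simpa using h)).symm
  obtain ⟨K, δ, hKδ⟩ := main_increment AF BF h0A h0B hAnn hBnn
  obtain ⟨a, b, hab⟩ := lin_of_increment (fun k => (itA ↑AF ↑BF k).ncard) K δ hKδ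
  exact ⟨K, a, b, fun k hk => by rw [htrans k]; exact hab k hk⟩
-- ====================== Geometry ======================

noncomputable def vmapR {d : ℕ} (v : Fin d → ℚ) : Fin d → ℝ := fun i => ((v i : ℚ) : ℝ)

lemma vmapR_inj {d : ℕ} : Function.Injective (vmapR (d := d)) := by
  intro u v h
  funext i
  have h2 := congrFun h i
  simp only [vmapR] at h2
  exact_mod_cast h2

lemma mem_dilate_iff {d : ℕ} (V : Finset (Fin d → ℚ)) (n : ℕ) (hn : 1 ≤ n) (x : Fin d → ℝ) :
    x ∈ (n : ℝ) • (convexHull ℝ (vmapR '' (V : Set (Fin d → ℚ)))) ↔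
      ∃ w : (Fin d → ℚ) → ℝ, (∀ v ∈ V, 0 ≤ w v) ∧ (∑ v ∈ V, w v) = (n:ℝ) ∧
        x = ∑ v ∈ V, w v • vmapR v := by
  classical
  have hn0 : (n : ℝ) ≠ 0 := Nat.cast_ne_zero.2 (by omega)
  rw [Set.mem_smul_set_iff_inv_smul_mem₀ hn0]
  constructor
  · intro hx
    rw [show vmapR '' (V : Set (Fin d → ℚ)) = ↑(V.image vmapR) by rw [Finset.coe_image]] at hx
    rw [Finset.convexHull_eq] at hx
    obtain ⟨w', hw0, hw1, hwc⟩ := hx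
    have hsum : ∑ v ∈ V, w' (vmapR v) = 1 := by
      rw [← Finset.sum_image (fun u _ v _ h => vmapR_inj h)]
      exact hw1
    refine ⟨fun v => (n:ℝ) * w' (vmapR v), ?_, ?_, ?_⟩
    · intro v hv
      have h1 := hw0 (vmapR v) (Finset.mem_image_of_mem _ hv)
      have h2 : (0:ℝ) ≤ n := Nat.cast_nonneg n
      exact mul_nonneg h2 h1
    · rw [← Finset.mul_sum, hsum, mul_one]
    · have hc := Finset.centerMass_eq_of_sum_1 (V.image vmapR) id hw1
      rw [hwc] at hc
      simp only [id] at hc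
      rw [Finset.sum_image (fun u _ v _ h => vmapR_inj h)] at hc
      have hx' : x = (n:ℝ) • ((n:ℝ)⁻¹ • x) := by
        rw [smul_smul, mul_inv_cancel₀ hn0, one_smul]
      rw [hx', hc, Finset.smul_sum]
      refine Finset.sum_congr rfl fun v _ => ?_
      rw [smul_smul]
  · rintro ⟨w, hw0, hw1, rfl⟩
    apply mem_convexHull_of_exists_fintype (ι := {v // v ∈ V})
      (fun v => (n:ℝ)⁻¹ * w v.1) (fun v => vmapR v.1)
    · intro i
      exact mul_nonneg (by positivity) (hw0 i.1 i.2)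
    · rw [← Finset.mul_sum]
      rw [Finset.sum_coe_sort V w, hw1, inv_mul_cancel₀ hn0]
    · intro i
      exact ⟨i.1, i.2, rfl⟩
    · rw [Finset.smul_sum]
      rw [← Finset.sum_coe_sort V (fun v => (n:ℝ)⁻¹ • (w v • vmapR v))]
      refine Finset.sum_congr rfl fun v _ => ?_
      rw [smul_smul]
/-- The arithmetic range of the `n`-th dilate. -/
def Sdil {d : ℕ} (V : Finset (Fin d → ℚ)) (c : Fin d → ℤ) (n : ℕ) : Set ℤ :=
  AR c ((n:ℝ) • convexHull ℝ (vmapR '' (V : Set (Fin d → ℚ))))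

lemma mem_Sdil {d : ℕ} {V : Finset (Fin d → ℚ)} {c : Fin d → ℤ} {n : ℕ} {m : ℤ} :
    m ∈ Sdil V c n ↔ ∃ x : Fin d → ℤ,
      (fun i => ((x i : ℤ) : ℝ)) ∈ (n:ℝ) • convexHull ℝ (vmapR '' (V : Set (Fin d → ℚ)))
        ∧ m = ∑ i, c i * x i := by
  constructor
  · rintro ⟨x, hx, rfl⟩
    exact ⟨x, hx, rfl⟩
  · rintro ⟨x, hx, rfl⟩
    exact ⟨x, hx, rfl⟩

lemma S_add {d : ℕ} (V : Finset (Fin d → ℚ)) (c : Fin d → ℤ) {a b : ℕ} (ha : 1 ≤ a) (hb : 1 ≤ b)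
    {k1 k2 : ℤ} (h1 : k1 ∈ Sdil V c a) (h2 : k2 ∈ Sdil V c b) : k1 + k2 ∈ Sdil V c (a + b) := by
  rcases mem_Sdil.1 h1 with ⟨x, hx, rfl⟩
  rcases mem_Sdil.1 h2 with ⟨y, hy, rfl⟩
  rcases (mem_dilate_iff V a ha _).1 hx with ⟨w1, hw10, hw11, hw1x⟩
  rcases (mem_dilate_iff V b hb _).1 hy with ⟨w2, hw20, hw21, hw2x⟩
  refine mem_Sdil.2 ⟨fun i => x i + y i, ?_, ?_⟩
  · rw [mem_dilate_iff V (a+b) (by omega)]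
    refine ⟨fun v => w1 v + w2 v, fun v hv => add_nonneg (hw10 v hv) (hw20 v hv), ?_, ?_⟩
    · rw [Finset.sum_add_distrib, hw11, hw21]; push_cast; ring
    · have : (fun i => (((x i + y i : ℤ)) : ℝ)) = (fun i => ((x i : ℤ) : ℝ))
          + (fun i => ((y i : ℤ) : ℝ)) := by
        funext i; push_cast; simp
      rw [this, hw1x, hw2x, ← Finset.sum_add_distrib]
      refine Finset.sum_congr rfl fun v _ => ?_
      rw [add_smul]
  · rw [← Finset.sum_add_distrib]
    refine Finset.sum_congr rfl fun i _ => ?_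
    ring

/-- common denominator -/
def DV {d : ℕ} (V : Finset (Fin d → ℚ)) : ℕ := ∏ v ∈ V, ∏ i, (v i).den

lemma DV_pos {d : ℕ} (V : Finset (Fin d → ℚ)) : 1 ≤ DV V := by
  refine Nat.one_le_iff_ne_zero.2 (Finset.prod_ne_zero_iff.2 fun v _ => ?_)
  exact Finset.prod_ne_zero_iff.2 fun i _ => (v i).den_nz

/-- integer vertex multiples -/
def yv {d : ℕ} (V : Finset (Fin d → ℚ)) (v : Fin d → ℚ) : Fin d → ℤ :=
  fun i => (v i).num * ((DV V / (v i).den : ℕ) : ℤ)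

lemma yv_cast {d : ℕ} (V : Finset (Fin d → ℚ)) {v : Fin d → ℚ} (hv : v ∈ V) (i : Fin d) :
    ((yv V v i : ℤ) : ℝ) = (DV V : ℝ) * vmapR v i := by
  have hdvd : (v i).den ∣ DV V := by
    refine dvd_trans ?_ (Finset.dvd_prod_of_mem _ hv)
    exact Finset.dvd_prod_of_mem _ (Finset.mem_univ i)
  obtain ⟨t, ht⟩ := hdvd
  have hdenpos : 0 < (v i).den := (v i).pos
  have hdiv : (DV V / (v i).den : ℕ) = t := by rw [ht]; exact Nat.mul_div_cancel_left t hdenpos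
  have hq : ((yv V v i : ℤ) : ℚ) = (DV V : ℚ) * v i := by
    set nu := (v i).num with hnu
    set de := (v i).den with hde
    have h : (nu : ℚ) / (de : ℚ) = v i := Rat.num_div_den (v i)
    have hden : ((de : ℕ) : ℚ) ≠ 0 := Nat.cast_ne_zero.2 (by omega)
    rw [yv, hdiv, ht, ← hnu]
    push_cast
    rw [← h]
    field_simp
  have := congrArg (fun q : ℚ => (q : ℝ)) hq
  rw [vmapR]
  push_cast at this ⊢
  exact this

lemma yv_mem {d : ℕ} (V : Finset (Fin d → ℚ)) (c : Fin d → ℤ) {v : Fin d → ℚ} (hv : v ∈ V) :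
    (∑ i, c i * yv V v i) ∈ Sdil V c (DV V) := by
  classical
  refine mem_Sdil.2 ⟨yv V v, ?_, rfl⟩
  rw [mem_dilate_iff V (DV V) (DV_pos V)]
  refine ⟨fun u => if u = v then (DV V : ℝ) else 0, ?_, ?_, ?_⟩
  · intro u _
    by_cases h : u = v <;> simp [h]
  · rw [Finset.sum_ite_eq' V v (fun _ => (DV V : ℝ))]
    rw [if_pos hv]
  · have hsum : ∑ u ∈ V, (if u = v then (DV V : ℝ) else 0) • vmapR u
        = (DV V : ℝ) • vmapR v := by
      rw [Finset.sum_eq_single v]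
      · rw [if_pos rfl]
      · intro u _ hne; rw [if_neg hne, zero_smul]
      · intro h; exact absurd hv h
    rw [hsum]
    funext i
    rw [Pi.smul_apply, smul_eq_mul]
    exact yv_cast V hv i
lemma S_eq {d : ℕ} (V : Finset (Fin d → ℚ)) (c : Fin d → ℤ) (hV : V.Nonempty) {n : ℕ}
    (hn : (V.card + 1) * DV V ≤ n) :
    Sdil V c n = Sdil V c (n - DV V) + Sdil V c (DV V) := by
  classical
  have hD1 : 1 ≤ DV V := DV_pos V
  have hc1 : 1 ≤ V.card := Finset.card_pos.2 hV
  have hn1 : 1 ≤ n := le_trans (by nlinarith) hn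
  have hnD : DV V ≤ n := le_trans (by nlinarith) hn
  have hsub1 : 1 ≤ n - DV V := by
    have : 2 * DV V ≤ n := le_trans (by nlinarith) hn
    omega
  apply Set.Subset.antisymm
  · intro k hk
    rcases mem_Sdil.1 hk with ⟨x, hx, rfl⟩
    rcases (mem_dilate_iff V n hn1 _).1 hx with ⟨w, hw0, hw1, hwx⟩
    -- pigeonhole
    have hpig : ∃ v0 ∈ V, (DV V : ℝ) ≤ w v0 := by
      by_contra hcon
      push_neg at hcon
      have hlt : ∑ v ∈ V, w v < ∑ v ∈ V, (DV V : ℝ) :=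
        Finset.sum_lt_sum_of_nonempty hV fun v hv => hcon v hv
      rw [hw1, Finset.sum_const, nsmul_eq_mul] at hlt
      have : (n : ℝ) < ((V.card * DV V : ℕ) : ℝ) := by push_cast; linarith
      have hlt2 : n < V.card * DV V := by exact_mod_cast this
      nlinarith
    obtain ⟨v0, hv0, hwv0⟩ := hpig
    set x1 : Fin d → ℤ := fun i => x i - yv V v0 i with hx1
    refine Set.mem_add.2 ⟨∑ i, c i * x1 i, ?_, ∑ i, c i * yv V v0 i, yv_mem V c hv0, ?_⟩
    · refine mem_Sdil.2 ⟨x1, ?_, rfl⟩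
      rw [mem_dilate_iff V (n - DV V) hsub1]
      refine ⟨fun v => if v = v0 then w v0 - (DV V : ℝ) else w v, ?_, ?_, ?_⟩
      · intro v hv
        show (0:ℝ) ≤ if v = v0 then w v0 - (DV V : ℝ) else w v
        by_cases h : v = v0
        · rw [if_pos h]; linarith
        · rw [if_neg h]; exact hw0 v hv
      · have hper : ∀ v ∈ V, (if v = v0 then w v0 - (DV V : ℝ) else w v)
            = w v - (if v = v0 then (DV V : ℝ) else 0) := by
          intro v _
          by_cases h : v = v0 <;> simp [h]
        rw [Finset.sum_congr rfl hper, Finset.sum_sub_distrib, hw1,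
          Finset.sum_eq_single v0 (fun u _ hne => if_neg hne) (fun h => absurd hv0 h),
          if_pos rfl, Nat.cast_sub hnD]
      · have hfun : (fun i => ((x1 i : ℤ) : ℝ))
            = (fun i => ((x i : ℤ) : ℝ)) - (DV V : ℝ) • vmapR v0 := by
          funext i
          simp only [hx1, Pi.sub_apply, Pi.smul_apply, smul_eq_mul]
          push_cast
          rw [← yv_cast V hv0 i]
        rw [hfun, hwx]
        have hper : ∀ v ∈ V, (if v = v0 then w v0 - (DV V : ℝ) else w v) • vmapR v
            = w v • vmapR v - (if v = v0 then (DV V : ℝ) • vmapR v else 0) := by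
          intro v _
          by_cases h : v = v0 <;> simp [h, sub_smul]
        rw [Finset.sum_congr rfl hper, Finset.sum_sub_distrib,
          Finset.sum_eq_single v0 (fun u _ hne => if_neg hne) (fun h => absurd hv0 h),
          if_pos rfl]
    · rw [← Finset.sum_add_distrib]
      refine Finset.sum_congr rfl fun i _ => ?_
      simp only [hx1]
      ring
  · intro k hk
    rcases Set.mem_add.1 hk with ⟨k1, h1, k2, h2, rfl⟩
    have := S_add V c hsub1 hD1 h1 h2
    rwa [Nat.sub_add_cancel hnD] at this

lemma S_iter {d : ℕ} (V : Finset (Fin d → ℚ)) (c : Fin d → ℤ) (hV : V.Nonempty) (r : ℕ) :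
    ∀ k : ℕ, Sdil V c ((V.card + 1) * DV V + r + k * DV V)
      = itA (Sdil V c ((V.card + 1) * DV V + r)) (Sdil V c (DV V)) k := by
  intro k
  induction k with
  | zero => simp [itA]
  | succ k ih =>
    have hbig : (V.card + 1) * DV V ≤ (V.card + 1) * DV V + r + (k+1) * DV V := by omega
    rw [show (V.card + 1) * DV V + r + (k+1) * DV V
        = ((V.card + 1) * DV V + r + k * DV V) + DV V by ring]
    rw [itA_succ, ← ih]
    have := S_eq V c hV (n := (V.card + 1) * DV V + r + k * DV V + DV V) (by omega)
    rw [this, Nat.add_sub_cancel]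

lemma S_fin {d : ℕ} (V : Finset (Fin d → ℚ)) (c : Fin d → ℤ) {n : ℕ} (hn : 1 ≤ n) :
    (Sdil V c n).Finite := by
  classical
  set CV : ℝ := (∑ v ∈ V, ∑ i, |vmapR v i|) + 1 with hCV
  have hCV0 : 0 ≤ CV := by
    rw [hCV]
    have : (0:ℝ) ≤ ∑ v ∈ V, ∑ i, |vmapR v i| :=
      Finset.sum_nonneg fun v _ => Finset.sum_nonneg fun i _ => abs_nonneg _
    linarith
  have hCVb : ∀ v ∈ V, ∀ i, |vmapR v i| ≤ CV := by
    intro v hv i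
    rw [hCV]
    have h1 : |vmapR v i| ≤ ∑ j, |vmapR v j| :=
      Finset.single_le_sum (f := fun j => |vmapR v j|) (fun j _ => abs_nonneg _)
        (Finset.mem_univ i)
    have h2 : ∑ j, |vmapR v j| ≤ ∑ u ∈ V, ∑ j, |vmapR u j| :=
      Finset.single_le_sum (f := fun u => ∑ j, |vmapR u j|)
        (fun u _ => Finset.sum_nonneg fun j _ => abs_nonneg _) hv
    linarith
  set M : ℤ := (n:ℤ) * ⌈CV⌉ with hM
  have hbox : Sdil V c n ⊆ (fun x : Fin d → ℤ => ∑ i, c i * x i) ''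
      (Set.pi Set.univ fun _ : Fin d => Set.Icc (-M) M) := by
    rintro m ⟨x, hx, rfl⟩
    refine ⟨x, ?_, rfl⟩
    rw [Set.mem_pi]
    intro i _
    rcases (mem_dilate_iff V n hn _).1 hx with ⟨w, hw0, hw1, hwx⟩
    have hxi : ((x i : ℤ) : ℝ) = ∑ v ∈ V, w v * vmapR v i := by
      have := congrFun hwx i
      simpa [Finset.sum_apply] using this
    have habs : |((x i : ℤ) : ℝ)| ≤ (n:ℝ) * CV := by
      rw [hxi]
      calc |∑ v ∈ V, w v * vmapR v i| ≤ ∑ v ∈ V, |w v * vmapR v i| :=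
            Finset.abs_sum_le_sum_abs _ _
        _ ≤ ∑ v ∈ V, w v * CV := by
            refine Finset.sum_le_sum fun v hv => ?_
            rw [abs_mul, abs_of_nonneg (hw0 v hv)]
            exact mul_le_mul_of_nonneg_left (hCVb v hv i) (hw0 v hv)
        _ = (n:ℝ) * CV := by rw [← Finset.sum_mul, hw1]
    have hMR : (n:ℝ) * CV ≤ (M:ℝ) := by
      rw [hM]
      push_cast
      exact mul_le_mul_of_nonneg_left (Int.le_ceil CV) (Nat.cast_nonneg n)
    rw [abs_le] at habs
    constructor
    · exact_mod_cast le_trans (by linarith [habs.1] : -(M:ℝ) ≤ ((x i : ℤ):ℝ)) (le_refl _)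
    · exact_mod_cast le_trans habs.2 hMR
  exact Set.Finite.subset (Set.Finite.image _ (Set.Finite.pi fun _ => Set.finite_Icc _ _)) hbox
end QLaux

open QLaux

/-- for a rational polytope `P` and fixed nonzero `c ∈ ℤ^d`, the function
`n ↦ aw_c(nP)` is eventually quasilinear: there are `D > 0`, a threshold `N`, and
rationals `a_r, b_r` for `r = 0, …, D−1` with `aw_c(nP) = a_{n mod D}·n + b_{n mod D}`
for all `n ≥ N`. -/
theorem aw_fixed_direction_eventually_quasilinear {d : ℕ} (P : Set (Fin d → ℝ))
    (hP : IsRatPolytope P) (c : Fin d → ℤ) (hc : c ≠ 0) :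
    ∃ (D : ℕ), 0 < D ∧ ∃ (N : ℕ) (a b : ℕ → ℚ),
      ∀ n : ℕ, N ≤ n →
        (aw c ((n : ℝ) • P) : ℚ) = a (n % D) * (n : ℚ) + b (n % D) := by
  classical
  obtain ⟨V, hV, hPeq⟩ := hP
  have hAR : ∀ n : ℕ, AR c ((n:ℝ) • P) = Sdil V c n := by
    intro n
    rw [hPeq]
    rfl
  set m1 := V.card + 1 with hm1
  set D := DV V with hD
  have hD1 : 1 ≤ D := DV_pos V
  have hc1 : 1 ≤ V.card := Finset.card_pos.2 hV
  have hch : ∀ r : ℕ, ∃ (K : ℕ) (a b : ℚ), ∀ k, K ≤ k →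
      ((itA (Sdil V c (m1 * D + r)) (Sdil V c D) k).ncard : ℚ) = a * k + b := by
    intro r
    exact eventually_linear _ _ (S_fin V c (by nlinarith)) (S_fin V c hD1)
  choose K a' b' hch using hch
  set Ksup := (Finset.range D).sup K with hKsup
  refine ⟨D, by omega, (m1 + Ksup + 1) * D,
    fun r => a' r / (D:ℚ),
    fun r => b' r - a' r * ((m1 : ℚ) + (r:ℚ)/(D:ℚ)), ?_⟩
  intro n hn
  set r := n % D with hr
  set q := n / D with hq
  have hqr : D * q + r = n := Nat.div_add_mod n D
  have hrD : r < D := Nat.mod_lt n (by omega)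
  have hKr : K r ≤ Ksup := Finset.le_sup (Finset.mem_range.2 hrD)
  have hqbig : m1 + Ksup + 1 ≤ q := (Nat.le_div_iff_mul_le (by omega)).2 hn
  set k := q - m1 with hk
  have hKk : K r ≤ k := by omega
  have hqk : m1 + k = q := by omega
  have hidx : m1 * D + r + k * D = n := by
    calc m1 * D + r + k * D = (m1 + k) * D + r := by ring
      _ = q * D + r := by rw [hqk]
      _ = n := by rw [mul_comm]; exact hqr
  have hS : Sdil V c n = itA (Sdil V c (m1 * D + r)) (Sdil V c D) k := by
    rw [← hidx]
    exact S_iter V c hV r k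
  have hval := hch r k hKk
  have haw : (aw c ((n:ℝ) • P) : ℚ) = ((itA (Sdil V c (m1 * D + r)) (Sdil V c D) k).ncard : ℚ) := by
    rw [aw, hAR n, hS]
  rw [haw, hval]
  -- final algebra
  have hD0 : ((D:ℚ)) ≠ 0 := by positivity
  have hkq : (k:ℚ) = ((n:ℚ) - (r:ℚ))/(D:ℚ) - (m1:ℚ) := by
    have h1 : (D:ℚ) * (q:ℚ) + (r:ℚ) = (n:ℚ) := by exact_mod_cast hqr
    have h2 : (k:ℚ) = (q:ℚ) - (m1:ℚ) := by
      rw [hk]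
      push_cast [Nat.cast_sub (by omega : m1 ≤ q)]
      ring
    rw [h2]
    have h3 : (q:ℚ) = ((n:ℚ) - (r:ℚ))/(D:ℚ) := by
      rw [eq_div_iff hD0]
      linarith
    rw [h3]
  rw [hkq]
  field_simp
  ring
end

section
/- Let P ⊆ ℝ^d be a rational polytope with denominator D, let c ∈ ℤ^d be nonzero, let V be the linear span of P − P, and let λ ∈ ℤ_{≥0} be the nonnegative generator of the subgroup { c·w : w ∈ V ∩ ℤ^d } of ℤ. Then for all sufficiently large integers n for which the affine span of nP contains a point of ℤ^d, the sets AR_c(nP) and AR_c((n+D)P) are nonempty, each is contained in a single residue class modulo λ, and |gaps_λ(AR_c(nP))| = |gaps_λ(AR_c((n+D)P))|. -/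
open Pointwise

namespace GapsAux
variable {d : ℕ}

noncomputable def toR {d : ℕ} (x : Fin d → ℤ) : Fin d → ℝ := fun i => (x i : ℝ)

lemma toR_add (x y : Fin d → ℤ) : toR (x + y) = toR x + toR y := by
  funext i; simp [toR]

lemma toR_sub (x y : Fin d → ℤ) : toR (x - y) = toR x - toR y := by
  funext i; simp [toR]

lemma toR_zsmul (k : ℤ) (x : Fin d → ℤ) : toR (k • x) = (k : ℝ) • toR x := by
  funext i; simp [toR]

lemma toR_sum {ι : Type*} (s : Finset ι) (f : ι → Fin d → ℤ) :
    toR (∑ i ∈ s, f i) = ∑ i ∈ s, toR (f i) := by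
  funext j; simp [toR, Finset.sum_apply]

/-- The linear functional `x ↦ ∑ i, c i * x i`. -/
noncomputable def linM {d : ℕ} (c : Fin d → ℤ) : (Fin d → ℝ) →ₗ[ℝ] ℝ where
  toFun x := ∑ i, (c i : ℝ) * x i
  map_add' x y := by simp [Pi.add_apply, mul_add, Finset.sum_add_distrib]
  map_smul' a x := by
    simp only [Pi.smul_apply, smul_eq_mul, RingHom.id_apply, Finset.mul_sum]
    exact Finset.sum_congr rfl fun i _ => by ring

lemma linM_toR (c x : Fin d → ℤ) : linM c (toR x) = ((∑ i, c i * x i : ℤ) : ℝ) := by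
  simp [linM, toR]

/-- Rounding: any vector in the real span of an integer family is an integer vector
plus a combination with coefficients of absolute value at most 1. -/
lemma round_aux {ι : Type*} [Fintype ι] (w : ι → (Fin d → ℤ)) (v : Fin d → ℝ)
    (hv : v ∈ Submodule.span ℝ (Set.range fun i => toR (w i))) :
    ∃ (u : Fin d → ℤ) (θ : ι → ℝ), (∀ i, |θ i| ≤ 1) ∧
      (toR u ∈ Submodule.span ℝ (Set.range fun i => toR (w i))) ∧
      v = toR u + ∑ i, θ i • toR (w i) := by
  obtain ⟨a, ha⟩ := (Submodule.mem_span_range_iff_exists_fun ℝ).mp hv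
  refine ⟨∑ i, ⌊a i⌋ • w i, fun i => Int.fract (a i), fun i => ?_, ?_, ?_⟩
  · rw [abs_le]
    exact ⟨le_trans (by norm_num) (Int.fract_nonneg _), (Int.fract_lt_one _).le⟩
  · rw [toR_sum]
    refine Submodule.sum_mem _ fun i _ => ?_
    rw [toR_zsmul]
    exact Submodule.smul_mem _ _ (Submodule.subset_span ⟨i, rfl⟩)
  · rw [toR_sum, ← ha]
    rw [← Finset.sum_add_distrib]
    refine Finset.sum_congr rfl fun i _ => ?_
    rw [toR_zsmul, ← add_smul]
    congr 1
    exact (Int.floor_add_fract (a i)).symm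

lemma ball_aux (U : Finset (Fin d → ℝ)) (s0 : Fin d → ℝ) (hs0 : s0 ∈ U)
    {ι : Type*} [Fintype ι] (h : ι → (Fin d → ℝ))
    (hh : ∀ i, h i ∈ Submodule.span ℝ
      (Set.range (fun y : {y // y ∈ U} => (y : Fin d → ℝ) - s0))) :
    ∃ ε : ℝ, 0 < ε ∧ ∀ θ : ι → ℝ, (∀ i, |θ i| ≤ 1) →
      ((U.card : ℝ)⁻¹ • ∑ y ∈ U, y) + ε • ∑ i, θ i • h i
        ∈ convexHull ℝ (U : Set (Fin d → ℝ)) := by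
  classical
  have hUne : U.Nonempty := ⟨s0, hs0⟩
  choose ρ hρ using fun i => (Submodule.mem_span_range_iff_exists_fun ℝ).mp (hh i)
  set N : ℝ := (U.card : ℝ) with hN
  have hN0 : 0 < N := by
    simp only [hN, Nat.cast_pos]
    exact Finset.card_pos.mpr hUne
  have hN1 : 1 ≤ N := by
    simp only [hN]
    exact_mod_cast Nat.one_le_iff_ne_zero.mpr (Finset.card_ne_zero.mpr hUne)
  set R : ℝ := ∑ i, ∑ y : {y // y ∈ U}, |ρ i y| with hR
  have hR0 : 0 ≤ R := by positivity
  have hεpos : (0:ℝ) < (N * ((N+1) * R + 1))⁻¹ := by positivity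
  refine ⟨(N * ((N+1) * R + 1))⁻¹, hεpos, fun θ hθ => ?_⟩
  set ε : ℝ := (N * ((N+1) * R + 1))⁻¹ with hε
  have hNinv : N⁻¹ = ε * ((N+1)*R + 1) := by
    rw [hε, mul_inv]
    field_simp
  set β : {y // y ∈ U} → ℝ := fun y => ∑ i, θ i * ρ i y with hβ
  have hβle : ∀ y, |β y| ≤ R := by
    intro y
    calc |β y| ≤ ∑ i, |θ i * ρ i y| := Finset.abs_sum_le_sum_abs _ _
    _ ≤ ∑ i, |ρ i y| := by
        refine Finset.sum_le_sum fun i _ => ?_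
        rw [abs_mul]
        calc |θ i| * |ρ i y| ≤ 1 * |ρ i y| :=
          mul_le_mul_of_nonneg_right (hθ i) (abs_nonneg _)
        _ = |ρ i y| := one_mul _
    _ ≤ R := by
        rw [hR]
        refine Finset.sum_le_sum fun i _ => ?_
        exact Finset.single_le_sum (fun y' _ => abs_nonneg (ρ i y')) (Finset.mem_univ y)
  set B : ℝ := ∑ y : {y // y ∈ U}, β y with hB
  have hBle : |B| ≤ N * R := by
    calc |B| ≤ ∑ y : {y // y ∈ U}, |β y| := Finset.abs_sum_le_sum_abs _ _
    _ ≤ ∑ _y : {y // y ∈ U}, R := Finset.sum_le_sum fun y _ => hβle y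
    _ = N * R := by
        rw [Finset.sum_const, hN]
        simp [Fintype.card_coe, nsmul_eq_mul]
  set c : {y // y ∈ U} → ℝ := fun y =>
    N⁻¹ + ε * β y - (if y = (⟨s0, hs0⟩ : {y // y ∈ U}) then ε * B else 0) with hc
  have hcnn : ∀ y, 0 ≤ c y := by
    intro y
    have h1 := hβle y
    have h2 := abs_le.mp hBle
    have h3 := abs_le.mp h1
    rw [hc]
    simp only
    split_ifs with hy
    · rw [hNinv]
      nlinarith [hεpos, hR0]
    · rw [hNinv]
      nlinarith [hεpos, hR0]
  have hcsum : ∑ y : {y // y ∈ U}, c y = 1 := by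
    rw [hc]
    simp only
    rw [Finset.sum_sub_distrib, Finset.sum_add_distrib,
        Finset.sum_ite_eq' Finset.univ (⟨s0, hs0⟩ : {y // y ∈ U}) (fun _ => ε * B)]
    simp only [Finset.mem_univ, if_true]
    rw [← Finset.mul_sum, ← hB, Finset.sum_const, nsmul_eq_mul, Finset.card_univ,
        Fintype.card_coe, ← hN]
    field_simp
    ring
  have key : ∑ y : {y // y ∈ U}, c y • (y : Fin d → ℝ)
      = ((U.card : ℝ)⁻¹ • ∑ y ∈ U, y) + ε • ∑ i, θ i • h i := by
    have e1 : ε • ∑ i, θ i • h i = ∑ y : {y // y ∈ U}, (ε * β y) • ((y : Fin d → ℝ) - s0) := by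
      rw [Finset.smul_sum]
      have e0 : ∀ i, θ i • h i = ∑ y : {y // y ∈ U}, (θ i * ρ i y) • ((y : Fin d → ℝ) - s0) := by
        intro i
        rw [← hρ i, Finset.smul_sum]
        exact Finset.sum_congr rfl fun y _ => by rw [smul_smul]
      calc ∑ i, ε • (θ i • h i)
          = ∑ i, ∑ y : {y // y ∈ U}, (ε * (θ i * ρ i y)) • ((y : Fin d → ℝ) - s0) := by
            refine Finset.sum_congr rfl fun i _ => ?_
            rw [e0 i, Finset.smul_sum]
            exact Finset.sum_congr rfl fun y _ => by rw [smul_smul]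
        _ = ∑ y : {y // y ∈ U}, (ε * β y) • ((y : Fin d → ℝ) - s0) := by
            rw [Finset.sum_comm]
            refine Finset.sum_congr rfl fun y _ => ?_
            rw [hβ]
            simp only
            rw [Finset.mul_sum, ← Finset.sum_smul]
    have e2 : ((U.card : ℝ)⁻¹ • ∑ y ∈ U, y) = ∑ y : {y // y ∈ U}, N⁻¹ • (y : Fin d → ℝ) := by
      rw [← Finset.smul_sum, ← hN]
      congr 1
      exact (Finset.sum_coe_sort U (fun y => y)).symm
    have e3 : ∑ y : {y // y ∈ U}, (ε * β y) • ((y : Fin d → ℝ) - s0)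
        = (∑ y : {y // y ∈ U}, (ε * β y) • (y : Fin d → ℝ)) - (ε * B) • s0 := by
      have e3a : ∀ y : {y // y ∈ U}, (ε * β y) • ((y : Fin d → ℝ) - s0)
          = (ε * β y) • (y : Fin d → ℝ) - (ε * β y) • s0 := fun y => smul_sub _ _ _
      rw [Finset.sum_congr rfl (fun y _ => e3a y), Finset.sum_sub_distrib, ← Finset.sum_smul,
          ← Finset.mul_sum, ← hB]
    rw [e1, e2, e3]
    have e4 : ∀ y : {y // y ∈ U},
        c y • (y : Fin d → ℝ)
          = N⁻¹ • (y : Fin d → ℝ) + (ε * β y) • (y : Fin d → ℝ)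
            - (if y = (⟨s0, hs0⟩ : {y // y ∈ U}) then (ε * B) • (y : Fin d → ℝ) else 0) := by
      intro y
      rw [hc]
      simp only
      split_ifs with hy
      · rw [sub_smul, add_smul]
      · rw [sub_zero, add_smul, sub_zero]
    rw [Finset.sum_congr rfl (fun y _ => e4 y), Finset.sum_sub_distrib, Finset.sum_add_distrib,
        Finset.sum_ite_eq' Finset.univ (⟨s0, hs0⟩ : {y // y ∈ U})
          (fun y => (ε * B) • (y : Fin d → ℝ))]
    simp only [Finset.mem_univ, if_true]
    abel
  rw [← key]
  have hmem := Finset.centerMass_mem_convexHull (Finset.univ : Finset {y // y ∈ U})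
      (w := c) (fun y _ => hcnn y) (by rw [hcsum]; norm_num)
      (z := fun y => (y : Fin d → ℝ)) (fun y _ => Finset.mem_coe.mpr y.2)
  rwa [Finset.centerMass_eq_of_sum_1 _ _ hcsum] at hmem

end GapsAux



/-- `Q ⊆ ℝ^d` is an integral polytope: the convex hull of finitely many integer points. -/
def IsIntPolytope {d : ℕ} (Q : Set (Fin d → ℝ)) : Prop :=
  ∃ V : Finset (Fin d → ℤ), V.Nonempty ∧
    Q = convexHull ℝ ((fun v : Fin d → ℤ => (fun i => ((v i : ℤ) : ℝ))) '' (V : Set (Fin d → ℤ)))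

/-- `D` is the denominator of `P`: the least positive integer such that `DP` is integral. -/
def IsDenom {d : ℕ} (P : Set (Fin d → ℝ)) (D : ℕ) : Prop :=
  0 < D ∧ IsIntPolytope ((D : ℝ) • P) ∧
    ∀ D' : ℕ, 0 < D' → IsIntPolytope ((D' : ℝ) • P) → D ≤ D'

/-- The gaps of a set `S ⊆ ℤ` relative to step size `λ`: elements of the arithmetic
progression of step `λ` from `min S` to `max S` that are missing from `S`. -/
noncomputable def gapsOf (lam : ℕ) (S : Set ℤ) : Set ℤ :=
  {j : ℤ | sInf S ≤ j ∧ j ≤ sSup S ∧ (lam : ℤ) ∣ j - sInf S} \ S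

open GapsAux

set_option maxHeartbeats 8000000

/-- for a rational polytope `P` with denominator `D`, a nonzero `c ∈ ℤ^d`,
and `λ ≥ 0` the generator of `{c·w : w ∈ span(P−P) ∩ ℤ^d}`, for all large enough `n`
such that the affine span of `nP` contains a lattice point: `AR_c(nP)` and
`AR_c((n+D)P)` are nonempty, lie in single residue classes mod `λ`, and have equally
many gaps. -/
theorem gaps_cardinality_stabilizes {d : ℕ} (P : Set (Fin d → ℝ)) (hP : IsRatPolytope P)
    (D : ℕ) (hD : IsDenom P D) (c : Fin d → ℤ) (hc : c ≠ 0)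
    (lam : ℕ)
    (hlam : {j : ℤ | ∃ w : Fin d → ℤ,
        ((fun i => (w i : ℝ)) ∈ Submodule.span ℝ (P - P)) ∧ j = ∑ i, c i * w i}
      = {j : ℤ | (lam : ℤ) ∣ j}) :
    ∃ N : ℕ, ∀ n : ℕ, N ≤ n →
      (∃ z : Fin d → ℤ, (fun i => (z i : ℝ)) ∈ affineSpan ℝ ((n : ℝ) • P)) →
      (AR c ((n : ℝ) • P)).Nonempty ∧
      (AR c (((n + D : ℕ) : ℝ) • P)).Nonempty ∧
      (∀ j₁ ∈ AR c ((n : ℝ) • P), ∀ j₂ ∈ AR c ((n : ℝ) • P), (lam : ℤ) ∣ j₁ - j₂) ∧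
      (∀ j₁ ∈ AR c (((n + D : ℕ) : ℝ) • P), ∀ j₂ ∈ AR c (((n + D : ℕ) : ℝ) • P),
        (lam : ℤ) ∣ j₁ - j₂) ∧
      (gapsOf lam (AR c ((n : ℝ) • P))).ncard
        = (gapsOf lam (AR c (((n + D : ℕ) : ℝ) • P))).ncard := by
  classical
  obtain ⟨hD0, ⟨T, hTne, hTeq⟩, -⟩ := hD
  have hDr0 : (0:ℝ) < (D:ℝ) := by exact_mod_cast hD0
  -- the rational vertex set, as real points
  set U : Finset (Fin d → ℝ) := T.image (fun v => (D:ℝ)⁻¹ • toR v) with hUdef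
  have hUne : U.Nonempty := hTne.image _
  have hUD : ∀ y ∈ U, ∃ v : Fin d → ℤ, (D:ℝ) • y = toR v := by
    intro y hy
    rw [hUdef, Finset.mem_image] at hy
    obtain ⟨v, hv, rfl⟩ := hy
    exact ⟨v, by rw [smul_inv_smul₀ (ne_of_gt hDr0)]⟩
  have hPU : P = convexHull ℝ (U : Set (Fin d → ℝ)) := by
    have h1 : P = (D:ℝ)⁻¹ • ((D:ℝ) • P) := (inv_smul_smul₀ (ne_of_gt hDr0) P).symm
    rw [h1, hTeq, ← convexHull_smul]
    congr 1
    rw [hUdef, Finset.coe_image]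
    rw [← Set.image_smul, Set.image_image]
    rfl
  -- membership in dilates via weights
  have hmem : ∀ (r : ℝ) (x : Fin d → ℝ), x ∈ r • P ↔
      ∃ w : (Fin d → ℝ) → ℝ, (∀ y ∈ U, 0 ≤ w y) ∧ (∑ y ∈ U, w y = 1) ∧
        x = ∑ y ∈ U, (r * w y) • y := by
    intro r x
    rw [hPU]
    constructor
    · rintro ⟨p, hp, rfl⟩
      rw [Finset.convexHull_eq] at hp
      obtain ⟨w, hw0, hw1, hwx⟩ := hp
      refine ⟨w, hw0, hw1, ?_⟩
      show r • p = _
      rw [← hwx, Finset.centerMass_eq_of_sum_1 _ _ hw1]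
      simp only [id_eq]
      rw [Finset.smul_sum]
      exact Finset.sum_congr rfl fun y _ => smul_smul r (w y) y
    · rintro ⟨w, hw0, hw1, rfl⟩
      refine Set.mem_smul_set.mpr ⟨∑ y ∈ U, w y • y, ?_, ?_⟩
      · rw [Finset.convexHull_eq]
        refine ⟨w, hw0, hw1, ?_⟩
        rw [Finset.centerMass_eq_of_sum_1 _ _ hw1]
        simp only [id_eq]
      · rw [Finset.smul_sum]
        exact Finset.sum_congr rfl fun y _ => smul_smul r (w y) y
  have hconv : ∀ r : ℝ, Convex ℝ (r • P) := by
    intro r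
    rw [hPU]
    exact (convex_convexHull ℝ _).smul r
  -- Minkowski additivity
  have hMink : ∀ (r s : ℝ), 0 ≤ r → 0 ≤ s → 0 < r + s →
      ∀ a ∈ r • P, ∀ b ∈ s • P, a + b ∈ (r + s) • P := by
    intro r s hr hs hrs a ha b hb
    obtain ⟨wa, hwa0, hwa1, hwa⟩ := (hmem r a).mp ha
    obtain ⟨wb, hwb0, hwb1, hwb⟩ := (hmem s b).mp hb
    refine (hmem (r+s) (a+b)).mpr ⟨fun y => (r * wa y + s * wb y) / (r + s), ?_, ?_, ?_⟩
    · intro y hy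
      exact div_nonneg (add_nonneg (mul_nonneg hr (hwa0 y hy)) (mul_nonneg hs (hwb0 y hy))) hrs.le
    · rw [← Finset.sum_div, Finset.sum_add_distrib, ← Finset.mul_sum, ← Finset.mul_sum,
        hwa1, hwb1]
      field_simp
    · rw [hwa, hwb, ← Finset.sum_add_distrib]
      refine Finset.sum_congr rfl fun y hy => ?_
      rw [← add_smul]
      congr 1
      field_simp
  -- extremal vertices
  obtain ⟨smin, hsminU, hsmin⟩ := U.exists_min_image (fun y => linM c y) hUne
  obtain ⟨smax, hsmaxU, hsmax⟩ := U.exists_max_image (fun y => linM c y) hUne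
  set μ : ℝ := linM c smin with hμdef
  set ν : ℝ := linM c smax with hνdef
  -- value bounds on dilates
  have hval : ∀ (r : ℝ), 0 ≤ r → ∀ x ∈ r • P, r * μ ≤ linM c x ∧ linM c x ≤ r * ν := by
    intro r hr x hx
    obtain ⟨w, hw0, hw1, hwx⟩ := (hmem r x).mp hx
    have hlx : linM c x = ∑ y ∈ U, (r * w y) * linM c y := by
      rw [hwx, map_sum]
      exact Finset.sum_congr rfl fun y _ => by rw [map_smul, smul_eq_mul]
    constructor
    · rw [hlx]
      calc r * μ = ∑ y ∈ U, (r * w y) * μ := by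
            rw [← Finset.sum_mul, ← Finset.mul_sum, hw1, mul_one]
        _ ≤ ∑ y ∈ U, (r * w y) * linM c y :=
            Finset.sum_le_sum fun y hy =>
              mul_le_mul_of_nonneg_left (hsmin y hy) (mul_nonneg hr (hw0 y hy))
    · rw [hlx]
      calc ∑ y ∈ U, (r * w y) * linM c y ≤ ∑ y ∈ U, (r * w y) * ν :=
            Finset.sum_le_sum fun y hy =>
              mul_le_mul_of_nonneg_left (hsmax y hy) (mul_nonneg hr (hw0 y hy))
        _ = r * ν := by rw [← Finset.sum_mul, ← Finset.mul_sum, hw1, mul_one]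
  -- integer representatives
  choose! vint hvint using hUD
  set zmin : Fin d → ℤ := vint smin with hzmindef
  set zmax : Fin d → ℤ := vint smax with hzmaxdef
  set M₀ : ℤ := ∑ i, c i * zmin i with hM₀def
  set M₁ : ℤ := ∑ i, c i * zmax i with hM₁def
  have hM₀ : (M₀ : ℝ) = (D:ℝ) * μ := by
    rw [hM₀def, ← linM_toR, ← hvint smin hsminU, map_smul, smul_eq_mul, hμdef]
  have hM₁ : (M₁ : ℝ) = (D:ℝ) * ν := by
    rw [hM₁def, ← linM_toR, ← hvint smax hsmaxU, map_smul, smul_eq_mul, hνdef]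
  -- centroid
  have hNU0 : (0:ℝ) < (U.card : ℝ) := by
    exact_mod_cast Finset.card_pos.mpr hUne
  have h2U : (0:ℝ) < 2*(U.card:ℝ) := by positivity
  set pstar : Fin d → ℝ := (U.card : ℝ)⁻¹ • ∑ y ∈ U, y with hpdef
  have hwconst : ∑ _y ∈ U, (U.card : ℝ)⁻¹ = 1 := by
    rw [Finset.sum_const, nsmul_eq_mul]
    field_simp
  have hpstar : pstar ∈ P := by
    rw [hPU, Finset.convexHull_eq]
    refine ⟨fun _ => (U.card : ℝ)⁻¹, fun y _ => by positivity, hwconst, ?_⟩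
    rw [Finset.centerMass_eq_of_sum_1 _ _ hwconst]
    simp only [id_eq]
    rw [hpdef, Finset.smul_sum]
  set hst : ℝ := linM c pstar with hstdef
  -- the span
  set Vsp : Submodule ℝ (Fin d → ℝ) := Submodule.span ℝ (P - P) with hVdef
  have hPP : ∀ a ∈ P, ∀ b ∈ P, a - b ∈ Vsp :=
    fun a ha b hb => Submodule.subset_span (Set.sub_mem_sub ha hb)
  have hdiffV : ∀ (r : ℝ) (a b : Fin d → ℝ), a ∈ r • P → b ∈ r • P → a - b ∈ Vsp := by
    rintro r a b ⟨p, hp, rfl⟩ ⟨q, hq, rfl⟩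
    rw [← smul_sub]
    exact Submodule.smul_mem _ r (hPP p hp q hq)
  have hUP : ∀ y ∈ U, y ∈ P := fun y hy => hPU ▸ subset_convexHull ℝ _ (Finset.mem_coe.mpr hy)
  -- generating family of V
  set g : {y // y ∈ U} → (Fin d → ℤ) := fun y => vint y.val - zmin with hgdef
  have hgV : ∀ y : {y // y ∈ U}, toR (g y) = (D:ℝ) • (y.val - smin) := by
    intro y
    rw [hgdef]
    simp only
    rw [toR_sub, ← hvint y.val y.2, hzmindef, ← hvint smin hsminU, smul_sub]
  have hVg : Submodule.span ℝ (Set.range fun y : {y // y ∈ U} => toR (g y)) = Vsp := by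
    apply le_antisymm
    · rw [Submodule.span_le]
      rintro _ ⟨y, rfl⟩
      show toR (g y) ∈ Vsp
      rw [hgV y]
      exact Submodule.smul_mem _ _ (hPP y.val (hUP _ y.2) smin (hUP _ hsminU))
    · rw [hVdef, Submodule.span_le]
      rintro x hx
      rw [Set.mem_sub] at hx
      obtain ⟨a, ha, b, hb, rfl⟩ := hx
      obtain ⟨wa, hwa0, hwa1, hwa⟩ := (hmem 1 a).mp (by rw [one_smul]; exact ha)
      obtain ⟨wb, hwb0, hwb1, hwb⟩ := (hmem 1 b).mp (by rw [one_smul]; exact hb)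
      have hwa' : a = ∑ y ∈ U, wa y • y := by
        rw [hwa]; exact Finset.sum_congr rfl fun y _ => by rw [one_mul]
      have hwb' : b = ∑ y ∈ U, wb y • y := by
        rw [hwb]; exact Finset.sum_congr rfl fun y _ => by rw [one_mul]
      have key : a - b = ∑ y ∈ U, (wa y - wb y) • (y - smin) := by
        have e1 : ∀ y ∈ U, (wa y - wb y) • (y - smin)
            = (wa y • y - wb y • y) - (wa y - wb y) • smin := by
          intro y _
          rw [smul_sub, sub_smul]
        rw [Finset.sum_congr rfl e1, Finset.sum_sub_distrib, Finset.sum_sub_distrib,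
            ← Finset.sum_smul, Finset.sum_sub_distrib, hwa1, hwb1, sub_self, zero_smul,
            sub_zero, ← hwa', ← hwb']
      rw [key]
      refine Submodule.sum_mem _ fun y hy => ?_
      have e2 : y - smin = (D:ℝ)⁻¹ • toR (g ⟨y, hy⟩) := by
        rw [hgV ⟨y, hy⟩, inv_smul_smul₀ (ne_of_gt hDr0)]
      rw [e2]
      exact Submodule.smul_mem _ _
        (Submodule.smul_mem _ _ (Submodule.subset_span ⟨⟨y, hy⟩, rfl⟩))
  -- consequences of hlam
  have hlamF : ∀ w : Fin d → ℤ, toR w ∈ Vsp → (lam:ℤ) ∣ (∑ i, c i * w i) := by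
    intro w hw
    have hmem' : (∑ i, c i * w i) ∈ {j : ℤ | ∃ w : Fin d → ℤ,
        ((fun i => (w i : ℝ)) ∈ Submodule.span ℝ (P - P)) ∧ j = ∑ i, c i * w i} :=
      ⟨w, hw, rfl⟩
    rw [hlam] at hmem'
    exact hmem'
  have hlamB : ∃ wl : Fin d → ℤ, toR wl ∈ Vsp ∧ (∑ i, c i * wl i) = (lam:ℤ) := by
    have hmem' : (lam:ℤ) ∈ {j : ℤ | (lam:ℤ) ∣ j} := dvd_refl _
    rw [← hlam] at hmem'
    obtain ⟨w, hw, hval'⟩ := hmem'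
    exact ⟨w, hw, hval'.symm⟩
  -- single residue class
  have hres : ∀ (r : ℝ), ∀ j₁ ∈ AR c (r • P), ∀ j₂ ∈ AR c (r • P), (lam:ℤ) ∣ j₁ - j₂ := by
    rintro r j₁ ⟨x, hx, rfl⟩ j₂ ⟨y, hy, rfl⟩
    have hxy : toR (x - y) ∈ Vsp := by
      rw [toR_sub]
      exact hdiffV r _ _ hx hy
    have hdvd := hlamF (x - y) hxy
    have e : ∑ i, c i * (x - y) i = (∑ i, c i * x i) - ∑ i, c i * y i := by
      rw [← Finset.sum_sub_distrib]
      exact Finset.sum_congr rfl fun i _ => by rw [Pi.sub_apply, mul_sub]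
    rwa [e] at hdvd
  -- interior ball for the V-family
  obtain ⟨ε, hε0, hball⟩ := ball_aux U smin hsminU (fun y : {y // y ∈ U} => toR (g y))
    (fun y => by
      show toR (g y) ∈ _
      rw [hgV y]
      exact Submodule.smul_mem _ _ (Submodule.subset_span ⟨y, rfl⟩))
  -- construction of a lattice point in a dilate
  have hx0 : ∀ n : ℕ, 1 ≤ n → (1:ℝ) ≤ (n:ℝ) * ε →
      (∃ z : Fin d → ℤ, toR z ∈ affineSpan ℝ ((n:ℝ) • P)) →
      ∃ x₀ : Fin d → ℤ, toR x₀ ∈ (n:ℝ) • P := by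
    rintro n hn1 hnε ⟨z, hz⟩
    have hnr0 : (0:ℝ) < (n:ℝ) := by exact_mod_cast hn1
    have hpn : (n:ℝ) • pstar ∈ (n:ℝ) • P := Set.smul_mem_smul_set hpstar
    have hv : (n:ℝ) • pstar - toR z ∈ Vsp := by
      have h1 : (n:ℝ) • pstar -ᵥ toR z ∈ (affineSpan ℝ ((n:ℝ) • P)).direction :=
        AffineSubspace.vsub_mem_direction (subset_affineSpan ℝ _ hpn) hz
      rw [direction_affineSpan, vectorSpan_def] at h1
      have h2 : Submodule.span ℝ (((n:ℝ) • P) -ᵥ ((n:ℝ) • P)) ≤ Vsp := by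
        rw [Submodule.span_le]
        intro x hx
        rw [Set.mem_vsub] at hx
        obtain ⟨a, ha, b, hb, rfl⟩ := hx
        exact hdiffV _ _ _ ha hb
      exact h2 h1
    rw [← hVg] at hv
    obtain ⟨u, θ, hθ, hu, hveq⟩ := round_aux g _ hv
    refine ⟨z + u, ?_⟩
    have h3 : toR z + (toR u + ∑ y : {y // y ∈ U}, θ y • toR (g y)) = (n:ℝ) • pstar := by
      rw [← hveq]
      abel
    have hxeq : toR (z + u) = (n:ℝ) • pstar - ∑ y : {y // y ∈ U}, θ y • toR (g y) := by
      rw [toR_add, eq_sub_iff_add_eq, add_assoc]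
      exact h3
    set θ' : {y // y ∈ U} → ℝ := fun y => -θ y / ((n:ℝ) * ε) with hθ'def
    have hθ'le : ∀ y, |θ' y| ≤ 1 := by
      intro y
      rw [hθ'def]
      simp only
      rw [abs_div, abs_neg, abs_of_pos (by positivity : (0:ℝ) < (n:ℝ) * ε),
        div_le_one (by positivity)]
      exact le_trans (hθ y) hnε
    have hq := hball θ' hθ'le
    rw [← hpdef, ← hPU] at hq
    have e : toR (z + u) = (n:ℝ) • (pstar + ε • ∑ y : {y // y ∈ U}, θ' y • toR (g y)) := by
      have e2 : (n:ℝ) • (ε • ∑ y : {y // y ∈ U}, θ' y • toR (g y))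
          = - ∑ y : {y // y ∈ U}, θ y • toR (g y) := by
        rw [smul_smul, Finset.smul_sum, ← Finset.sum_neg_distrib]
        refine Finset.sum_congr rfl fun y _ => ?_
        rw [smul_smul, ← neg_smul]
        congr 1
        rw [hθ'def]
        field_simp
      rw [hxeq, smul_add, e2, ← sub_eq_add_neg]
    rw [e]
    exact Set.smul_mem_smul_set hq
  -- AR basics
  have hARlb : ∀ (r : ℝ), 0 ≤ r → ∀ j ∈ AR c (r • P), r * μ ≤ (j:ℝ) ∧ (j:ℝ) ≤ r * ν := by
    rintro r hr j ⟨x, hx, rfl⟩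
    have h := hval r hr (toR x) hx
    rwa [linM_toR] at h
  have hbddB : ∀ (r : ℝ), 0 ≤ r → BddBelow (AR c (r • P)) := by
    intro r hr
    exact ⟨⌈r * μ⌉, fun j hj => Int.ceil_le.mpr (hARlb r hr j hj).1⟩
  have hbddA : ∀ (r : ℝ), 0 ≤ r → BddAbove (AR c (r • P)) := by
    intro r hr
    exact ⟨⌊r * ν⌋, fun j hj => Int.le_floor.mpr (hARlb r hr j hj).2⟩
  have hARmem : ∀ (r : ℝ) (x : Fin d → ℤ), toR x ∈ r • P → (∑ i, c i * x i) ∈ AR c (r • P) :=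
    fun r x hx => ⟨x, hx, rfl⟩
  have hDsmin : toR zmin ∈ (D:ℝ) • P := by
    rw [← hvint smin hsminU]
    exact Set.smul_mem_smul_set (hUP smin hsminU)
  have hDsmax : toR zmax ∈ (D:ℝ) • P := by
    rw [← hvint smax hsmaxU]
    exact Set.smul_mem_smul_set (hUP smax hsmaxU)
  rcases Nat.eq_zero_or_pos lam with hlam0 | hlampos
  · -- the degenerate case lam = 0
    subst hlam0
    refine ⟨⌈ε⁻¹⌉₊ + 1, fun n hn hz => ?_⟩
    have hn1 : 1 ≤ n := le_trans (by omega) hn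
    have hnr0 : (0:ℝ) ≤ (n:ℝ) := by positivity
    have hnε : (1:ℝ) ≤ (n:ℝ) * ε := by
      have h1 : (ε⁻¹ : ℝ) ≤ (n:ℝ) := by
        refine le_trans (Nat.le_ceil _) ?_
        exact_mod_cast Nat.le_of_succ_le hn
      calc (1:ℝ) = ε⁻¹ * ε := by field_simp
        _ ≤ (n:ℝ) * ε := mul_le_mul_of_nonneg_right h1 hε0.le
    obtain ⟨x₀, hx₀⟩ := hx0 n hn1 hnε hz
    rw [show ((n + D : ℕ) : ℝ) = (n:ℝ) + (D:ℝ) from by push_cast; ring]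
    have hx₁ : toR (x₀ + zmin) ∈ ((n:ℝ) + (D:ℝ)) • P := by
      rw [toR_add]
      exact hMink (n:ℝ) (D:ℝ) hnr0 hDr0.le (by positivity) _ hx₀ _ hDsmin
    have hgaps0 : ∀ (S : Set ℤ), S.Nonempty → BddBelow S → gapsOf 0 S = ∅ := by
      intro S hS hSb
      ext j
      simp only [gapsOf, Set.mem_diff, Set.mem_setOf_eq, Set.mem_empty_iff_false, iff_false,
        not_and]
      rintro ⟨h1, h2, h3⟩
      rw [Nat.cast_zero, zero_dvd_iff, sub_eq_zero] at h3
      rw [h3]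
      intro h4
      exact h4 (Int.csInf_mem hS hSb)
    refine ⟨⟨_, hARmem _ x₀ hx₀⟩, ⟨_, hARmem _ _ hx₁⟩, hres _, hres _, ?_⟩
    rw [hgaps0 _ ⟨_, hARmem _ x₀ hx₀⟩ (hbddB (n:ℝ) hnr0),
      hgaps0 _ ⟨_, hARmem _ _ hx₁⟩ (hbddB ((n:ℝ) + (D:ℝ)) (by positivity))]
  · -- the main case lam ≥ 1
    obtain ⟨wl, hwlV, hwlval⟩ := hlamB
    have hlamr0 : (0:ℝ) < (lam:ℝ) := by exact_mod_cast hlampos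
    have hlamrnn : (0:ℝ) ≤ (lam:ℝ) := hlamr0.le
    -- μ < ν
    have hμν : μ < ν := by
      rcases lt_or_ge μ ν with h | h
      · exact h
      exfalso
      have hconst : ∀ y ∈ U, linM c y = μ := fun y hy =>
        le_antisymm (le_trans (hsmax y hy) h) (hsmin y hy)
      have hker : Vsp ≤ LinearMap.ker (linM c) := by
        rw [← hVg, Submodule.span_le]
        rintro _ ⟨y, rfl⟩
        show toR (g y) ∈ _
        rw [SetLike.mem_coe, LinearMap.mem_ker, hgV y, map_smul, smul_eq_mul, map_sub,
          hconst y.val y.2, ← hμdef, sub_self, mul_zero]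
      have h0 := hker hwlV
      rw [LinearMap.mem_ker, linM_toR, hwlval] at h0
      exact absurd h0 (by exact_mod_cast hlampos.ne')
    -- the centroid value is strictly between μ and ν
    have hstval : hst = (U.card:ℝ)⁻¹ * ∑ y ∈ U, linM c y := by
      rw [hstdef, hpdef, map_smul, smul_eq_mul, map_sum]
    have hstgt : μ < hst := by
      have h1 : (U.card:ℝ) * μ < ∑ y ∈ U, linM c y := by
        have h2 := Finset.sum_lt_sum (f := fun _ => μ) (g := fun y => linM c y)
          (fun y hy => hsmin y hy) ⟨smax, hsmaxU, hμν⟩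
        calc (U.card:ℝ) * μ = ∑ _y ∈ U, μ := by rw [Finset.sum_const, nsmul_eq_mul]
          _ < ∑ y ∈ U, linM c y := h2
      rw [hstval]
      calc μ = (U.card:ℝ)⁻¹ * ((U.card:ℝ) * μ) := by field_simp
        _ < (U.card:ℝ)⁻¹ * ∑ y ∈ U, linM c y :=
          mul_lt_mul_of_pos_left h1 (inv_pos.mpr hNU0)
    have hstlt : hst < ν := by
      have h1 : (∑ y ∈ U, linM c y) < (U.card:ℝ) * ν := by
        have h2 := Finset.sum_lt_sum (f := fun y => linM c y) (g := fun _ => ν)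
          (fun y hy => hsmax y hy) ⟨smin, hsminU, hμν⟩
        calc ∑ y ∈ U, linM c y < ∑ _y ∈ U, ν := h2
          _ = (U.card:ℝ) * ν := by rw [Finset.sum_const, nsmul_eq_mul]
      rw [hstval]
      calc (U.card:ℝ)⁻¹ * ∑ y ∈ U, linM c y < (U.card:ℝ)⁻¹ * ((U.card:ℝ) * ν) :=
          mul_lt_mul_of_pos_left h1 (inv_pos.mpr hNU0)
        _ = ν := by field_simp
    -- the vertical gaps κ (bottom) and κ' (top)
    obtain ⟨yk, hykG, hyk⟩ := (U.filter (fun y => linM c y ≠ μ)).exists_min_image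
      (fun y => linM c y) ⟨smax, Finset.mem_filter.mpr ⟨hsmaxU, by rw [← hνdef]; exact hμν.ne'⟩⟩
    set κ : ℝ := linM c yk - μ with hκdef
    have hκ0 : 0 < κ := by
      rw [hκdef]
      rcases Finset.mem_filter.mp hykG with ⟨hykU, hykne⟩
      have := hsmin yk hykU
      cases lt_or_eq_of_le this with
      | inl h => linarith
      | inr h => exact absurd h.symm hykne
    have hκle : ∀ y ∈ U, linM c y ≠ μ → κ ≤ linM c y - μ := by
      intro y hy hyne
      have := hyk y (Finset.mem_filter.mpr ⟨hy, hyne⟩)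
      rw [hκdef]
      linarith
    obtain ⟨yk', hykG', hyk'⟩ := (U.filter (fun y => linM c y ≠ ν)).exists_max_image
      (fun y => linM c y) ⟨smin, Finset.mem_filter.mpr ⟨hsminU, by rw [← hμdef]; exact hμν.ne⟩⟩
    set κ' : ℝ := ν - linM c yk' with hκ'def
    have hκ'0 : 0 < κ' := by
      rw [hκ'def]
      rcases Finset.mem_filter.mp hykG' with ⟨hykU, hykne⟩
      have := hsmax yk' hykU
      cases lt_or_eq_of_le this with
      | inl h => linarith
      | inr h => exact absurd h hykne
    have hκ'le : ∀ y ∈ U, linM c y ≠ ν → κ' ≤ ν - linM c y := by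
      intro y hy hyne
      have := hyk' y (Finset.mem_filter.mpr ⟨hy, hyne⟩)
      rw [hκ'def]
      linarith
    -- the kernel family g0
    set g0 : {y // y ∈ U} → (Fin d → ℤ) :=
      fun y => (lam:ℤ) • g y - (∑ i, c i * (g y) i) • wl with hg0def
    have hcg0 : ∀ y, (∑ i, c i * (g0 y) i) = 0 := by
      intro y
      rw [hg0def]
      simp only
      have e : ∀ i, c i * ((lam:ℤ) • g y - (∑ j, c j * (g y) j) • wl) i
          = (lam:ℤ) * (c i * (g y) i) - (∑ j, c j * (g y) j) * (c i * wl i) := by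
        intro i
        simp only [Pi.sub_apply, Pi.smul_apply, smul_eq_mul]
        ring
      rw [Finset.sum_congr rfl fun i _ => e i, Finset.sum_sub_distrib, ← Finset.mul_sum,
        ← Finset.mul_sum, hwlval]
      ring
    have hg0R : ∀ y, toR (g0 y)
        = (lam:ℝ) • toR (g y) - (linM c (toR (g y))) • toR wl := by
      intro y
      rw [hg0def]
      simp only
      rw [toR_sub, toR_zsmul, toR_zsmul, linM_toR]
      norm_cast
    have hg0V : ∀ y, toR (g0 y) ∈ Vsp := by
      intro y
      rw [hg0R y]
      refine Submodule.sub_mem _ (Submodule.smul_mem _ _ ?_) (Submodule.smul_mem _ _ hwlV)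
      rw [← hVg]
      exact Submodule.subset_span ⟨y, rfl⟩
    have hg0ker : ∀ y, linM c (toR (g0 y)) = 0 := by
      intro y
      rw [linM_toR, hcg0 y]
      norm_num
    have hker0 : Submodule.span ℝ (Set.range fun yy : {y // y ∈ U} => toR (g0 yy))
        ≤ LinearMap.ker (linM c) := by
      rw [Submodule.span_le]
      rintro _ ⟨yy, rfl⟩
      show toR (g0 yy) ∈ _
      rw [SetLike.mem_coe, LinearMap.mem_ker]
      exact hg0ker yy
    have hV0span : ∀ v : Fin d → ℝ, v ∈ Vsp → linM c v = 0 →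
        v ∈ Submodule.span ℝ (Set.range fun yy : {y // y ∈ U} => toR (g0 yy)) := by
      intro v hv hv0
      rw [← hVg] at hv
      obtain ⟨a, ha⟩ := (Submodule.mem_span_range_iff_exists_fun ℝ).mp hv
      have hsum : ∑ yy : {y // y ∈ U}, a yy • toR (g0 yy) = (lam:ℝ) • v := by
        have e : ∀ yy : {y // y ∈ U}, a yy • toR (g0 yy)
            = (lam:ℝ) • (a yy • toR (g yy)) - (a yy * linM c (toR (g yy))) • toR wl := by
          intro yy
          rw [hg0R yy, smul_sub, smul_smul, smul_smul, smul_smul]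
          congr 2
          ring
        rw [Finset.sum_congr rfl fun yy _ => e yy, Finset.sum_sub_distrib, ← Finset.smul_sum,
          ha, ← Finset.sum_smul]
        have e2 : ∑ yy : {y // y ∈ U}, a yy * linM c (toR (g yy)) = 0 := by
          have e3 : ∑ yy : {y // y ∈ U}, a yy * linM c (toR (g yy)) = linM c v := by
            rw [← ha, map_sum]
            exact Finset.sum_congr rfl fun yy _ => by rw [map_smul, smul_eq_mul]
          rw [e3, hv0]
        rw [e2, zero_smul, sub_zero]
      have e4 : v = (lam:ℝ)⁻¹ • ∑ yy : {y // y ∈ U}, a yy • toR (g0 yy) := by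
        rw [hsum, inv_smul_smul₀ hlamr0.ne']
      rw [e4]
      exact Submodule.smul_mem _ _ (Submodule.sum_mem _ fun yy _ =>
        Submodule.smul_mem _ _ (Submodule.subset_span ⟨yy, rfl⟩))
    -- ball for the kernel family
    have hVe : Submodule.span ℝ (Set.range fun y : {y // y ∈ U} => (y.val - smin)) = Vsp := by
      apply le_antisymm
      · rw [Submodule.span_le]
        rintro _ ⟨y, rfl⟩
        show y.val - smin ∈ Vsp
        exact hPP _ (hUP _ y.2) _ (hUP _ hsminU)
      · rw [← hVg, Submodule.span_le]
        rintro _ ⟨y, rfl⟩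
        show toR (g y) ∈ _
        rw [SetLike.mem_coe, hgV y]
        exact Submodule.smul_mem _ _ (Submodule.subset_span ⟨y, rfl⟩)
    obtain ⟨ε₀, hε₀0, hball0⟩ := ball_aux U smin hsminU (fun y : {y // y ∈ U} => toR (g0 y))
      (fun y => by rw [hVe]; exact hg0V y)
    -- constants
    set C : ℝ := (ν - μ) / ε₀ + (lam:ℝ) + 1 with hCdef
    have hC0 : 0 < C := by
      have h1 : 0 ≤ (ν - μ) / ε₀ := div_nonneg (by linarith) hε₀0.le
      rw [hCdef]
      linarith
    set W : ℝ := C + (lam:ℝ) + 1 with hWdef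
    have hCW : C ≤ W := by rw [hWdef]; linarith
    have hW0 : 0 < W := by rw [hWdef]; linarith
    -- splitting sums of c-values
    have hsplit : ∀ a b : Fin d → ℤ, (∑ i, c i * (a + b) i)
        = (∑ i, c i * a i) + ∑ i, c i * b i := by
      intro a b
      rw [← Finset.sum_add_distrib]
      exact Finset.sum_congr rfl fun i _ => by rw [Pi.add_apply]; ring
    -- saturation core
    have hCORE : ∀ n' : ℕ, 1 ≤ n' → ∀ s0, s0 ∈ U → ∀ t : ℝ, 0 ≤ t → t ≤ 1 →
        1/ε₀ ≤ t * (n':ℝ) → ∀ (y : Fin d → ℤ) (v : ℤ), (∑ i, c i * y i) = v →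
        ((1 - t) • ((n':ℝ) • s0) + t • ((n':ℝ) • pstar)) - toR y ∈ Vsp →
        linM c ((1 - t) • ((n':ℝ) • s0) + t • ((n':ℝ) • pstar)) = (v:ℝ) →
        v ∈ AR c ((n':ℝ) • P) := by
      intro n' hn' s0 hs0 t ht0 ht1 htn y v hyval hyV hzval
      have hnr : (0:ℝ) < n' := by exact_mod_cast hn'
      have htn0 : 0 < t * (n':ℝ) := lt_of_lt_of_le (by positivity) htn
      have ht0' : 0 < t := by nlinarith
      set zt := (1 - t) • ((n':ℝ) • s0) + t • ((n':ℝ) • pstar) with hztdef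
      have hyker : linM c (zt - toR y) = 0 := by
        rw [map_sub, hzval, linM_toR, hyval, sub_self]
      obtain ⟨u₀, θ, hθ, hu₀, hueq⟩ := round_aux g0 _ (hV0span _ hyV hyker)
      have hcu₀ : (∑ i, c i * u₀ i) = 0 := by
        have h10 := hker0 hu₀
        rw [LinearMap.mem_ker, linM_toR] at h10
        exact_mod_cast h10
      refine ⟨y + u₀, ?_, by rw [hsplit y u₀, hyval, hcu₀, add_zero]⟩
      show toR (y + u₀) ∈ (n':ℝ) • P
      have h8 : toR y + (toR u₀ + ∑ yy : {y // y ∈ U}, θ yy • toR (g0 yy)) = zt := by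
        rw [← hueq]
        abel
      have h7 : toR (y + u₀) = zt - ∑ yy : {y // y ∈ U}, θ yy • toR (g0 yy) := by
        rw [toR_add, eq_sub_iff_add_eq, add_assoc]
        exact h8
      set θ' : {y // y ∈ U} → ℝ := fun yy => -θ yy / (t * (n':ℝ) * ε₀) with hθ'def
      have htne0 : (0:ℝ) < t * (n':ℝ) * ε₀ := mul_pos htn0 hε₀0
      have htne1 : 1 ≤ t * (n':ℝ) * ε₀ := by
        calc (1:ℝ) = (1/ε₀) * ε₀ := by field_simp
          _ ≤ t * (n':ℝ) * ε₀ := mul_le_mul_of_nonneg_right htn hε₀0.le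
      have hθ'le : ∀ yy, |θ' yy| ≤ 1 := by
        intro yy
        rw [hθ'def]
        simp only
        rw [abs_div, abs_neg, abs_of_pos htne0, div_le_one htne0]
        exact le_trans (hθ yy) htne1
      have hq := hball0 θ' hθ'le
      rw [← hpdef, ← hPU] at hq
      have h9 : toR (y + u₀) = (1 - t) • ((n':ℝ) • s0)
          + t • ((n':ℝ) • (pstar + ε₀ • ∑ yy : {y // y ∈ U}, θ' yy • toR (g0 yy))) := by
        have e3 : t • ((n':ℝ) • (ε₀ • ∑ yy : {y // y ∈ U}, θ' yy • toR (g0 yy)))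
            = - ∑ yy : {y // y ∈ U}, θ yy • toR (g0 yy) := by
          rw [smul_smul, smul_smul, Finset.smul_sum, ← Finset.sum_neg_distrib]
          refine Finset.sum_congr rfl fun yy _ => ?_
          rw [smul_smul, ← neg_smul]
          congr 1
          rw [hθ'def]
          field_simp
        have e2 : t • ((n':ℝ) • (pstar + ε₀ • ∑ yy : {y // y ∈ U}, θ' yy • toR (g0 yy)))
            = t • ((n':ℝ) • pstar) - ∑ yy : {y // y ∈ U}, θ yy • toR (g0 yy) := by
          rw [smul_add ((n':ℝ)), smul_add t, e3, ← sub_eq_add_neg]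
        rw [h7, hztdef, e2]
        abel
      rw [h9]
      exact hconv _ (Set.smul_mem_smul_set (hUP s0 hs0)) (Set.smul_mem_smul_set hq)
        (by linarith) ht0 (by ring)
    -- saturation
    have hSAT : ∀ n' : ℕ, 1 ≤ n' → ∀ x₀ : Fin d → ℤ, toR x₀ ∈ (n':ℝ) • P →
        ∀ v : ℤ, (n':ℝ) * μ + C ≤ (v:ℝ) → (v:ℝ) ≤ (n':ℝ) * ν - C →
        (lam:ℤ) ∣ v - (∑ i, c i * x₀ i) → v ∈ AR c ((n':ℝ) • P) := by
      intro n' hn' x₀ hx₀ v hvl hvu hdvd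
      have hnr : (0:ℝ) < n' := by exact_mod_cast hn'
      obtain ⟨k, hk⟩ := hdvd
      set y : Fin d → ℤ := x₀ + k • wl with hydef
      have hyval : (∑ i, c i * y i) = v := by
        rw [hydef, hsplit]
        have e : (∑ i, c i * (k • wl) i) = k * lam := by
          have e1 : ∀ i, c i * (k • wl) i = k * (c i * wl i) := by
            intro i
            simp only [Pi.smul_apply, smul_eq_mul]
            ring
          rw [Finset.sum_congr rfl fun i _ => e1 i, ← Finset.mul_sum, hwlval]
        rw [e]
        linarith [hk]
      have hyVbase : toR y - toR x₀ ∈ Vsp := by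
        rw [hydef, toR_add, toR_zsmul]
        have : toR x₀ + (k:ℝ) • toR wl - toR x₀ = (k:ℝ) • toR wl := by abel
        rw [this]
        exact Submodule.smul_mem _ _ hwlV
      rcases le_or_gt (v:ℝ) ((n':ℝ) * hst) with hvb | hvb
      · -- lower branch
        have hhstμ : 0 < hst - μ := by linarith
        set t : ℝ := ((v:ℝ) - (n':ℝ) * μ) / ((n':ℝ) * (hst - μ)) with htdef
        have ht0 : 0 ≤ t := div_nonneg (by linarith) (by positivity)
        have ht1 : t ≤ 1 := by
          rw [htdef, div_le_one (by positivity)]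
          nlinarith
        have htkey : t * ((n':ℝ) * (hst - μ)) = (v:ℝ) - (n':ℝ) * μ := by
          rw [htdef]
          field_simp
        have htn : 1/ε₀ ≤ t * (n':ℝ) := by
          have h2 : hst - μ ≤ ν - μ := by linarith
          have h3 : C ≤ (v:ℝ) - (n':ℝ)*μ := by linarith
          have h4 : (ν - μ)/ε₀ ≤ C := by
            rw [hCdef]
            linarith
          have h6 : (1/ε₀) * (hst - μ) ≤ (ν - μ)/ε₀ := by
            rw [div_eq_mul_inv (ν - μ), mul_comm (ν - μ), one_div]
            exact mul_le_mul_of_nonneg_left h2 (by positivity)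
          have h5 : 0 ≤ (t * (n':ℝ) - 1/ε₀) * (hst - μ) := by
            have e2 : t * (n':ℝ) * (hst - μ) = (v:ℝ) - (n':ℝ)*μ := by
              rw [← htkey]; ring
            have e : (t * (n':ℝ) - 1/ε₀) * (hst - μ)
                = ((v:ℝ) - (n':ℝ)*μ) - (1/ε₀) * (hst - μ) := by
              rw [sub_mul, e2]
            rw [e, sub_nonneg]
            exact le_trans h6 (le_trans h4 h3)
          exact sub_nonneg.mp ((mul_nonneg_iff_of_pos_right hhstμ).mp h5)
        refine hCORE n' hn' smin hsminU t ht0 ht1 htn y v hyval ?_ ?_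
        · have hztP : (1 - t) • ((n':ℝ) • smin) + t • ((n':ℝ) • pstar) ∈ (n':ℝ) • P :=
            hconv _ (Set.smul_mem_smul_set (hUP smin hsminU))
              (Set.smul_mem_smul_set hpstar) (by linarith) ht0 (by ring)
          have h5 : (1 - t) • ((n':ℝ) • smin) + t • ((n':ℝ) • pstar) - toR x₀ ∈ Vsp :=
            hdiffV (n':ℝ) _ _ hztP hx₀
          have e : (1 - t) • ((n':ℝ) • smin) + t • ((n':ℝ) • pstar) - toR y
              = ((1 - t) • ((n':ℝ) • smin) + t • ((n':ℝ) • pstar) - toR x₀)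
                - (toR y - toR x₀) := by abel
          rw [e]
          exact Submodule.sub_mem _ h5 hyVbase
        · rw [map_add, map_smul, map_smul, map_smul, map_smul, smul_eq_mul, smul_eq_mul,
            smul_eq_mul, smul_eq_mul, ← hμdef, ← hstdef]
          nlinarith [htkey]
      · -- upper branch
        have hhstν : 0 < ν - hst := by linarith
        set t : ℝ := ((n':ℝ) * ν - (v:ℝ)) / ((n':ℝ) * (ν - hst)) with htdef
        have ht0 : 0 ≤ t := div_nonneg (by linarith) (by positivity)
        have ht1 : t ≤ 1 := by
          rw [htdef, div_le_one (by positivity)]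
          nlinarith
        have htkey : t * ((n':ℝ) * (ν - hst)) = (n':ℝ) * ν - (v:ℝ) := by
          rw [htdef]
          field_simp
        have htn : 1/ε₀ ≤ t * (n':ℝ) := by
          have h2 : ν - hst ≤ ν - μ := by linarith
          have h3 : C ≤ (n':ℝ)*ν - (v:ℝ) := by linarith
          have h4 : (ν - μ)/ε₀ ≤ C := by
            rw [hCdef]
            linarith
          have h6 : (1/ε₀) * (ν - hst) ≤ (ν - μ)/ε₀ := by
            rw [div_eq_mul_inv (ν - μ), mul_comm (ν - μ), one_div]
            exact mul_le_mul_of_nonneg_left h2 (by positivity)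
          have h5 : 0 ≤ (t * (n':ℝ) - 1/ε₀) * (ν - hst) := by
            have e2 : t * (n':ℝ) * (ν - hst) = (n':ℝ)*ν - (v:ℝ) := by
              rw [← htkey]; ring
            have e : (t * (n':ℝ) - 1/ε₀) * (ν - hst)
                = ((n':ℝ)*ν - (v:ℝ)) - (1/ε₀) * (ν - hst) := by
              rw [sub_mul, e2]
            rw [e, sub_nonneg]
            exact le_trans h6 (le_trans h4 h3)
          exact sub_nonneg.mp ((mul_nonneg_iff_of_pos_right hhstν).mp h5)
        refine hCORE n' hn' smax hsmaxU t ht0 ht1 htn y v hyval ?_ ?_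
        · have hztP : (1 - t) • ((n':ℝ) • smax) + t • ((n':ℝ) • pstar) ∈ (n':ℝ) • P :=
            hconv _ (Set.smul_mem_smul_set (hUP smax hsmaxU))
              (Set.smul_mem_smul_set hpstar) (by linarith) ht0 (by ring)
          have h5 : (1 - t) • ((n':ℝ) • smax) + t • ((n':ℝ) • pstar) - toR x₀ ∈ Vsp :=
            hdiffV (n':ℝ) _ _ hztP hx₀
          have e : (1 - t) • ((n':ℝ) • smax) + t • ((n':ℝ) • pstar) - toR y
              = ((1 - t) • ((n':ℝ) • smax) + t • ((n':ℝ) • pstar) - toR x₀)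
                - (toR y - toR x₀) := by abel
          rw [e]
          exact Submodule.sub_mem _ h5 hyVbase
        · rw [map_add, map_smul, map_smul, map_smul, map_smul, smul_eq_mul, smul_eq_mul,
            smul_eq_mul, smul_eq_mul, ← hνdef, ← hstdef]
          nlinarith [htkey]
    -- bottom window lemma
    have hWinB : ∀ n' : ℕ, 1 ≤ n' → (2*W ≤ ((n':ℝ) + D) * κ) →
        (2*(U.card:ℝ)*D ≤ (n':ℝ) + D) →
        ∀ x : Fin d → ℤ, toR x ∈ ((n':ℝ) + D) • P →
        linM c (toR x) ≤ ((n':ℝ) + D) * μ + W →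
        ∃ x' : Fin d → ℤ, toR x' ∈ (n':ℝ) • P ∧ (∑ i, c i * x' i) = (∑ i, c i * x i) - M₀ := by
      intro n' hn' hκcond hcard x hx hxval
      have hnr : (0:ℝ) < n' := by exact_mod_cast hn'
      have hnD : (0:ℝ) < (n':ℝ) + D := by positivity
      obtain ⟨w, hw0, hw1, hwx⟩ := (hmem _ _).mp hx
      set F := U.filter (fun y => linM c y = μ) with hF
      set G := U.filter (fun y => ¬ linM c y = μ) with hG
      have hval' : linM c (toR x) = ∑ y ∈ U, (((n':ℝ)+D) * w y) * linM c y := by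
        rw [hwx, map_sum]
        exact Finset.sum_congr rfl fun y _ => by rw [map_smul, smul_eq_mul]
      have hA : linM c (toR x) - ((n':ℝ)+D) * μ
          = ∑ y ∈ U, (((n':ℝ)+D) * w y) * (linM c y - μ) := by
        rw [Finset.sum_congr rfl (fun y _ => mul_sub (((n':ℝ)+D) * w y) (linM c y) μ),
          Finset.sum_sub_distrib, ← Finset.sum_mul, ← Finset.mul_sum, hw1, mul_one, ← hval']
      have hGbound : (((n':ℝ)+D) * κ) * (∑ y ∈ G, w y) ≤ W := by
        have h1 : ∑ y ∈ G, (((n':ℝ)+D) * w y) * (linM c y - μ)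
            ≤ ∑ y ∈ U, (((n':ℝ)+D) * w y) * (linM c y - μ) := by
          refine Finset.sum_le_sum_of_subset_of_nonneg (Finset.filter_subset _ _) ?_
          intro y hy _
          exact mul_nonneg (mul_nonneg hnD.le (hw0 y hy)) (sub_nonneg.mpr (hsmin y hy))
        have h2 : ∀ y ∈ G, ((n':ℝ)+D) * κ * w y
            ≤ (((n':ℝ)+D) * w y) * (linM c y - μ) := by
          intro y hy
          rcases Finset.mem_filter.mp hy with ⟨hyU, hyne⟩
          calc ((n':ℝ)+D) * κ * w y = (((n':ℝ)+D) * w y) * κ := by ring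
            _ ≤ (((n':ℝ)+D) * w y) * (linM c y - μ) :=
              mul_le_mul_of_nonneg_left (hκle y hyU hyne) (mul_nonneg hnD.le (hw0 y hyU))
        calc (((n':ℝ)+D) * κ) * (∑ y ∈ G, w y) = ∑ y ∈ G, ((n':ℝ)+D) * κ * w y := by
              rw [Finset.mul_sum]
          _ ≤ ∑ y ∈ G, (((n':ℝ)+D) * w y) * (linM c y - μ) := Finset.sum_le_sum h2
          _ ≤ ∑ y ∈ U, (((n':ℝ)+D) * w y) * (linM c y - μ) := h1
          _ = linM c (toR x) - ((n':ℝ)+D) * μ := hA.symm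
          _ ≤ W := by linarith only [hxval]
      have hGm : ∑ y ∈ G, w y ≤ 1/2 := by
        have hS0 : (0:ℝ) ≤ ∑ y ∈ G, w y :=
          Finset.sum_nonneg fun y hy => hw0 y (Finset.mem_filter.mp hy).1
        have h7 : (2*W) * (∑ y ∈ G, w y) ≤ W := by
          refine le_trans (mul_le_mul_of_nonneg_right ?_ hS0) hGbound
          exact hκcond
        have h8 : W * (2 * ∑ y ∈ G, w y) ≤ W * 1 := by
          calc W * (2 * ∑ y ∈ G, w y) = (2*W) * (∑ y ∈ G, w y) := by ring
            _ ≤ W := h7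
            _ = W * 1 := by ring
        have h9 := (mul_le_mul_iff_right₀ hW0).mp h8
        linarith only [h9]
      have hFm : (1:ℝ)/2 ≤ ∑ y ∈ F, w y := by
        have hsum : (∑ y ∈ F, w y) + ∑ y ∈ G, w y = 1 := by
          rw [hF, hG, Finset.sum_filter_add_sum_filter_not U _ w, hw1]
        linarith only [hGm, hsum]
      have hFne : F.Nonempty := by
        rcases Finset.eq_empty_or_nonempty F with h | h
        · rw [h, Finset.sum_empty] at hFm
          norm_num at hFm
        · exact h
      obtain ⟨q, hqF, hqmax⟩ := F.exists_max_image w hFne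
      have hqU : q ∈ U := (Finset.mem_filter.mp hqF).1
      have hqμ : linM c q = μ := (Finset.mem_filter.mp hqF).2
      have hwq : 1/(2*(U.card:ℝ)) ≤ w q := by
        have h3 : (∑ y ∈ F, w y) ≤ (F.card : ℝ) * w q := by
          have := Finset.sum_le_card_nsmul F w (w q) (fun y hy => hqmax y hy)
          rwa [nsmul_eq_mul] at this
        have h4 : (F.card:ℝ) ≤ (U.card:ℝ) := by
          exact_mod_cast Finset.card_filter_le U _
        have h5 : (1:ℝ)/2 ≤ (U.card:ℝ) * w q := by
          have h6 : (F.card:ℝ) * w q ≤ (U.card:ℝ) * w q :=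
            mul_le_mul_of_nonneg_right h4 (hw0 q hqU)
          linarith only [hFm, h3, h6]
        rw [div_le_iff₀ h2U]
        linarith only [h5]
      have hwqD : (D:ℝ)/((n':ℝ)+D) ≤ w q := by
        refine le_trans ?_ hwq
        rw [div_le_div_iff₀ hnD h2U]
        calc (D:ℝ) * (2*(U.card:ℝ)) = 2*(U.card:ℝ)*D := by ring
          _ ≤ (n':ℝ) + D := hcard
          _ = 1 * ((n':ℝ) + D) := by ring
      have hx' : toR x - (D:ℝ) • q ∈ (n':ℝ) • P := by
        refine (hmem _ _).mpr ⟨fun y => (((n':ℝ)+D) * w y - (if y = q then (D:ℝ) else 0)) / n',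
          ?_, ?_, ?_⟩
        · intro y hy
          simp only []
          split_ifs with hyq
          · refine div_nonneg (sub_nonneg.mpr ?_) hnr.le
            rw [hyq]
            calc (D:ℝ) = ((D:ℝ)/((n':ℝ)+D)) * ((n':ℝ)+D) := by field_simp
              _ ≤ w q * ((n':ℝ)+D) := mul_le_mul_of_nonneg_right hwqD hnD.le
              _ = ((n':ℝ)+D) * w q := by ring
          · rw [sub_zero]
            exact div_nonneg (mul_nonneg hnD.le (hw0 y hy)) hnr.le
        · simp only []
          rw [← Finset.sum_div, Finset.sum_sub_distrib, ← Finset.mul_sum, hw1,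
            Finset.sum_ite_eq' U q (fun _ => (D:ℝ)), if_pos hqU]
          field_simp
          ring
        · simp only []
          have e : ∀ y ∈ U, ((n':ℝ) * ((((n':ℝ)+D) * w y - (if y = q then (D:ℝ) else 0)) / n')) • y
              = (((n':ℝ)+D) * w y) • y - (if y = q then (D:ℝ) • y else 0) := by
            intro y hy
            rw [mul_comm ((n':ℝ)), div_mul_cancel₀ _ hnr.ne', sub_smul]
            congr 1
            split_ifs with hyq
            · rfl
            · rw [zero_smul]
          rw [Finset.sum_congr rfl e, Finset.sum_sub_distrib,
            Finset.sum_ite_eq' U q (fun y => (D:ℝ) • y), if_pos hqU, ← hwx]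
      refine ⟨x - vint q, ?_, ?_⟩
      · show toR (x - vint q) ∈ _
        rw [toR_sub, ← hvint q hqU]
        exact hx'
      · have hsub : (∑ i, c i * (x - vint q) i)
            = (∑ i, c i * x i) - (∑ i, c i * (vint q) i) := by
          rw [← Finset.sum_sub_distrib]
          exact Finset.sum_congr rfl fun i _ => by rw [Pi.sub_apply]; ring
        have hMq : (∑ i, c i * (vint q) i) = M₀ := by
          have h1 : ((∑ i, c i * (vint q) i : ℤ):ℝ) = (D:ℝ) * μ := by
            rw [← linM_toR, ← hvint q hqU, map_smul, smul_eq_mul, hqμ]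
          have h2 : ((M₀ : ℤ):ℝ) = (D:ℝ)*μ := hM₀
          exact_mod_cast h1.trans h2.symm
        rw [hsub, hMq]
    -- top window lemma
    have hWinT : ∀ n' : ℕ, 1 ≤ n' → (2*W ≤ ((n':ℝ) + D) * κ') →
        (2*(U.card:ℝ)*D ≤ (n':ℝ) + D) →
        ∀ x : Fin d → ℤ, toR x ∈ ((n':ℝ) + D) • P →
        ((n':ℝ) + D) * ν - W ≤ linM c (toR x) →
        ∃ x' : Fin d → ℤ, toR x' ∈ (n':ℝ) • P ∧ (∑ i, c i * x' i) = (∑ i, c i * x i) - M₁ := by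
      intro n' hn' hκcond hcard x hx hxval
      have hnr : (0:ℝ) < n' := by exact_mod_cast hn'
      have hnD : (0:ℝ) < (n':ℝ) + D := by positivity
      obtain ⟨w, hw0, hw1, hwx⟩ := (hmem _ _).mp hx
      set F := U.filter (fun y => linM c y = ν) with hF
      set G := U.filter (fun y => ¬ linM c y = ν) with hG
      have hval' : linM c (toR x) = ∑ y ∈ U, (((n':ℝ)+D) * w y) * linM c y := by
        rw [hwx, map_sum]
        exact Finset.sum_congr rfl fun y _ => by rw [map_smul, smul_eq_mul]
      have hA : ((n':ℝ)+D) * ν - linM c (toR x)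
          = ∑ y ∈ U, (((n':ℝ)+D) * w y) * (ν - linM c y) := by
        rw [Finset.sum_congr rfl (fun y _ => mul_sub (((n':ℝ)+D) * w y) ν (linM c y)),
          Finset.sum_sub_distrib, ← Finset.sum_mul, ← Finset.mul_sum, hw1, mul_one, ← hval']
      have hGbound : (((n':ℝ)+D) * κ') * (∑ y ∈ G, w y) ≤ W := by
        have h1 : ∑ y ∈ G, (((n':ℝ)+D) * w y) * (ν - linM c y)
            ≤ ∑ y ∈ U, (((n':ℝ)+D) * w y) * (ν - linM c y) := by
          refine Finset.sum_le_sum_of_subset_of_nonneg (Finset.filter_subset _ _) ?_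
          intro y hy _
          exact mul_nonneg (mul_nonneg hnD.le (hw0 y hy)) (sub_nonneg.mpr (hsmax y hy))
        have h2 : ∀ y ∈ G, ((n':ℝ)+D) * κ' * w y
            ≤ (((n':ℝ)+D) * w y) * (ν - linM c y) := by
          intro y hy
          rcases Finset.mem_filter.mp hy with ⟨hyU, hyne⟩
          calc ((n':ℝ)+D) * κ' * w y = (((n':ℝ)+D) * w y) * κ' := by ring
            _ ≤ (((n':ℝ)+D) * w y) * (ν - linM c y) :=
              mul_le_mul_of_nonneg_left (hκ'le y hyU hyne) (mul_nonneg hnD.le (hw0 y hyU))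
        calc (((n':ℝ)+D) * κ') * (∑ y ∈ G, w y) = ∑ y ∈ G, ((n':ℝ)+D) * κ' * w y := by
              rw [Finset.mul_sum]
          _ ≤ ∑ y ∈ G, (((n':ℝ)+D) * w y) * (ν - linM c y) := Finset.sum_le_sum h2
          _ ≤ ∑ y ∈ U, (((n':ℝ)+D) * w y) * (ν - linM c y) := h1
          _ = ((n':ℝ)+D) * ν - linM c (toR x) := hA.symm
          _ ≤ W := by linarith only [hxval]
      have hGm : ∑ y ∈ G, w y ≤ 1/2 := by
        have hS0 : (0:ℝ) ≤ ∑ y ∈ G, w y :=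
          Finset.sum_nonneg fun y hy => hw0 y (Finset.mem_filter.mp hy).1
        have h7 : (2*W) * (∑ y ∈ G, w y) ≤ W := by
          refine le_trans (mul_le_mul_of_nonneg_right ?_ hS0) hGbound
          exact hκcond
        have h8 : W * (2 * ∑ y ∈ G, w y) ≤ W * 1 := by
          calc W * (2 * ∑ y ∈ G, w y) = (2*W) * (∑ y ∈ G, w y) := by ring
            _ ≤ W := h7
            _ = W * 1 := by ring
        have h9 := (mul_le_mul_iff_right₀ hW0).mp h8
        linarith only [h9]
      have hFm : (1:ℝ)/2 ≤ ∑ y ∈ F, w y := by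
        have hsum : (∑ y ∈ F, w y) + ∑ y ∈ G, w y = 1 := by
          rw [hF, hG, Finset.sum_filter_add_sum_filter_not U _ w, hw1]
        linarith only [hGm, hsum]
      have hFne : F.Nonempty := by
        rcases Finset.eq_empty_or_nonempty F with h | h
        · rw [h, Finset.sum_empty] at hFm
          norm_num at hFm
        · exact h
      obtain ⟨q, hqF, hqmax⟩ := F.exists_max_image w hFne
      have hqU : q ∈ U := (Finset.mem_filter.mp hqF).1
      have hqν : linM c q = ν := (Finset.mem_filter.mp hqF).2
      have hwq : 1/(2*(U.card:ℝ)) ≤ w q := by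
        have h3 : (∑ y ∈ F, w y) ≤ (F.card : ℝ) * w q := by
          have := Finset.sum_le_card_nsmul F w (w q) (fun y hy => hqmax y hy)
          rwa [nsmul_eq_mul] at this
        have h4 : (F.card:ℝ) ≤ (U.card:ℝ) := by
          exact_mod_cast Finset.card_filter_le U _
        have h5 : (1:ℝ)/2 ≤ (U.card:ℝ) * w q := by
          have h6 : (F.card:ℝ) * w q ≤ (U.card:ℝ) * w q :=
            mul_le_mul_of_nonneg_right h4 (hw0 q hqU)
          linarith only [hFm, h3, h6]
        rw [div_le_iff₀ h2U]
        linarith only [h5]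
      have hwqD : (D:ℝ)/((n':ℝ)+D) ≤ w q := by
        refine le_trans ?_ hwq
        rw [div_le_div_iff₀ hnD h2U]
        calc (D:ℝ) * (2*(U.card:ℝ)) = 2*(U.card:ℝ)*D := by ring
          _ ≤ (n':ℝ) + D := hcard
          _ = 1 * ((n':ℝ) + D) := by ring
      have hx' : toR x - (D:ℝ) • q ∈ (n':ℝ) • P := by
        refine (hmem _ _).mpr ⟨fun y => (((n':ℝ)+D) * w y - (if y = q then (D:ℝ) else 0)) / n',
          ?_, ?_, ?_⟩
        · intro y hy
          simp only []
          split_ifs with hyq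
          · refine div_nonneg (sub_nonneg.mpr ?_) hnr.le
            rw [hyq]
            calc (D:ℝ) = ((D:ℝ)/((n':ℝ)+D)) * ((n':ℝ)+D) := by field_simp
              _ ≤ w q * ((n':ℝ)+D) := mul_le_mul_of_nonneg_right hwqD hnD.le
              _ = ((n':ℝ)+D) * w q := by ring
          · rw [sub_zero]
            exact div_nonneg (mul_nonneg hnD.le (hw0 y hy)) hnr.le
        · simp only []
          rw [← Finset.sum_div, Finset.sum_sub_distrib, ← Finset.mul_sum, hw1,
            Finset.sum_ite_eq' U q (fun _ => (D:ℝ)), if_pos hqU]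
          field_simp
          ring
        · simp only []
          have e : ∀ y ∈ U, ((n':ℝ) * ((((n':ℝ)+D) * w y - (if y = q then (D:ℝ) else 0)) / n')) • y
              = (((n':ℝ)+D) * w y) • y - (if y = q then (D:ℝ) • y else 0) := by
            intro y hy
            rw [mul_comm ((n':ℝ)), div_mul_cancel₀ _ hnr.ne', sub_smul]
            congr 1
            split_ifs with hyq
            · rfl
            · rw [zero_smul]
          rw [Finset.sum_congr rfl e, Finset.sum_sub_distrib,
            Finset.sum_ite_eq' U q (fun y => (D:ℝ) • y), if_pos hqU, ← hwx]
      refine ⟨x - vint q, ?_, ?_⟩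
      · show toR (x - vint q) ∈ _
        rw [toR_sub, ← hvint q hqU]
        exact hx'
      · have hsub : (∑ i, c i * (x - vint q) i)
            = (∑ i, c i * x i) - (∑ i, c i * (vint q) i) := by
          rw [← Finset.sum_sub_distrib]
          exact Finset.sum_congr rfl fun i _ => by rw [Pi.sub_apply]; ring
        have hMq : (∑ i, c i * (vint q) i) = M₁ := by
          have h1 : ((∑ i, c i * (vint q) i : ℤ):ℝ) = (D:ℝ) * ν := by
            rw [← linM_toR, ← hvint q hqU, map_smul, smul_eq_mul, hqν]
          have h2 : ((M₁ : ℤ):ℝ) = (D:ℝ)*ν := hM₁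
          exact_mod_cast h1.trans h2.symm
        rw [hsub, hMq]
    -- choose the threshold
    have hνμ : (0:ℝ) < ν - μ := sub_pos.mpr hμν
    refine ⟨⌈1/ε⌉₊ + ⌈2*W/κ⌉₊ + ⌈2*W/κ'⌉₊ + ⌈2*(U.card:ℝ)*(D:ℝ)⌉₊
      + ⌈(2*C + 2*(lam:ℝ) + 2)/(ν-μ)⌉₊ + 1, fun n hn hz => ?_⟩
    have hn1 : 1 ≤ n := by omega
    have hnr0 : (0:ℝ) < (n:ℝ) := by exact_mod_cast hn1
    have hK1 : 1/ε ≤ (n:ℝ) := Nat.ceil_le.mp (by omega)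
    have hK2 : 2*W/κ ≤ (n:ℝ) := Nat.ceil_le.mp (by omega)
    have hK3 : 2*W/κ' ≤ (n:ℝ) := Nat.ceil_le.mp (by omega)
    have hK4 : 2*(U.card:ℝ)*(D:ℝ) ≤ (n:ℝ) := Nat.ceil_le.mp (by omega)
    have hK5 : (2*C + 2*(lam:ℝ) + 2)/(ν-μ) ≤ (n:ℝ) := Nat.ceil_le.mp (by omega)
    have hnε : (1:ℝ) ≤ (n:ℝ)*ε := (div_le_iff₀ hε0).mp hK1
    have hcondκ : 2*W ≤ ((n:ℝ)+D)*κ := by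
      refine le_trans ((div_le_iff₀ hκ0).mp hK2) ?_
      exact mul_le_mul_of_nonneg_right (by linarith [hDr0]) hκ0.le
    have hcondκ' : 2*W ≤ ((n:ℝ)+D)*κ' := by
      refine le_trans ((div_le_iff₀ hκ'0).mp hK3) ?_
      exact mul_le_mul_of_nonneg_right (by linarith [hDr0]) hκ'0.le
    have hcondcard : 2*(U.card:ℝ)*(D:ℝ) ≤ (n:ℝ)+D := by linarith [hDr0]
    have hsep : 2*C + 2*(lam:ℝ) + 2 ≤ (n:ℝ)*(ν-μ) := (div_le_iff₀ hνμ).mp hK5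
    have hsepD : 2*C + 2*(lam:ℝ) + 2 ≤ ((n:ℝ)+D)*(ν-μ) := by
      refine le_trans hsep ?_
      exact mul_le_mul_of_nonneg_right (by linarith [hDr0]) hνμ.le
    -- lattice points
    obtain ⟨x₀, hx₀⟩ := hx0 n hn1 hnε hz
    have hx₁ : toR (x₀ + zmin) ∈ ((n:ℝ)+D) • P := by
      rw [toR_add]
      exact hMink (n:ℝ) (D:ℝ) hnr0.le hDr0.le (by positivity) _ hx₀ _ hDsmin
    set j₀ : ℤ := ∑ i, c i * x₀ i with hj₀def
    have hj₁ : (∑ i, c i * (x₀ + zmin) i) = j₀ + M₀ := by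
      rw [hsplit, hj₀def, hM₀def]
    have hcastD : ((n + D:ℕ):ℝ) = (n:ℝ) + (D:ℝ) := by push_cast; ring
    rw [hcastD]
    set A := AR c ((n:ℝ) • P) with hAdef
    set B := AR c (((n:ℝ)+(D:ℝ)) • P) with hBdef
    have hj₀A : j₀ ∈ A := hARmem _ x₀ hx₀
    have hj₁B : j₀ + M₀ ∈ B := by
      rw [← hj₁]
      exact hARmem _ _ hx₁
    have hAne : A.Nonempty := ⟨j₀, hj₀A⟩
    have hBne : B.Nonempty := ⟨j₀ + M₀, hj₁B⟩
    -- easy translations A → B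
    have hAddB : ∀ j ∈ A, j + M₀ ∈ B := by
      rintro j ⟨x, hx, rfl⟩
      refine ⟨x + zmin, ?_, ?_⟩
      · show toR (x + zmin) ∈ ((n:ℝ)+(D:ℝ)) • P
        rw [toR_add]
        exact hMink (n:ℝ) (D:ℝ) hnr0.le hDr0.le (by positivity) _ hx _ hDsmin
      · rw [hsplit, hM₀def]
    have hAddT : ∀ j ∈ A, j + M₁ ∈ B := by
      rintro j ⟨x, hx, rfl⟩
      refine ⟨x + zmax, ?_, ?_⟩
      · show toR (x + zmax) ∈ ((n:ℝ)+(D:ℝ)) • P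
        rw [toR_add]
        exact hMink (n:ℝ) (D:ℝ) hnr0.le hDr0.le (by positivity) _ hx _ hDsmax
      · rw [hsplit, hM₁def]
    -- saturation for A and B
    have hSA : ∀ v : ℤ, (n:ℝ)*μ + C ≤ (v:ℝ) → (v:ℝ) ≤ (n:ℝ)*ν - C →
        (lam:ℤ) ∣ v - j₀ → v ∈ A := fun v h1 h2 h3 => hSAT n hn1 x₀ hx₀ v h1 h2 h3
    have hx₁' : toR (x₀ + zmin) ∈ ((n+D:ℕ):ℝ) • P := by
      rw [hcastD]
      exact hx₁
    have hSB : ∀ v : ℤ, ((n:ℝ)+D)*μ + C ≤ (v:ℝ) → (v:ℝ) ≤ ((n:ℝ)+D)*ν - C →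
        (lam:ℤ) ∣ v - (j₀ + M₀) → v ∈ B := by
      intro v h1 h2 h3
      have h := hSAT (n+D) (by omega) _ hx₁' v (by rw [hcastD]; exact h1)
        (by rw [hcastD]; exact h2) (by rw [hj₁]; exact h3)
      rw [hcastD] at h
      exact h
    -- bounds and extremes
    have hAbb : BddBelow A := hbddB (n:ℝ) hnr0.le
    have hAba : BddAbove A := hbddA (n:ℝ) hnr0.le
    have hBbb : BddBelow B := hbddB ((n:ℝ)+D) (by positivity)
    have hBba : BddAbove B := hbddA ((n:ℝ)+D) (by positivity)
    set mA : ℤ := sInf A with hmAdef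
    set MA : ℤ := sSup A with hMAdef
    set mB : ℤ := sInf B with hmBdef
    set MB : ℤ := sSup B with hMBdef
    have hmA : mA ∈ A := Int.csInf_mem hAne hAbb
    have hMA : MA ∈ A := Int.csSup_mem hAne hAba
    have hmB : mB ∈ B := Int.csInf_mem hBne hBbb
    have hMB : MB ∈ B := Int.csSup_mem hBne hBba
    have hmAlb : (n:ℝ)*μ ≤ (mA:ℝ) := (hARlb (n:ℝ) hnr0.le mA hmA).1
    have hMAub : (MA:ℝ) ≤ (n:ℝ)*ν := (hARlb (n:ℝ) hnr0.le MA hMA).2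
    have hmBlb : ((n:ℝ)+D)*μ ≤ (mB:ℝ) := (hARlb ((n:ℝ)+D) (by positivity) mB hmB).1
    have hMBub : (MB:ℝ) ≤ ((n:ℝ)+D)*ν := (hARlb ((n:ℝ)+D) (by positivity) MB hMB).2
    -- elements of A,B near both ends
    have hNEARlow : ∀ (r : ℝ) (x' : Fin d → ℤ) (j' : ℤ), j' = (∑ i, c i * x' i) →
        (∀ v : ℤ, r*μ + C ≤ (v:ℝ) → (v:ℝ) ≤ r*ν - C → (lam:ℤ) ∣ v - j' → v ∈ AR c (r • P)) →
        (2*C + 2*(lam:ℝ) + 2 ≤ r*(ν-μ)) →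
        ∃ v ∈ AR c (r • P), r*μ + C ≤ (v:ℝ) ∧ (v:ℝ) < r*μ + C + lam := by
      intro r x' j' hj' hsat hsepr
      set k : ℤ := ⌈(r*μ + C - (j':ℝ))/(lam:ℝ)⌉ with hkdef
      set v : ℤ := j' + lam * k with hvdef
      have h1 : (r*μ + C - (j':ℝ))/(lam:ℝ) ≤ (k:ℝ) := Int.le_ceil _
      have h2 : r*μ + C - (j':ℝ) ≤ (k:ℝ) * lam := (div_le_iff₀ hlamr0).mp h1
      have h3 : (k:ℝ) < (r*μ + C - (j':ℝ))/(lam:ℝ) + 1 := Int.ceil_lt_add_one _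
      have h4 : (k:ℝ)*lam < r*μ + C - (j':ℝ) + lam := by
        have h5 := mul_lt_mul_of_pos_right h3 hlamr0
        rwa [add_mul, div_mul_cancel₀ _ hlamr0.ne', one_mul] at h5
      have hvr : (v:ℝ) = (j':ℝ) + lam * k := by
        rw [hvdef]
        push_cast
        ring
      have hv1 : r*μ + C ≤ (v:ℝ) := by
        rw [hvr]
        linarith only [h2]
      have hv2 : (v:ℝ) < r*μ + C + lam := by
        rw [hvr]
        linarith only [h4]
      have hv3 : (v:ℝ) ≤ r*ν - C := by
        rw [hvr]
        linarith only [h4, hlamrnn, hsepr]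
      refine ⟨v, hsat v hv1 hv3 ⟨k, by rw [hvdef]; ring⟩, hv1, hv2⟩
    have hNEARhigh : ∀ (r : ℝ) (x' : Fin d → ℤ) (j' : ℤ), j' = (∑ i, c i * x' i) →
        (∀ v : ℤ, r*μ + C ≤ (v:ℝ) → (v:ℝ) ≤ r*ν - C → (lam:ℤ) ∣ v - j' → v ∈ AR c (r • P)) →
        (2*C + 2*(lam:ℝ) + 2 ≤ r*(ν-μ)) →
        ∃ v ∈ AR c (r • P), r*ν - C - lam < (v:ℝ) ∧ (v:ℝ) ≤ r*ν - C := by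
      intro r x' j' hj' hsat hsepr
      set k : ℤ := ⌊(r*ν - C - (j':ℝ))/(lam:ℝ)⌋ with hkdef
      set v : ℤ := j' + lam * k with hvdef
      have h1 : (k:ℝ) ≤ (r*ν - C - (j':ℝ))/(lam:ℝ) := Int.floor_le _
      have h2 : (k:ℝ) * lam ≤ r*ν - C - (j':ℝ) := by
        have h5 := mul_le_mul_of_nonneg_right h1 hlamrnn
        rwa [div_mul_cancel₀ _ hlamr0.ne'] at h5
      have h3 : (r*ν - C - (j':ℝ))/(lam:ℝ) - 1 < (k:ℝ) := Int.sub_one_lt_floor _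
      have h4 : r*ν - C - (j':ℝ) - lam < (k:ℝ)*lam := by
        have h5 := mul_lt_mul_of_pos_right h3 hlamr0
        rwa [sub_mul, div_mul_cancel₀ _ hlamr0.ne', one_mul] at h5
      have hvr : (v:ℝ) = (j':ℝ) + lam * k := by
        rw [hvdef]
        push_cast
        ring
      have hv1 : (v:ℝ) ≤ r*ν - C := by
        rw [hvr]
        linarith only [h2]
      have hv2 : r*ν - C - lam < (v:ℝ) := by
        rw [hvr]
        linarith only [h4]
      have hv3 : r*μ + C ≤ (v:ℝ) := by
        rw [hvr]
        linarith only [h4, hlamrnn, hsepr]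
      refine ⟨v, hsat v hv3 hv1 ⟨k, by rw [hvdef]; ring⟩, hv2, hv1⟩
    obtain ⟨vA, hvAmem, hvA1, hvA2⟩ := hNEARlow (n:ℝ) x₀ j₀ hj₀def hSA hsep
    obtain ⟨vA', hvA'mem, hvA'1, hvA'2⟩ := hNEARhigh (n:ℝ) x₀ j₀ hj₀def hSA hsep
    obtain ⟨vB, hvBmem, hvB1, hvB2⟩ := hNEARlow ((n:ℝ)+D) (x₀ + zmin) (j₀ + M₀) hj₁.symm hSB hsepD
    obtain ⟨vB', hvB'mem, hvB'1, hvB'2⟩ := hNEARhigh ((n:ℝ)+D) (x₀ + zmin) (j₀ + M₀) hj₁.symm hSB hsepD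
    have hmAub : (mA:ℝ) < (n:ℝ)*μ + C + lam := by
      have := csInf_le hAbb hvAmem
      have hc : (mA:ℝ) ≤ (vA:ℝ) := by exact_mod_cast this
      linarith only [hc, hvA2]
    have hMAlb : (n:ℝ)*ν - C - lam < (MA:ℝ) := by
      have := le_csSup hAba hvA'mem
      have hc : (vA':ℝ) ≤ (MA:ℝ) := by exact_mod_cast this
      linarith only [hc, hvA'1]
    have hmBub : (mB:ℝ) < ((n:ℝ)+D)*μ + C + lam := by
      have := csInf_le hBbb hvBmem
      have hc : (mB:ℝ) ≤ (vB:ℝ) := by exact_mod_cast this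
      linarith only [hc, hvB2]
    have hMBlb : ((n:ℝ)+D)*ν - C - lam < (MB:ℝ) := by
      have := le_csSup hBba hvB'mem
      have hc : (vB':ℝ) ≤ (MB:ℝ) := by exact_mod_cast this
      linarith only [hc, hvB'1]
    -- shift of the extremes
    have hmBA : mB = mA + M₀ := by
      apply le_antisymm
      · exact csInf_le hBbb (hAddB mA hmA)
      · obtain ⟨x, hx, hxv⟩ := hmB
        have hxval : linM c (toR x) ≤ ((n:ℝ)+D)*μ + W := by
          rw [linM_toR, ← hxv]
          rw [hWdef]
          linarith only [hmBub, hCW]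
        obtain ⟨x', hx', hval'⟩ := hWinB n hn1 hcondκ hcondcard x hx hxval
        have hmem' : mB - M₀ ∈ A := ⟨x', hx', by rw [hval', ← hxv]⟩
        have := csInf_le hAbb hmem'
        omega
    have hMBA : MB = MA + M₁ := by
      apply le_antisymm
      · obtain ⟨x, hx, hxv⟩ := hMB
        have hxval : ((n:ℝ)+D)*ν - W ≤ linM c (toR x) := by
          rw [linM_toR, ← hxv]
          rw [hWdef]
          linarith only [hMBlb]
        obtain ⟨x', hx', hval'⟩ := hWinT n hn1 hcondκ' hcondcard x hx hxval
        have hmem' : MB - M₁ ∈ A := ⟨x', hx', by rw [hval', ← hxv]⟩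
        have := le_csSup hAba hmem'
        omega
      · exact le_csSup hBba (hAddT MA hMA)
    -- residues
    have hdvdM₁₀ : (lam:ℤ) ∣ M₁ - M₀ := by
      have hV : toR (zmax - zmin) ∈ Vsp := by
        rw [toR_sub, ← hvint smax hsmaxU, ← hvint smin hsminU, ← smul_sub]
        exact Submodule.smul_mem _ _ (hPP smax (hUP _ hsmaxU) smin (hUP _ hsminU))
      have h := hlamF _ hV
      have e : (∑ i, c i * (zmax - zmin) i) = M₁ - M₀ := by
        rw [hM₁def, hM₀def, ← Finset.sum_sub_distrib]
        exact Finset.sum_congr rfl fun i _ => by rw [Pi.sub_apply]; ring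
      rwa [e] at h
    have hdvdmAj₀ : (lam:ℤ) ∣ mA - j₀ := hres _ mA hmA j₀ hj₀A
    have hdvdmBj₁ : (lam:ℤ) ∣ mB - (j₀ + M₀) := hres _ mB hmB (j₀ + M₀) hj₁B
    -- no gaps in the middle
    have hmidA : ∀ j : ℤ, (n:ℝ)*μ + C ≤ (j:ℝ) → (j:ℝ) ≤ (n:ℝ)*ν - C →
        (lam:ℤ) ∣ j - mA → j ∈ A := by
      intro j h1 h2 h3
      refine hSA j h1 h2 ?_
      have h4 := dvd_add h3 hdvdmAj₀
      rwa [sub_add_sub_cancel] at h4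
    have hmidB : ∀ j : ℤ, ((n:ℝ)+D)*μ + C ≤ (j:ℝ) → (j:ℝ) ≤ ((n:ℝ)+D)*ν - C →
        (lam:ℤ) ∣ j - mB → j ∈ B := by
      intro j h1 h2 h3
      refine hSB j h1 h2 ?_
      have h4 := dvd_add h3 hdvdmBj₁
      rwa [sub_add_sub_cancel] at h4
    -- membership in gaps
    have hgapmem : ∀ (S : Set ℤ) (j : ℤ), j ∈ gapsOf lam S ↔
        ((sInf S ≤ j ∧ j ≤ sSup S ∧ (lam:ℤ) ∣ j - sInf S) ∧ j ∉ S) := by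
      intro S j
      simp only [gapsOf, Set.mem_diff, Set.mem_setOf_eq]
    -- gaps lie near the ends
    have hsplitA : ∀ j ∈ gapsOf lam A, (j:ℝ) < (n:ℝ)*μ + C ∨ (n:ℝ)*ν - C < (j:ℝ) := by
      intro j hj
      rw [hgapmem] at hj
      obtain ⟨⟨h1, h2, h3⟩, h4⟩ := hj
      by_contra hcon
      push_neg at hcon
      exact h4 (hmidA j hcon.1 hcon.2 h3)
    have hsplitB : ∀ j ∈ gapsOf lam B, (j:ℝ) < ((n:ℝ)+D)*μ + C ∨ ((n:ℝ)+D)*ν - C < (j:ℝ) := by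
      intro j hj
      rw [hgapmem] at hj
      obtain ⟨⟨h1, h2, h3⟩, h4⟩ := hj
      by_contra hcon
      push_neg at hcon
      exact h4 (hmidB j hcon.1 hcon.2 h3)
    -- the bijection
    set f : ℤ → ℤ := fun j => if (j:ℝ) < (n:ℝ)*μ + C then j + M₀ else j + M₁ with hfdef
    have hMaps : ∀ j ∈ gapsOf lam A, f j ∈ gapsOf lam B := by
      intro j hj
      have hj' := hj
      rw [hgapmem] at hj'
      obtain ⟨⟨h1, h2, h3⟩, h4⟩ := hj'
      have h1r : (mA:ℝ) ≤ (j:ℝ) := by exact_mod_cast h1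
      have h2r : (j:ℝ) ≤ (MA:ℝ) := by exact_mod_cast h2
      rcases hsplitA j hj with hlow | hhigh
      · have hfj : f j = j + M₀ := if_pos hlow
        rw [hfj, hgapmem]
        refine ⟨⟨?_, ?_, ?_⟩, ?_⟩
        · rw [← hmBdef, hmBA]
          omega
        · rw [← hMBdef]
          have hr : ((j + M₀ : ℤ):ℝ) ≤ (MB:ℝ) := by
            push_cast
            rw [hM₀]
            linarith only [hlow, hMBlb, hsepD, hM₀, hlamrnn]
          exact_mod_cast hr
        · rw [← hmBdef, hmBA]
          have e : j + M₀ - (mA + M₀) = j - mA := by ring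
          rw [e]
          exact h3
        · intro hmem
          obtain ⟨x, hx, hxv⟩ := hmem
          have hxval : linM c (toR x) ≤ ((n:ℝ)+D)*μ + W := by
            rw [linM_toR, ← hxv]
            push_cast
            rw [hWdef, hM₀]
            linarith only [hlow, hlamrnn]
          obtain ⟨x', hx', hval'⟩ := hWinB n hn1 hcondκ hcondcard x hx hxval
          refine h4 ⟨x', hx', ?_⟩
          rw [hval', ← hxv]
          ring
      · have hnlow : ¬ ((j:ℝ) < (n:ℝ)*μ + C) := by
          push_neg
          linarith only [hhigh, hsep, hlamrnn]
        have hfj : f j = j + M₁ := if_neg hnlow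
        rw [hfj, hgapmem]
        refine ⟨⟨?_, ?_, ?_⟩, ?_⟩
        · rw [← hmBdef, hmBA]
          have hr : ((mA + M₀ : ℤ):ℝ) ≤ ((j + M₁ : ℤ):ℝ) := by
            push_cast
            rw [hM₀, hM₁]
            linarith only [hmAub, hhigh, hsepD, hlamrnn, hsep]
          exact_mod_cast hr
        · rw [← hMBdef, hMBA]
          omega
        · rw [← hmBdef, hmBA]
          have e : j + M₁ - (mA + M₀) = (j - mA) + (M₁ - M₀) := by ring
          rw [e]
          exact dvd_add h3 hdvdM₁₀
        · intro hmem
          obtain ⟨x, hx, hxv⟩ := hmem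
          have hxval : ((n:ℝ)+D)*ν - W ≤ linM c (toR x) := by
            rw [linM_toR, ← hxv]
            push_cast
            rw [hWdef, hM₁]
            linarith only [hhigh, hlamrnn, hC0]
          obtain ⟨x', hx', hval'⟩ := hWinT n hn1 hcondκ' hcondcard x hx hxval
          refine h4 ⟨x', hx', ?_⟩
          rw [hval', ← hxv]
          ring
    have hInj : Set.InjOn f (gapsOf lam A) := by
      intro j hj j' hj' heq
      rcases hsplitA j hj with hl | hh <;> rcases hsplitA j' hj' with hl' | hh'
      · rw [hfdef] at heq
        simp only [if_pos hl, if_pos hl'] at heq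
        omega
      · exfalso
        rw [hfdef] at heq
        have hnlow' : ¬ ((j':ℝ) < (n:ℝ)*μ + C) := by
          push_neg
          linarith only [hh', hsep, hlamrnn]
        simp only [if_pos hl, if_neg hnlow'] at heq
        have : ((j + M₀ : ℤ):ℝ) = ((j' + M₁ : ℤ):ℝ) := by exact_mod_cast heq
        push_cast at this
        rw [hM₀, hM₁] at this
        linarith only [this, hl, hh', hsepD, hlamrnn, hDr0]
      · exfalso
        rw [hfdef] at heq
        have hnlow : ¬ ((j:ℝ) < (n:ℝ)*μ + C) := by
          push_neg
          linarith only [hh, hsep, hlamrnn]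
        simp only [if_neg hnlow, if_pos hl'] at heq
        have : ((j + M₁ : ℤ):ℝ) = ((j' + M₀ : ℤ):ℝ) := by exact_mod_cast heq
        push_cast at this
        rw [hM₀, hM₁] at this
        linarith only [this, hl', hh, hsepD, hlamrnn, hDr0]
      · rw [hfdef] at heq
        have hnlow : ¬ ((j:ℝ) < (n:ℝ)*μ + C) := by
          push_neg
          linarith only [hh, hsep, hlamrnn]
        have hnlow' : ¬ ((j':ℝ) < (n:ℝ)*μ + C) := by
          push_neg
          linarith only [hh', hsep, hlamrnn]
        simp only [if_neg hnlow, if_neg hnlow'] at heq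
        omega
    have hSurj : ∀ j' ∈ gapsOf lam B, ∃ j ∈ gapsOf lam A, f j = j' := by
      intro j' hj'
      have hj'' := hj'
      rw [hgapmem] at hj''
      obtain ⟨⟨h1, h2, h3⟩, h4⟩ := hj''
      rw [← hmBdef] at h1 h3
      rw [← hMBdef] at h2
      have h1r : (mB:ℝ) ≤ (j':ℝ) := by exact_mod_cast h1
      have h2r : (j':ℝ) ≤ (MB:ℝ) := by exact_mod_cast h2
      rcases hsplitB j' hj' with hlow | hhigh
      · refine ⟨j' - M₀, ?_, ?_⟩
        · rw [hgapmem]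
          refine ⟨⟨?_, ?_, ?_⟩, ?_⟩
          · rw [← hmAdef]
            omega
          · rw [← hMAdef]
            have hr : ((j' - M₀ : ℤ):ℝ) ≤ (MA:ℝ) := by
              push_cast
              rw [hM₀]
              linarith only [hlow, hMAlb, hsep, hlamrnn]
            exact_mod_cast hr
          · rw [← hmAdef]
            have e : j' - M₀ - mA = j' - mB := by omega
            rw [e]
            exact h3
          · intro hmem
            refine h4 ?_
            have := hAddB _ hmem
            have e : j' - M₀ + M₀ = j' := by ring
            rwa [e] at this
        · have hcond : ((j' - M₀ : ℤ):ℝ) < (n:ℝ)*μ + C := by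
            push_cast
            rw [hM₀]
            linarith only [hlow]
          rw [hfdef]
          simp only [if_pos hcond]
          ring
      · refine ⟨j' - M₁, ?_, ?_⟩
        · rw [hgapmem]
          refine ⟨⟨?_, ?_, ?_⟩, ?_⟩
          · rw [← hmAdef]
            have hr : (mA:ℝ) ≤ ((j' - M₁ : ℤ):ℝ) := by
              push_cast
              rw [hM₁]
              linarith only [hhigh, hmAub, hsep, hlamrnn]
            exact_mod_cast hr
          · rw [← hMAdef]
            omega
          · rw [← hmAdef]
            have e : j' - M₁ - mA = (j' - mB) - (M₁ - M₀) := by omega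
            rw [e]
            exact dvd_sub h3 hdvdM₁₀
          · intro hmem
            refine h4 ?_
            have := hAddT _ hmem
            have e : j' - M₁ + M₁ = j' := by ring
            rwa [e] at this
        · have hcond : ¬ (((j' - M₁ : ℤ):ℝ) < (n:ℝ)*μ + C) := by
            push_neg
            push_cast
            rw [hM₁]
            linarith only [hhigh, hsep, hlamrnn]
          rw [hfdef]
          simp only [if_neg hcond]
          ring
    -- conclude
    have hGAfin : (gapsOf lam A).Finite := by
      refine Set.Finite.subset (Set.finite_Icc mA MA) ?_
      intro j hj
      rw [hgapmem] at hj
      exact ⟨hj.1.1, hj.1.2.1⟩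
    have himage : f '' (gapsOf lam A) = gapsOf lam B := by
      apply Set.Subset.antisymm
      · rintro _ ⟨j, hj, rfl⟩
        exact hMaps j hj
      · intro j' hj'
        obtain ⟨j, hj, hfj⟩ := hSurj j' hj'
        exact ⟨j, hj, hfj⟩
    refine ⟨hAne, hBne, hres _, hres _, ?_⟩
    rw [← himage, Set.ncard_image_of_injOn hInj]
end

section
/- Let P ⊆ ℝ^d be a rational polytope with denominator D and let c ∈ ℤ^d be nonzero. Then there exists an integer N such that for all integers t₁, t₂ ≥ N with t₁ ≡ t₂ (mod D) and with t₁P ∩ ℤ^d and t₂P ∩ ℤ^d both nonempty, one has I_M(t₁P, c) = I_M(t₂P, c) and I_m(t₁P, c) = I_m(t₂P, c); that is, the additive integrality gaps of nP in direction c are eventually periodic in n with period dividing D. -/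
open Pointwise

/-- The maximum additive integrality gap
`I_M(K, c) = max_{x ∈ K} c·x − max_{x ∈ K ∩ ℤ^d} c·x`. -/
noncomputable def IMax {d : ℕ} (K : Set (Fin d → ℝ)) (c : Fin d → ℤ) : ℝ :=
  sSup ((fun x : Fin d → ℝ => ∑ i, (c i : ℝ) * x i) '' K) - ((sSup (AR c K) : ℤ) : ℝ)

/-- The minimum additive integrality gap
`I_m(K, c) = min_{x ∈ K ∩ ℤ^d} c·x − min_{x ∈ K} c·x`. -/
noncomputable def IMin {d : ℕ} (K : Set (Fin d → ℝ)) (c : Fin d → ℤ) : ℝ :=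
  ((sInf (AR c K) : ℤ) : ℝ) - sInf ((fun x : Fin d → ℝ => ∑ i, (c i : ℝ) * x i) '' K)

namespace IGPaux

variable {d : ℕ}

theorem isLinearMap_dot (c : Fin d → ℤ) :
    IsLinearMap ℝ (fun x : Fin d → ℝ => ∑ i, (c i : ℝ) * x i) := by
  constructor
  · intro x y
    simp [mul_add, Finset.sum_add_distrib]
  · intro t x
    simp [Finset.mul_sum, mul_left_comm]

theorem exists_isGreatest (c : Fin d → ℤ) (S : Set (Fin d → ℝ)) (hfin : S.Finite)
    (hne : S.Nonempty) :
    ∃ s ∈ S, IsGreatest ((fun x : Fin d → ℝ => ∑ i, (c i : ℝ) * x i) '' convexHull ℝ S)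
      (∑ i, (c i : ℝ) * s i) := by
  set f := fun x : Fin d → ℝ => ∑ i, (c i : ℝ) * x i with hf
  obtain ⟨s, hsF, hmax⟩ := hfin.toFinset.exists_max_image f (by simpa using hne)
  rw [Set.Finite.mem_toFinset] at hsF
  refine ⟨s, hsF, ⟨⟨s, subset_convexHull ℝ S hsF, rfl⟩, ?_⟩⟩
  rintro y ⟨x, hx, rfl⟩
  have hsub : convexHull ℝ S ⊆ {w | f w ≤ f s} :=
    convexHull_min (fun a ha => hmax a (hfin.mem_toFinset.2 ha))
      (convex_halfSpace_le (isLinearMap_dot c) _)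
  exact hsub hx

theorem exists_isLeast (c : Fin d → ℤ) (S : Set (Fin d → ℝ)) (hfin : S.Finite)
    (hne : S.Nonempty) :
    ∃ s ∈ S, IsLeast ((fun x : Fin d → ℝ => ∑ i, (c i : ℝ) * x i) '' convexHull ℝ S)
      (∑ i, (c i : ℝ) * s i) := by
  set f := fun x : Fin d → ℝ => ∑ i, (c i : ℝ) * x i with hf
  obtain ⟨s, hsF, hmin⟩ := hfin.toFinset.exists_min_image f (by simpa using hne)
  rw [Set.Finite.mem_toFinset] at hsF
  refine ⟨s, hsF, ⟨⟨s, subset_convexHull ℝ S hsF, rfl⟩, ?_⟩⟩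
  rintro y ⟨x, hx, rfl⟩
  have hsub : convexHull ℝ S ⊆ {w | f s ≤ f w} :=
    convexHull_min (fun a ha => hmin a (hfin.mem_toFinset.2 ha))
      (convex_halfSpace_ge (isLinearMap_dot c) _)
  exact hsub hx

theorem sSup_image_add (f : (Fin d → ℝ) → ℝ) (hf : IsLinearMap ℝ f)
    (A B : Set (Fin d → ℝ)) (hA : A.Nonempty)
    (hbA : BddAbove (f '' A)) (hbAB : BddAbove (f '' (A + B)))
    {b : ℝ} (hb : IsGreatest (f '' B) b) :
    sSup (f '' (A + B)) = sSup (f '' A) + b := by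
  obtain ⟨zb, hzb, hfzb⟩ := hb.1
  apply le_antisymm
  · apply csSup_le ((hA.add ⟨zb, hzb⟩).image f)
    rintro y ⟨x, hx, rfl⟩
    rw [Set.mem_add] at hx
    obtain ⟨a, ha, z, hz, rfl⟩ := hx
    rw [hf.map_add]
    exact add_le_add (le_csSup hbA ⟨a, ha, rfl⟩) (hb.2 ⟨z, hz, rfl⟩)
  · have h1 : sSup (f '' A) ≤ sSup (f '' (A + B)) - b := by
      apply csSup_le (hA.image f)
      rintro y ⟨a, ha, rfl⟩
      have h2 : f a + b ≤ sSup (f '' (A + B)) := by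
        rw [← hfzb, ← hf.map_add]
        exact le_csSup hbAB ⟨a + zb, Set.add_mem_add ha hzb, rfl⟩
      linarith
    linarith

theorem sInf_image_add (f : (Fin d → ℝ) → ℝ) (hf : IsLinearMap ℝ f)
    (A B : Set (Fin d → ℝ)) (hA : A.Nonempty)
    (hbA : BddBelow (f '' A)) (hbAB : BddBelow (f '' (A + B)))
    {b : ℝ} (hb : IsLeast (f '' B) b) :
    sInf (f '' (A + B)) = sInf (f '' A) + b := by
  obtain ⟨zb, hzb, hfzb⟩ := hb.1
  apply le_antisymm
  · have h1 : sInf (f '' (A + B)) - b ≤ sInf (f '' A) := by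
      apply le_csInf (hA.image f)
      rintro y ⟨a, ha, rfl⟩
      have h2 : sInf (f '' (A + B)) ≤ f a + b := by
        rw [← hfzb, ← hf.map_add]
        exact csInf_le hbAB ⟨a + zb, Set.add_mem_add ha hzb, rfl⟩
      linarith
    linarith
  · apply le_csInf ((hA.add ⟨zb, hzb⟩).image f)
    rintro y ⟨x, hx, rfl⟩
    rw [Set.mem_add] at hx
    obtain ⟨a, ha, z, hz, rfl⟩ := hx
    rw [hf.map_add]
    exact add_le_add (csInf_le hbA ⟨a, ha, rfl⟩) (hb.2 ⟨z, hz, rfl⟩)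

theorem int_seq_eventually_const_of_monotone (B : ℕ → ℤ) (hmono : Monotone B) (M : ℤ)
    (hbd : ∀ k, B k ≤ M) : ∃ K, ∀ k, K ≤ k → B k = B K := by
  have hne : (Set.range B).Nonempty := ⟨B 0, 0, rfl⟩
  have hbdd : BddAbove (Set.range B) := ⟨M, by rintro y ⟨k, rfl⟩; exact hbd k⟩
  obtain ⟨K, hK⟩ := Int.csSup_mem hne hbdd
  exact ⟨K, fun k hk => le_antisymm (hK ▸ le_csSup hbdd ⟨k, rfl⟩) (hmono hk)⟩

theorem int_seq_eventually_const_of_antitone (B : ℕ → ℤ) (hanti : Antitone B) (M : ℤ)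
    (hbd : ∀ k, M ≤ B k) : ∃ K, ∀ k, K ≤ k → B k = B K := by
  obtain ⟨K, hK⟩ := int_seq_eventually_const_of_monotone (fun k => -B k)
    (fun a b hab => neg_le_neg (hanti hab)) (-M) (fun k => neg_le_neg (hbd k))
  exact ⟨K, fun k hk => by have := hK k hk; omega⟩

end IGPaux

/-- for a rational polytope `P` with denominator `D` and a nonzero
`c ∈ ℤ^d`, the additive integrality gaps of the dilates `nP` in direction `c` are
eventually periodic in `n` with period dividing `D`. -/
theorem integrality_gaps_eventually_periodic {d : ℕ} (P : Set (Fin d → ℝ))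
    (hP : IsRatPolytope P) (D : ℕ) (hD : IsDenom P D) (c : Fin d → ℤ) (hc : c ≠ 0) :
    ∃ N : ℕ, ∀ t₁ t₂ : ℕ, N ≤ t₁ → N ≤ t₂ → t₁ % D = t₂ % D →
      (intPts ((t₁ : ℝ) • P)).Nonempty → (intPts ((t₂ : ℝ) • P)).Nonempty →
      IMax ((t₁ : ℝ) • P) c = IMax ((t₂ : ℝ) • P) c ∧
      IMin ((t₁ : ℝ) • P) c = IMin ((t₂ : ℝ) • P) c := by
  classical
  obtain ⟨V, hVne, hPeq⟩ := hP
  obtain ⟨hDpos, ⟨W, hWne, hWeq⟩, -⟩ := hD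
  set f : (Fin d → ℝ) → ℝ := fun x => ∑ i, (c i : ℝ) * x i with hf_def
  have hf : IsLinearMap ℝ f := IGPaux.isLinearMap_dot c
  have hPconv : Convex ℝ P := by rw [hPeq]; exact convex_convexHull ℝ _
  have hPne : P.Nonempty := by
    obtain ⟨v, hv⟩ := hVne
    rw [hPeq]
    exact ⟨_, subset_convexHull ℝ _ ⟨v, by simpa using hv, rfl⟩⟩
  have hPcomp : IsCompact P := by
    rw [hPeq]
    exact Set.Finite.isCompact_convexHull (𝕜 := ℝ) (hs := V.finite_toSet.image _)
  have hfc : Continuous f :=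
    continuous_finset_sum _ fun i _ => (continuous_const.mul (continuous_apply i))
  have hcomp : ∀ t : ℕ, IsCompact ((t : ℝ) • P) := fun t => hPcomp.smul _
  have htne : ∀ t : ℕ, ((t : ℝ) • P).Nonempty := fun t => hPne.smul_set
  have hbddA : ∀ t : ℕ, BddAbove (f '' ((t : ℝ) • P)) := fun t => ((hcomp t).image hfc).bddAbove
  have hbddB : ∀ t : ℕ, BddBelow (f '' ((t : ℝ) • P)) := fun t => ((hcomp t).image hfc).bddBelow
  have hARval : ∀ (K : Set (Fin d → ℝ)), ∀ a ∈ AR c K, (a : ℝ) ∈ f '' K := by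
    rintro K a ⟨x, hx, rfl⟩
    refine ⟨fun i => ((x i : ℤ) : ℝ), hx, ?_⟩
    push_cast
    ring
  have hARne : ∀ (K : Set (Fin d → ℝ)), (intPts K).Nonempty → (AR c K).Nonempty := by
    rintro K ⟨x, hx⟩
    exact ⟨_, x, hx, rfl⟩
  have hARbddA : ∀ t : ℕ, BddAbove (AR c ((t : ℝ) • P)) := by
    intro t
    refine ⟨⌈sSup (f '' ((t : ℝ) • P))⌉, fun a ha => ?_⟩
    have h1 : (a : ℝ) ≤ sSup (f '' ((t : ℝ) • P)) := le_csSup (hbddA t) (hARval _ a ha)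
    exact_mod_cast h1.trans (Int.le_ceil _)
  have hARbddB : ∀ t : ℕ, BddBelow (AR c ((t : ℝ) • P)) := by
    intro t
    refine ⟨⌊sInf (f '' ((t : ℝ) • P))⌋, fun a ha => ?_⟩
    have h1 : sInf (f '' ((t : ℝ) • P)) ≤ (a : ℝ) := csInf_le (hbddB t) (hARval _ a ha)
    exact_mod_cast (Int.floor_le _).trans h1
  -- the maximizing and minimizing integer points of D • P
  have hSWfin : ((fun v : Fin d → ℤ => fun i => ((v i : ℤ) : ℝ)) '' (W : Set (Fin d → ℤ))).Finite :=
    W.finite_toSet.image _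
  have hSWne : ((fun v : Fin d → ℤ => fun i => ((v i : ℤ) : ℝ)) '' (W : Set (Fin d → ℤ))).Nonempty := by
    obtain ⟨w, hw⟩ := hWne
    exact ⟨_, w, by simpa using hw, rfl⟩
  obtain ⟨wR, hwRmem, hwMax0⟩ := IGPaux.exists_isGreatest c _ hSWfin hSWne
  obtain ⟨wM, hwMW, rfl⟩ := hwRmem
  rw [← hWeq] at hwMax0
  set cwM : ℤ := ∑ i, c i * wM i with hcwM_def
  have hwMax : IsGreatest (f '' ((D : ℝ) • P)) ((cwM : ℝ)) := by
    convert hwMax0 using 2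
    rw [hcwM_def]; push_cast; ring
  have hwMP : (fun i => ((wM i : ℤ) : ℝ)) ∈ (D : ℝ) • P := by
    rw [hWeq]
    exact subset_convexHull ℝ _ ⟨wM, by simpa using hwMW, rfl⟩
  obtain ⟨wR', hwRmem', hwMin0⟩ := IGPaux.exists_isLeast c _ hSWfin hSWne
  obtain ⟨wm, hwmW, rfl⟩ := hwRmem'
  rw [← hWeq] at hwMin0
  set cwm : ℤ := ∑ i, c i * wm i with hcwm_def
  have hwMin : IsLeast (f '' ((D : ℝ) • P)) ((cwm : ℝ)) := by
    convert hwMin0 using 2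
    rw [hcwm_def]; push_cast; ring
  have hwmP : (fun i => ((wm i : ℤ) : ℝ)) ∈ (D : ℝ) • P := by
    rw [hWeq]
    exact subset_convexHull ℝ _ ⟨wm, by simpa using hwmW, rfl⟩
  -- splitting dilates
  have hsplit : ∀ t : ℕ, ((t + D : ℕ) : ℝ) • P = (t : ℝ) • P + (D : ℝ) • P := by
    intro t
    push_cast
    exact hPconv.add_smul (by positivity) (by positivity)
  set Fmax : ℕ → ℝ := fun t => sSup (f '' ((t : ℝ) • P)) with hFmax_def
  set Fmin : ℕ → ℝ := fun t => sInf (f '' ((t : ℝ) • P)) with hFmin_def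
  set Az : ℕ → ℤ := fun t => sSup (AR c ((t : ℝ) • P)) with hAz_def
  set Iz : ℕ → ℤ := fun t => sInf (AR c ((t : ℝ) • P)) with hIz_def
  have hIMax : ∀ t : ℕ, IMax ((t : ℝ) • P) c = Fmax t - (Az t : ℝ) := fun t => rfl
  have hIMin : ∀ t : ℕ, IMin ((t : ℝ) • P) c = (Iz t : ℝ) - Fmin t := fun t => rfl
  have hFmaxstep : ∀ t : ℕ, Fmax (t + D) = Fmax t + (cwM : ℝ) := by
    intro t
    show sSup (f '' (((t + D : ℕ) : ℝ) • P)) = _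
    rw [hsplit t]
    exact IGPaux.sSup_image_add f hf _ _ (htne t) (hbddA t)
      (by rw [← hsplit t]; exact hbddA (t + D)) hwMax
  have hFminstep : ∀ t : ℕ, Fmin (t + D) = Fmin t + (cwm : ℝ) := by
    intro t
    show sInf (f '' (((t + D : ℕ) : ℝ) • P)) = _
    rw [hsplit t]
    exact IGPaux.sInf_image_add f hf _ _ (htne t) (hbddB t)
      (by rw [← hsplit t]; exact hbddB (t + D)) hwMin
  have hstep_mem : ∀ (w : Fin d → ℤ), (fun i => ((w i : ℤ) : ℝ)) ∈ (D : ℝ) • P →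
      ∀ t : ℕ, ∀ x ∈ intPts ((t : ℝ) • P), x + w ∈ intPts (((t + D : ℕ) : ℝ) • P) := by
    intro w hw t x hx
    show (fun i => (((x + w) i : ℤ) : ℝ)) ∈ ((t + D : ℕ) : ℝ) • P
    rw [hsplit t]
    have heq : (fun i => (((x + w) i : ℤ) : ℝ))
        = (fun i => ((x i : ℤ) : ℝ)) + (fun i => ((w i : ℤ) : ℝ)) := by
      funext i; simp
    rw [heq]
    exact Set.add_mem_add hx hw
  have hAzstep : ∀ t : ℕ, (intPts ((t : ℝ) • P)).Nonempty → Az t + cwM ≤ Az (t + D) := by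
    intro t ht
    obtain ⟨x, hx, hxv⟩ : Az t ∈ AR c ((t : ℝ) • P) :=
      Int.csSup_mem (hARne _ ht) (hARbddA t)
    have hmem : Az t + cwM ∈ AR c (((t + D : ℕ) : ℝ) • P) := by
      refine ⟨x + wM, hstep_mem wM hwMP t x hx, ?_⟩
      rw [hxv, hcwM_def]
      simp [Pi.add_apply, mul_add, Finset.sum_add_distrib]
    exact le_csSup (hARbddA (t + D)) hmem
  have hIzstep : ∀ t : ℕ, (intPts ((t : ℝ) • P)).Nonempty → Iz (t + D) ≤ Iz t + cwm := by
    intro t ht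
    obtain ⟨x, hx, hxv⟩ : Iz t ∈ AR c ((t : ℝ) • P) :=
      Int.csInf_mem (hARne _ ht) (hARbddB t)
    have hmem : Iz t + cwm ∈ AR c (((t + D : ℕ) : ℝ) • P) := by
      refine ⟨x + wm, hstep_mem wm hwmP t x hx, ?_⟩
      rw [hxv, hcwm_def]
      simp [Pi.add_apply, mul_add, Finset.sum_add_distrib]
    exact csInf_le (hARbddB (t + D)) hmem
  have hAzle : ∀ t : ℕ, (intPts ((t : ℝ) • P)).Nonempty → (Az t : ℝ) ≤ Fmax t := by
    intro t ht
    exact le_csSup (hbddA t) (hARval _ _ (Int.csSup_mem (hARne _ ht) (hARbddA t)))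
  have hIzge : ∀ t : ℕ, (intPts ((t : ℝ) • P)).Nonempty → Fmin t ≤ (Iz t : ℝ) := by
    intro t ht
    exact csInf_le (hbddB t) (hARval _ _ (Int.csInf_mem (hARne _ ht) (hARbddB t)))
  -- key: eventual constancy along each arithmetic progression
  have key : ∀ t₀ : ℕ, (intPts ((t₀ : ℝ) • P)).Nonempty →
      ∃ K : ℕ, ∀ k₁ k₂ : ℕ, K ≤ k₁ → K ≤ k₂ →
        (IMax (((t₀ + k₁ * D : ℕ) : ℝ) • P) c = IMax (((t₀ + k₂ * D : ℕ) : ℝ) • P) c ∧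
         IMin (((t₀ + k₁ * D : ℕ) : ℝ) • P) c = IMin (((t₀ + k₂ * D : ℕ) : ℝ) • P) c) := by
    intro t₀ h0
    have hne_k : ∀ k : ℕ, (intPts (((t₀ + k * D : ℕ) : ℝ) • P)).Nonempty := by
      intro k
      induction k with
      | zero => simpa using h0
      | succ k ih =>
        obtain ⟨x, hx⟩ := ih
        have heq : t₀ + (k + 1) * D = (t₀ + k * D) + D := by ring
        rw [heq]
        exact ⟨x + wM, hstep_mem wM hwMP (t₀ + k * D) x hx⟩
    have hFmaxk : ∀ k : ℕ, Fmax (t₀ + k * D) = Fmax t₀ + (k : ℝ) * (cwM : ℝ) := by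
      intro k
      induction k with
      | zero => simp
      | succ k ih =>
        have heq : t₀ + (k + 1) * D = (t₀ + k * D) + D := by ring
        rw [heq, hFmaxstep, ih]
        push_cast; ring
    have hFmink : ∀ k : ℕ, Fmin (t₀ + k * D) = Fmin t₀ + (k : ℝ) * (cwm : ℝ) := by
      intro k
      induction k with
      | zero => simp
      | succ k ih =>
        have heq : t₀ + (k + 1) * D = (t₀ + k * D) + D := by ring
        rw [heq, hFminstep, ih]
        push_cast; ring
    have hBmono : Monotone (fun k : ℕ => Az (t₀ + k * D) - (k : ℤ) * cwM) := by
      apply monotone_nat_of_le_succ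
      intro k
      have h1 := hAzstep (t₀ + k * D) (hne_k k)
      have heq : t₀ + (k + 1) * D = (t₀ + k * D) + D := by ring
      simp only [heq]
      push_cast
      linarith
    have hBbd : ∀ k : ℕ, Az (t₀ + k * D) - (k : ℤ) * cwM ≤ ⌈Fmax t₀⌉ := by
      intro k
      have h1 := hAzle (t₀ + k * D) (hne_k k)
      rw [hFmaxk k] at h1
      have h2 : ((Az (t₀ + k * D) - (k : ℤ) * cwM : ℤ) : ℝ) ≤ Fmax t₀ := by
        push_cast; linarith
      exact_mod_cast h2.trans (Int.le_ceil _)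
    obtain ⟨K₁, hK₁⟩ := IGPaux.int_seq_eventually_const_of_monotone _ hBmono _ hBbd
    have hB'anti : Antitone (fun k : ℕ => Iz (t₀ + k * D) - (k : ℤ) * cwm) := by
      apply antitone_nat_of_succ_le
      intro k
      have h1 := hIzstep (t₀ + k * D) (hne_k k)
      have heq : t₀ + (k + 1) * D = (t₀ + k * D) + D := by ring
      simp only [heq]
      push_cast
      linarith
    have hB'bd : ∀ k : ℕ, ⌊Fmin t₀⌋ ≤ Iz (t₀ + k * D) - (k : ℤ) * cwm := by
      intro k
      have h1 := hIzge (t₀ + k * D) (hne_k k)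
      rw [hFmink k] at h1
      have h2 : Fmin t₀ ≤ ((Iz (t₀ + k * D) - (k : ℤ) * cwm : ℤ) : ℝ) := by
        push_cast; linarith
      exact_mod_cast (Int.floor_le _).trans h2
    obtain ⟨K₂, hK₂⟩ := IGPaux.int_seq_eventually_const_of_antitone _ hB'anti _ hB'bd
    refine ⟨max K₁ K₂, fun k₁ k₂ hk₁ hk₂ => ⟨?_, ?_⟩⟩
    · have formMax : ∀ k : ℕ, IMax (((t₀ + k * D : ℕ) : ℝ) • P) c
          = Fmax t₀ - ((Az (t₀ + k * D) - (k : ℤ) * cwM : ℤ) : ℝ) := by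
        intro k
        rw [hIMax, hFmaxk]
        push_cast; ring
      rw [formMax k₁, formMax k₂,
        hK₁ k₁ (le_of_max_le_left hk₁), hK₁ k₂ (le_of_max_le_left hk₂)]
    · have formMin : ∀ k : ℕ, IMin (((t₀ + k * D : ℕ) : ℝ) • P) c
          = ((Iz (t₀ + k * D) - (k : ℤ) * cwm : ℤ) : ℝ) - Fmin t₀ := by
        intro k
        rw [hIMin, hFmink]
        push_cast; ring
      rw [formMin k₁, formMin k₂,
        hK₂ k₁ (le_of_max_le_right hk₁), hK₂ k₂ (le_of_max_le_right hk₂)]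
  -- per residue class
  have main : ∀ r : ℕ, ∃ Nr : ℕ, ∀ t₁ t₂ : ℕ, Nr ≤ t₁ → Nr ≤ t₂ → t₁ % D = r → t₂ % D = r →
      (intPts ((t₁ : ℝ) • P)).Nonempty → (intPts ((t₂ : ℝ) • P)).Nonempty →
      IMax ((t₁ : ℝ) • P) c = IMax ((t₂ : ℝ) • P) c ∧
      IMin ((t₁ : ℝ) • P) c = IMin ((t₂ : ℝ) • P) c := by
    intro r
    by_cases hex : ∃ t : ℕ, t % D = r ∧ (intPts ((t : ℝ) • P)).Nonempty
    · obtain ⟨ht₀r, ht₀ne⟩ := Nat.find_spec hex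
      set t₀ := Nat.find hex with ht₀def
      obtain ⟨K, hK⟩ := key t₀ ht₀ne
      refine ⟨t₀ + K * D, fun t₁ t₂ h1 h2 hr1 hr2 hne1 hne2 => ?_⟩
      have hmin1 : t₀ ≤ t₁ := Nat.find_min' hex ⟨hr1, hne1⟩
      have hmin2 : t₀ ≤ t₂ := Nat.find_min' hex ⟨hr2, hne2⟩
      obtain ⟨k₁, hk₁⟩ : D ∣ t₁ - t₀ :=
        (Nat.modEq_iff_dvd' hmin1).1 (show t₀ % D = t₁ % D by rw [ht₀r, hr1])
      obtain ⟨k₂, hk₂⟩ : D ∣ t₂ - t₀ :=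
        (Nat.modEq_iff_dvd' hmin2).1 (show t₀ % D = t₂ % D by rw [ht₀r, hr2])
      have ht1 : t₁ = t₀ + k₁ * D := by
        rw [mul_comm, ← hk₁, Nat.add_sub_cancel' hmin1]
      have ht2 : t₂ = t₀ + k₂ * D := by
        rw [mul_comm, ← hk₂, Nat.add_sub_cancel' hmin2]
      have hKk1 : K ≤ k₁ := by
        rw [ht1] at h1
        exact Nat.le_of_mul_le_mul_right (Nat.le_of_add_le_add_left h1) hDpos
      have hKk2 : K ≤ k₂ := by
        rw [ht2] at h2
        exact Nat.le_of_mul_le_mul_right (Nat.le_of_add_le_add_left h2) hDpos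
      rw [ht1, ht2]
      exact hK k₁ k₂ hKk1 hKk2
    · exact ⟨0, fun t₁ t₂ _ _ hr1 _ hne1 _ => absurd ⟨t₁, hr1, hne1⟩ hex⟩
  choose Nf hNf using main
  refine ⟨(Finset.range D).sup Nf, fun t₁ t₂ h1 h2 hmod hne1 hne2 => ?_⟩
  have hrlt : t₁ % D < D := Nat.mod_lt _ hDpos
  have hle : Nf (t₁ % D) ≤ (Finset.range D).sup Nf := Finset.le_sup (Finset.mem_range.2 hrlt)
  exact hNf (t₁ % D) t₁ t₂ (le_trans hle h1) (le_trans hle h2) rfl hmod.symm hne1 hne2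
end

section
/- Let P = conv{(0,0), (1,0), (3/5, 14/5)} ⊆ ℝ². Then aw(P) = 1 and w(P) = 1; the set of nonzero c ∈ ℤ² with aw_c(P) = 1 is exactly { (0,k) : k ∈ ℤ, k ≠ 0 }; the set of nonzero c ∈ ℤ² with w_c(P) = 1 is exactly { (1,0), (−1,0) }; and consequently no nonzero c ∈ ℤ² simultaneously attains the minimum arithmetic width and the minimum lattice width of P. -/
open Pointwise

/-- The arithmetic width of `K`: the minimum of `aw_c(K)` over nonzero `c ∈ ℤ^d`. -/
noncomputable def awMin {d : ℕ} (K : Set (Fin d → ℝ)) : ℕ :=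
  sInf {m : ℕ | ∃ c : Fin d → ℤ, c ≠ 0 ∧ m = aw c K}

/-- The lattice width of `K` in direction `c`: `max_{x,y ∈ K} c·(x−y)`. -/
noncomputable def latticeWidth {d : ℕ} (c : Fin d → ℤ) (K : Set (Fin d → ℝ)) : ℝ :=
  sSup ((fun p : (Fin d → ℝ) × (Fin d → ℝ) => ∑ i, (c i : ℝ) * (p.1 i - p.2 i)) '' (K ×ˢ K))

/-- The lattice width of `K`: the infimum of `w_c(K)` over nonzero `c ∈ ℤ^d`. -/
noncomputable def latticeWidthMin {d : ℕ} (K : Set (Fin d → ℝ)) : ℝ :=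
  sInf {r : ℝ | ∃ c : Fin d → ℤ, c ≠ 0 ∧ r = latticeWidth c K}

/-! ### Auxiliary material -/

/-- A polytope (in fact equal to the triangle) described by linear inequalities. -/
def Tset : Set (Fin 2 → ℝ) := {x | 0 ≤ x 1 ∧ 3 * x 1 ≤ 14 * x 0 ∧ 7 * x 0 + x 1 ≤ 7}

lemma convex_Tset : Convex ℝ Tset := by
  intro x hx y hy a b ha hb hab
  obtain ⟨h1, h2, h3⟩ := hx
  obtain ⟨g1, g2, g3⟩ := hy
  refine ⟨?_, ?_, ?_⟩ <;>
    simp only [Pi.add_apply, Pi.smul_apply, smul_eq_mul] <;> nlinarith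

lemma P_sub_Tset (P : Set (Fin 2 → ℝ))
    (hP : P = convexHull ℝ {![(0 : ℝ), 0], ![1, 0], ![3 / 5, 14 / 5]}) : P ⊆ Tset := by
  rw [hP]
  apply convexHull_min _ convex_Tset
  rintro x (rfl | rfl | rfl) <;> simp [Tset] <;> norm_num

lemma mem_P (P : Set (Fin 2 → ℝ))
    (hP : P = convexHull ℝ {![(0 : ℝ), 0], ![1, 0], ![3 / 5, 14 / 5]}) :
    ![(0:ℝ),0] ∈ P ∧ ![(1:ℝ),0] ∈ P ∧ ![(3/5:ℝ),14/5] ∈ P := by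
  rw [hP]
  refine ⟨subset_convexHull ℝ _ ?_, subset_convexHull ℝ _ ?_, subset_convexHull ℝ _ ?_⟩ <;> simp

lemma intPts_eq (P : Set (Fin 2 → ℝ))
    (hP : P = convexHull ℝ {![(0 : ℝ), 0], ![1, 0], ![3 / 5, 14 / 5]}) :
    intPts P = {![0,0], ![1,0]} := by
  ext x
  constructor
  · intro hx
    obtain ⟨h1, h2, h3⟩ := P_sub_Tset P hP hx
    simp only at h1 h2 h3
    have e1 : (0:ℤ) ≤ x 1 := by exact_mod_cast h1
    have e2 : 3 * x 1 ≤ 14 * x 0 := by exact_mod_cast h2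
    have e3 : 7 * x 0 + x 1 ≤ 7 := by exact_mod_cast h3
    have : (x 0 = 0 ∧ x 1 = 0) ∨ (x 0 = 1 ∧ x 1 = 0) := by omega
    rcases this with ⟨a, b⟩ | ⟨a, b⟩
    · left; funext i; fin_cases i <;> simpa
    · right; funext i; fin_cases i <;> simpa
  · obtain ⟨m0, m1, -⟩ := mem_P P hP
    rintro (rfl | rfl)
    · show (fun i => ((![0,0] : Fin 2 → ℤ) i : ℝ)) ∈ P
      convert m0 using 1; funext i; fin_cases i <;> simp
    · show (fun i => ((![1,0] : Fin 2 → ℤ) i : ℝ)) ∈ P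
      convert m1 using 1; funext i; fin_cases i <;> simp

lemma AR_eq (P : Set (Fin 2 → ℝ)) (h : intPts P = {![0,0], ![1,0]}) (c : Fin 2 → ℤ) :
    AR c P = {0, c 0} := by
  ext n
  simp only [AR, h, Set.mem_setOf_eq, Set.mem_insert_iff, Set.mem_singleton_iff]
  constructor
  · rintro ⟨x, (rfl | rfl), rfl⟩ <;> simp [Fin.sum_univ_two]
  · rintro (rfl | rfl)
    · exact ⟨![0,0], Or.inl rfl, by simp [Fin.sum_univ_two]⟩
    · exact ⟨![1,0], Or.inr rfl, by simp [Fin.sum_univ_two]⟩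

lemma aw_eq_one_iff (P : Set (Fin 2 → ℝ)) (h : intPts P = {![0,0], ![1,0]}) (c : Fin 2 → ℤ) :
    aw c P = 1 ↔ c 0 = 0 := by
  unfold aw
  rw [AR_eq P h c]
  constructor
  · intro h1
    by_contra hc
    rw [Set.ncard_pair (Ne.symm hc)] at h1
    omega
  · intro h0
    rw [h0]
    simp

lemma aw_pos (P : Set (Fin 2 → ℝ)) (h : intPts P = {![0,0], ![1,0]}) (c : Fin 2 → ℤ) :
    1 ≤ aw c P := by
  unfold aw
  rw [AR_eq P h c]
  rcases eq_or_ne (c 0) 0 with h0 | h0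
  · rw [h0]; simp
  · rw [Set.ncard_pair (Ne.symm h0)]; omega

lemma c_ne_zero_iff (c : Fin 2 → ℤ) : c ≠ 0 ↔ c 0 ≠ 0 ∨ c 1 ≠ 0 := by
  constructor
  · intro h
    by_contra hc
    push_neg at hc
    exact h (funext fun i => by fin_cases i <;> simp [hc.1, hc.2])
  · rintro (h | h) hc <;> rw [hc] at h <;> simp at h

lemma T_bounds {x : Fin 2 → ℝ} (hx : x ∈ Tset) :
    0 ≤ x 0 ∧ x 0 ≤ 1 ∧ 0 ≤ x 1 ∧ x 1 ≤ 7 := by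
  obtain ⟨h1, h2, h3⟩ := hx
  refine ⟨by linarith, by linarith, h1, by linarith⟩

lemma lw_bddAbove (P : Set (Fin 2 → ℝ)) (hT : P ⊆ Tset) (c : Fin 2 → ℤ) :
    BddAbove ((fun p : (Fin 2 → ℝ) × (Fin 2 → ℝ) =>
      ∑ i, (c i : ℝ) * (p.1 i - p.2 i)) '' (P ×ˢ P)) := by
  refine ⟨|(c 0 : ℝ)| * 1 + |(c 1 : ℝ)| * 7, ?_⟩
  rintro z ⟨⟨x, y⟩, ⟨hx, hy⟩, rfl⟩
  obtain ⟨a1, a2, a3, a4⟩ := T_bounds (hT hx)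
  obtain ⟨b1, b2, b3, b4⟩ := T_bounds (hT hy)
  have key : ∀ (a d B : ℝ), |d| ≤ B → a * d ≤ |a| * B := by
    intro a d B hd
    calc a * d ≤ |a * d| := le_abs_self _
      _ = |a| * |d| := abs_mul a d
      _ ≤ |a| * B := mul_le_mul_of_nonneg_left hd (abs_nonneg a)
  simp only [Fin.sum_univ_two]
  gcongr ?_ + ?_
  · exact key _ _ _ (abs_le.mpr ⟨by linarith, by linarith⟩)
  · exact key _ _ _ (abs_le.mpr ⟨by linarith, by linarith⟩)

lemma lw_ge (P : Set (Fin 2 → ℝ)) (hT : P ⊆ Tset) (c : Fin 2 → ℤ)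
    {x y : Fin 2 → ℝ} (hx : x ∈ P) (hy : y ∈ P) :
    (c 0 : ℝ) * (x 0 - y 0) + (c 1 : ℝ) * (x 1 - y 1) ≤ latticeWidth c P :=
  le_csSup (lw_bddAbove P hT c) ⟨(x, y), ⟨hx, hy⟩, by simp [Fin.sum_univ_two]⟩

lemma lw_one (P : Set (Fin 2 → ℝ)) (hT : P ⊆ Tset)
    (h0 : ![(0:ℝ),0] ∈ P) (h1 : ![(1:ℝ),0] ∈ P) :
    latticeWidth ![1,0] P = 1 := by
  apply IsGreatest.csSup_eq
  constructor
  · exact ⟨(![1,0], ![0,0]), ⟨h1, h0⟩, by norm_num [Fin.sum_univ_two]⟩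
  · rintro z ⟨⟨x, y⟩, ⟨hx, hy⟩, rfl⟩
    obtain ⟨a1, a2, -, -⟩ := T_bounds (hT hx)
    obtain ⟨b1, b2, -, -⟩ := T_bounds (hT hy)
    simp only [Fin.sum_univ_two]
    norm_num
    linarith

lemma lw_neg_one (P : Set (Fin 2 → ℝ)) (hT : P ⊆ Tset)
    (h0 : ![(0:ℝ),0] ∈ P) (h1 : ![(1:ℝ),0] ∈ P) :
    latticeWidth ![-1,0] P = 1 := by
  apply IsGreatest.csSup_eq
  constructor
  · exact ⟨(![0,0], ![1,0]), ⟨h0, h1⟩, by norm_num [Fin.sum_univ_two]⟩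
  · rintro z ⟨⟨x, y⟩, ⟨hx, hy⟩, rfl⟩
    obtain ⟨a1, a2, -, -⟩ := T_bounds (hT hx)
    obtain ⟨b1, b2, -, -⟩ := T_bounds (hT hy)
    simp only [Fin.sum_univ_two]
    norm_num
    linarith

lemma lw_key (P : Set (Fin 2 → ℝ)) (hT : P ⊆ Tset)
    (h0 : ![(0:ℝ),0] ∈ P) (h1 : ![(1:ℝ),0] ∈ P) (h2 : ![(3/5:ℝ),14/5] ∈ P)
    (c : Fin 2 → ℤ) (hc : c 0 ≠ 0 ∨ c 1 ≠ 0) :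
    1 ≤ latticeWidth c P ∧
      (latticeWidth c P = 1 → c = ![1, 0] ∨ c = ![-1, 0]) := by
  set W := latticeWidth c P with hWdef
  have h12 : (c 0 : ℝ) ≤ W := by
    have := lw_ge P hT c h1 h0; norm_num at this; convert this using 2 <;> norm_num
  have h21 : -(c 0 : ℝ) ≤ W := by
    have := lw_ge P hT c h0 h1; norm_num at this; linarith [this]
  have h30 : (3/5 : ℝ) * c 0 + (14/5) * c 1 ≤ W := by
    have := lw_ge P hT c h2 h0; norm_num at this; linarith [this]
  have h03 : -((3/5 : ℝ) * c 0 + (14/5) * c 1) ≤ W := by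
    have := lw_ge P hT c h0 h2; norm_num at this; linarith [this]
  have h31 : (-2/5 : ℝ) * c 0 + (14/5) * c 1 ≤ W := by
    have := lw_ge P hT c h2 h1; norm_num at this; linarith [this]
  have h13 : -((-2/5 : ℝ) * c 0 + (14/5) * c 1) ≤ W := by
    have := lw_ge P hT c h1 h2; norm_num at this; linarith [this]
  have hone : 1 ≤ W := by
    rcases hc with hc | hc
    · rcases (by omega : 1 ≤ c 0 ∨ c 0 ≤ -1) with h | h
      · have : (1:ℝ) ≤ (c 0 : ℝ) := by exact_mod_cast h
        linarith
      · have : (c 0 : ℝ) ≤ -1 := by exact_mod_cast h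
        linarith
    · rcases (by omega : 1 ≤ c 1 ∨ c 1 ≤ -1) with h | h
      · have h' : (1:ℝ) ≤ (c 1 : ℝ) := by exact_mod_cast h
        rcases le_or_gt (c 0 : ℝ) 0 with h0' | h0'
        · linarith
        · have : (1:ℝ) ≤ (c 0 : ℝ) := by
            have : 1 ≤ c 0 := by
              have : 0 < c 0 := by exact_mod_cast h0'
              omega
            exact_mod_cast this
          linarith
      · have h' : (c 1 : ℝ) ≤ -1 := by exact_mod_cast h
        rcases le_or_gt (c 0 : ℝ) 0 with h0' | h0'
        · have : (c 0 : ℝ) ≤ 0 := h0'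
          linarith
        · linarith
  refine ⟨hone, ?_⟩
  intro hW
  rw [hW] at h12 h21 h30 h03 h31 h13
  have i1 : c 0 ≤ 1 := by exact_mod_cast h12
  have i2 : -1 ≤ c 0 := by
    have : (-1 : ℝ) ≤ (c 0 : ℝ) := by linarith
    exact_mod_cast this
  have i3 : 3 * c 0 + 14 * c 1 ≤ 5 := by
    have : (3 * c 0 + 14 * c 1 : ℝ) ≤ 5 := by push_cast; linarith
    exact_mod_cast this
  have i4 : -5 ≤ 3 * c 0 + 14 * c 1 := by
    have : (-5 : ℝ) ≤ (3 * c 0 + 14 * c 1 : ℝ) := by push_cast; linarith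
    exact_mod_cast this
  have i5 : -2 * c 0 + 14 * c 1 ≤ 5 := by
    have : (-2 * c 0 + 14 * c 1 : ℝ) ≤ 5 := by push_cast; linarith
    exact_mod_cast this
  have i6 : -5 ≤ -2 * c 0 + 14 * c 1 := by
    have : (-5 : ℝ) ≤ (-2 * c 0 + 14 * c 1 : ℝ) := by push_cast; linarith
    exact_mod_cast this
  have : (c 0 = 1 ∧ c 1 = 0) ∨ (c 0 = -1 ∧ c 1 = 0) := by omega
  rcases this with ⟨a, b⟩ | ⟨a, b⟩
  · left; funext i; fin_cases i <;> simpa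
  · right; funext i; fin_cases i <;> simpa

/-- for `P = conv{(0,0), (1,0), (3/5, 14/5)}`, one has `aw(P) = 1` and
`w(P) = 1`; the optimal directions for the arithmetic width are exactly `(0,k)`, `k ≠ 0`,
while the optimal directions for the lattice width are exactly `±(1,0)`; in particular
no nonzero integer direction attains both minima simultaneously. -/
theorem aw_and_latticeWidth_directions_differ
    (P : Set (Fin 2 → ℝ))
    (hP : P = convexHull ℝ {![(0 : ℝ), 0], ![1, 0], ![3 / 5, 14 / 5]}) :
    awMin P = 1 ∧
    latticeWidthMin P = 1 ∧
    (∀ c : Fin 2 → ℤ, c ≠ 0 → (aw c P = 1 ↔ ∃ k : ℤ, k ≠ 0 ∧ c = ![0, k])) ∧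
    (∀ c : Fin 2 → ℤ, c ≠ 0 → (latticeWidth c P = 1 ↔ c = ![1, 0] ∨ c = ![-1, 0])) ∧
    (¬ ∃ c : Fin 2 → ℤ, c ≠ 0 ∧ aw c P = awMin P ∧ latticeWidth c P = latticeWidthMin P) := by
  have hT := P_sub_Tset P hP
  obtain ⟨m0, m1, m2⟩ := mem_P P hP
  have hip := intPts_eq P hP
  -- awMin = 1
  have hne01 : (![0,1] : Fin 2 → ℤ) ≠ 0 := by
    intro h; have := congrFun h 1; simp at this
  have hne10 : (![1,0] : Fin 2 → ℤ) ≠ 0 := by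
    intro h; have := congrFun h 0; simp at this
  have h1memA : (1 : ℕ) ∈ {m : ℕ | ∃ c : Fin 2 → ℤ, c ≠ 0 ∧ m = aw c P} :=
    ⟨![0,1], hne01, ((aw_eq_one_iff P hip ![0,1]).mpr (by simp)).symm⟩
  have hawMin : awMin P = 1 := by
    unfold awMin
    apply le_antisymm (Nat.sInf_le h1memA)
    obtain ⟨c, -, he⟩ := Nat.sInf_mem (⟨1, h1memA⟩ :
      {m : ℕ | ∃ c : Fin 2 → ℤ, c ≠ 0 ∧ m = aw c P}.Nonempty)
    rw [he]
    exact aw_pos P hip c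
  -- latticeWidthMin = 1
  have h1memL : (1 : ℝ) ∈ {r : ℝ | ∃ c : Fin 2 → ℤ, c ≠ 0 ∧ r = latticeWidth c P} :=
    ⟨![1,0], hne10, (lw_one P hT m0 m1).symm⟩
  have hlb : ∀ r ∈ {r : ℝ | ∃ c : Fin 2 → ℤ, c ≠ 0 ∧ r = latticeWidth c P}, (1:ℝ) ≤ r := by
    rintro r ⟨c, hc, rfl⟩
    exact (lw_key P hT m0 m1 m2 c ((c_ne_zero_iff c).mp hc)).1
  have hlwMin : latticeWidthMin P = 1 := by
    unfold latticeWidthMin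
    exact le_antisymm (csInf_le ⟨1, hlb⟩ h1memL) (le_csInf ⟨1, h1memL⟩ hlb)
  refine ⟨hawMin, hlwMin, ?_, ?_, ?_⟩
  · intro c hc
    rw [aw_eq_one_iff P hip c]
    constructor
    · intro h0
      refine ⟨c 1, ?_, ?_⟩
      · rcases (c_ne_zero_iff c).mp hc with h | h
        · exact absurd h0 h
        · exact h
      · funext i; fin_cases i <;> simpa
    · rintro ⟨k, hk, rfl⟩; simp
  · intro c hc
    constructor
    · exact (lw_key P hT m0 m1 m2 c ((c_ne_zero_iff c).mp hc)).2
    · rintro (rfl | rfl)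
      · exact lw_one P hT m0 m1
      · exact lw_neg_one P hT m0 m1
  · rintro ⟨c, hc, ha, hl⟩
    rw [hawMin] at ha
    rw [hlwMin] at hl
    have hc0 : c 0 = 0 := (aw_eq_one_iff P hip c).mp ha
    rcases (lw_key P hT m0 m1 m2 c ((c_ne_zero_iff c).mp hc)).2 hl with rfl | rfl <;>
      simp at hc0
end
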